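/- arXiv:0907.0619 — 8 statements merged into one kernel-verified Lean document; each statement's English description precedes it below -/
import Mathlib

section
/- For any positive integer d and any real x > 0, if X_{d+1} is a chi-squared random variable with d+1 degrees of freedom and X_d is a chi-squared random variable with d degrees of freedom, then d·E[(X_{d+1} − x)_+] ≥ (d+1)·E[(X_d − x)_+], where (y)_+ = max(y,0). -/
open MeasureTheory ProbabilityTheory Real Set
open scoped ENNReal NNReal

theorem my_integral_gammaMeasure {a r : ℝ} (ha : 0 < a) (hr : 0 < r) (g : ℝ → ℝ) :
    ∫ y, g y ∂(gammaMeasure a r) = ∫ y, gammaPDFReal a r y * g y := by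
  rw [gammaMeasure,
    show gammaPDF a r = (fun y => ((gammaPDFReal a r y).toNNReal : ℝ≥0∞)) from rfl,
    integral_withDensity_eq_integral_smul ((measurable_gammaPDFReal a r).real_toNNReal) g]
  refine integral_congr_ae (.of_forall fun y => ?_)
  show (gammaPDFReal a r y).toNNReal • g y = gammaPDFReal a r y * g y
  rw [NNReal.smul_def, smul_eq_mul, Real.coe_toNNReal _ (gammaPDFReal_nonneg ha hr y)]

theorem gamma_half_moment {a : ℝ} (ha : 0 < a) :
    ∫ y, gammaPDFReal a (1/2) y * y = 2 * a := by
  have hG : (0:ℝ) < Gamma a := Gamma_pos_of_pos ha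
  rw [← setIntegral_eq_integral_of_forall_compl_eq_zero (s := Ioi (0:ℝ))
    (f := fun y => gammaPDFReal a (1/2) y * y) ?_]
  · rw [setIntegral_congr_fun measurableSet_Ioi
      (g := fun y => (1/2:ℝ)^a / Gamma a * (y ^ ((a+1)-1) * exp (-(1/2 * y)))) ?_]
    · rw [integral_const_mul _ _, integral_rpow_mul_exp_neg_mul_Ioi (by linarith) (by norm_num),
        Gamma_add_one ha.ne']
      have h2 : ((1:ℝ)/(1/2)) = 2 := by norm_num
      rw [h2, rpow_add (by norm_num : (0:ℝ) < 2), rpow_one]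
      have h3 : (1/2:ℝ)^a * 2^a = 1 := by
        rw [← mul_rpow (by norm_num) (by norm_num)]; norm_num
      field_simp
      linear_combination h3
    · intro y hy
      simp only [mem_Ioi] at hy
      simp only [gammaPDFReal]
      rw [if_pos hy.le]
      have : y ^ ((a+1)-1) = y ^ (a-1) * y := by
        rw [show (a+1)-1 = (a-1)+1 by ring, rpow_add_one (ne_of_gt hy)]
      rw [this]; ring
  · intro y hy
    simp only [mem_Ioi, not_lt] at hy
    rcases lt_or_eq_of_le hy with h | h
    · simp only [gammaPDFReal]; rw [if_neg (not_le.mpr h)]; ring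
    · subst h; simp

theorem integrable_gamma_mul_id {a : ℝ} (ha : 0 < a) :
    Integrable (fun y => gammaPDFReal a (1/2) y * y) := by
  have h1 : IntegrableOn (fun y : ℝ => y ^ a * exp (-(1/2 * y))) (Ioi 0) := by
    have h := integrableOn_rpow_mul_exp_neg_mul_rpow (p := 1) (s := a) (b := 1/2)
      (by linarith) zero_lt_one (by norm_num)
    refine h.congr_fun (fun y hy => ?_) measurableSet_Ioi
    simp only [rpow_one]; ring_nf
  have h2 : IntegrableOn (fun y => gammaPDFReal a (1/2) y * y) (Ioi 0) := by
    refine IntegrableOn.congr_fun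
      (f := fun y : ℝ => (1/2:ℝ)^a / Gamma a * (y ^ a * exp (-(1/2 * y)))) ?_
      (fun y hy => ?_) measurableSet_Ioi
    · exact h1.const_mul ((1/2:ℝ)^a / Gamma a)
    simp only [mem_Ioi] at hy
    simp only [gammaPDFReal]
    rw [if_pos hy.le]
    have hya : y ^ a = y ^ (a-1) * y := by
      rw [← rpow_add_one (ne_of_gt hy) (a-1)]; ring_nf
    rw [hya]; ring
  have h3 : ∀ y, Set.indicator (Ioi 0) (fun y => gammaPDFReal a (1/2) y * y) y
      = gammaPDFReal a (1/2) y * y := by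
    intro y
    by_cases hy : y ∈ Ioi 0
    · rw [Set.indicator_of_mem hy]
    · rw [Set.indicator_of_notMem hy]
      simp only [mem_Ioi, not_lt] at hy
      rcases lt_or_eq_of_le hy with h | h
      · simp only [gammaPDFReal]; rw [if_neg (not_le.mpr h)]; ring
      · subst h; simp
  exact (h2.integrable_indicator measurableSet_Ioi).congr (.of_forall h3)

theorem integrable_gamma_mul_max {a x : ℝ} (ha : 0 < a) (hx : 0 < x) :
    Integrable (fun y => gammaPDFReal a (1/2) y * max (y - x) 0) := by
  refine (integrable_gamma_mul_id ha).mono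
    (((measurable_gammaPDFReal a (1/2)).mul
      ((measurable_id.sub measurable_const).max measurable_const)).aestronglyMeasurable)
    (.of_forall fun y => ?_)
  have hp := gammaPDFReal_nonneg ha (by norm_num : (0:ℝ) < 1/2) y
  have hm : max (y - x) 0 ≤ |y| := by
    apply max_le
    · linarith [le_abs_self y]
    · positivity
  rw [Real.norm_eq_abs, Real.norm_eq_abs, abs_mul, abs_mul, abs_of_nonneg hp,
    abs_of_nonneg (le_max_right (y - x) 0)]
  exact mul_le_mul_of_nonneg_left hm hp

/-- The chi-squared distribution with `k` degrees of freedom, as the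
Gamma distribution with shape `k/2` and rate `1/2`. -/
noncomputable def chiSqMeasure (k : ℕ) : Measure ℝ :=
  gammaMeasure ((k : ℝ) / 2) (1 / 2)

theorem chiSq_pos_part_mono_deg (d : ℕ) (hd : 0 < d) (x : ℝ) (hx : 0 < x) :
    (d : ℝ) * ∫ y, max (y - x) 0 ∂(chiSqMeasure (d + 1)) ≥
      ((d : ℝ) + 1) * ∫ y, max (y - x) 0 ∂(chiSqMeasure d) := by
  have hd1 : (0:ℝ) < (d:ℝ) := by exact_mod_cast hd
  set a0 : ℝ := (d:ℝ)/2 with ha0def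
  set a1 : ℝ := ((d:ℝ)+1)/2 with ha1def
  have ha0 : 0 < a0 := by rw [ha0def]; positivity
  have ha1 : 0 < a1 := by rw [ha1def]; positivity
  set C0 : ℝ := (1/2:ℝ)^a0 / Gamma a0 with hC0def
  set C1 : ℝ := (1/2:ℝ)^a1 / Gamma a1 with hC1def
  have hC0 : 0 < C0 := div_pos (rpow_pos_of_pos (by norm_num) _) (Gamma_pos_of_pos ha0)
  have hC1 : 0 < C1 := div_pos (rpow_pos_of_pos (by norm_num) _) (Gamma_pos_of_pos ha1)
  set s : ℝ := (((d:ℝ)+1) * C0) / ((d:ℝ) * C1) with hsdef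
  have hs : 0 < s := by positivity
  set t0 : ℝ := s^2 with ht0def
  have ht0 : 0 < t0 := by positivity
  -- rewrite the chi-squared integrals as Lebesgue integrals against the pdfs
  have hA : ∫ y, max (y - x) 0 ∂(chiSqMeasure (d+1))
      = ∫ y, gammaPDFReal a1 (1/2) y * max (y - x) 0 := by
    rw [chiSqMeasure, show ((d+1 : ℕ) : ℝ)/2 = a1 by rw [ha1def]; push_cast; ring,
      my_integral_gammaMeasure ha1 (by norm_num)]
  have hB : ∫ y, max (y - x) 0 ∂(chiSqMeasure d)
      = ∫ y, gammaPDFReal a0 (1/2) y * max (y - x) 0 := by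
    rw [chiSqMeasure, show ((d : ℕ) : ℝ)/2 = a0 from ha0def.symm,
      my_integral_gammaMeasure ha0 (by norm_num)]
  -- factorization of the signed density combination
  have hfac : ∀ y : ℝ, 0 < y →
      (d:ℝ) * gammaPDFReal a1 (1/2) y - ((d:ℝ)+1) * gammaPDFReal a0 (1/2) y
        = ((d:ℝ) * C1) * (y ^ (a0 - 1) * exp (-(1/2 * y))) * (Real.sqrt y - s) := by
    intro y hy
    simp only [gammaPDFReal, if_pos hy.le]
    have e1 : y ^ (a1 - 1) = y ^ (a0 - 1) * Real.sqrt y := by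
      rw [Real.sqrt_eq_rpow, ← rpow_add hy]
      congr 1
      rw [ha0def, ha1def]; ring
    rw [e1, hsdef, hC0def, hC1def]
    field_simp
  have hΦneg : ∀ y : ℝ, 0 < y → y ≤ t0 →
      (d:ℝ) * gammaPDFReal a1 (1/2) y - ((d:ℝ)+1) * gammaPDFReal a0 (1/2) y ≤ 0 := by
    intro y hy hyt
    rw [hfac y hy]
    have h1 : Real.sqrt y - s ≤ 0 := by
      have h := Real.sqrt_le_sqrt hyt
      rw [ht0def, Real.sqrt_sq hs.le] at h
      linarith
    have h2 : 0 ≤ ((d:ℝ) * C1) * (y ^ (a0-1) * exp (-(1/2*y))) := by positivity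
    exact mul_nonpos_of_nonneg_of_nonpos h2 h1
  have hΦpos : ∀ y : ℝ, t0 ≤ y →
      0 ≤ (d:ℝ) * gammaPDFReal a1 (1/2) y - ((d:ℝ)+1) * gammaPDFReal a0 (1/2) y := by
    intro y hyt
    have hy : 0 < y := lt_of_lt_of_le ht0 hyt
    rw [hfac y hy]
    have h1 : 0 ≤ Real.sqrt y - s := by
      have h := Real.sqrt_le_sqrt hyt
      rw [ht0def, Real.sqrt_sq hs.le] at h
      linarith
    exact mul_nonneg (by positivity) h1
  have hΦzero : ∀ y : ℝ, y < 0 →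
      (d:ℝ) * gammaPDFReal a1 (1/2) y - ((d:ℝ)+1) * gammaPDFReal a0 (1/2) y = 0 := by
    intro y hy
    simp only [gammaPDFReal, if_neg (not_le.mpr hy)]; ring
  -- choose the slope c and get the pointwise inequality
  obtain ⟨c, hψ⟩ : ∃ c : ℝ, ∀ y : ℝ,
      0 ≤ (max (y - x) 0 - c * y) *
        ((d:ℝ) * gammaPDFReal a1 (1/2) y - ((d:ℝ)+1) * gammaPDFReal a0 (1/2) y) := by
    rcases le_or_gt t0 x with hcase | hcase
    · refine ⟨0, fun y => ?_⟩
      rcases le_or_gt y x with hyx | hyx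
      · rw [max_eq_right (by linarith : y - x ≤ 0)]; simp
      · have h := hΦpos y (by linarith)
        have h0 : max (y-x) 0 - 0*y = max (y-x) 0 := by ring
        rw [h0]
        exact mul_nonneg (le_max_right _ _) h
    · refine ⟨(t0 - x)/t0, fun y => ?_⟩
      have hc1 : (1 - (t0-x)/t0) * t0 = x := by field_simp; ring
      have h1c : 0 ≤ 1 - (t0-x)/t0 := by
        have h : (t0-x)/t0 ≤ 1 := by rw [div_le_one ht0]; linarith
        linarith
      rcases lt_trichotomy y 0 with hy | hy | hy
      · rw [hΦzero y hy]; simp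
      · subst hy
        rw [max_eq_right (by linarith : (0:ℝ) - x ≤ 0)]
        simp
      · rcases le_total y t0 with hyt | hyt
        · have hΦ := hΦneg y hy hyt
          have hψn : max (y - x) 0 - (t0-x)/t0 * y ≤ 0 := by
            have hcy : 0 ≤ (t0-x)/t0 * y :=
              mul_nonneg (div_nonneg (by linarith) ht0.le) hy.le
            apply sub_nonpos.mpr
            apply max_le _ hcy
            nlinarith [mul_le_mul_of_nonneg_left hyt h1c]
          have hmm := mul_nonneg (neg_nonneg.mpr hψn) (neg_nonneg.mpr hΦ)
          rw [neg_mul_neg] at hmm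
          exact hmm
        · have hΦ := hΦpos y hyt
          have hψp : 0 ≤ max (y - x) 0 - (t0-x)/t0 * y := by
            rw [max_eq_left (by nlinarith : (0:ℝ) ≤ y - x)]
            nlinarith [mul_le_mul_of_nonneg_left hyt h1c]
          exact mul_nonneg hψp hΦ
  -- integrability
  have hi1 : Integrable (fun y => gammaPDFReal a1 (1/2) y * max (y-x) 0) :=
    integrable_gamma_mul_max ha1 hx
  have hi0 : Integrable (fun y => gammaPDFReal a0 (1/2) y * max (y-x) 0) :=
    integrable_gamma_mul_max ha0 hx
  have hj1 : Integrable (fun y => gammaPDFReal a1 (1/2) y * y) := integrable_gamma_mul_id ha1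
  have hj0 : Integrable (fun y => gammaPDFReal a0 (1/2) y * y) := integrable_gamma_mul_id ha0
  -- key identity
  have hkey : ∫ y, (max (y - x) 0 - c * y) *
        ((d:ℝ) * gammaPDFReal a1 (1/2) y - ((d:ℝ)+1) * gammaPDFReal a0 (1/2) y)
      = (d:ℝ) * (∫ y, gammaPDFReal a1 (1/2) y * max (y-x) 0)
        - ((d:ℝ)+1) * (∫ y, gammaPDFReal a0 (1/2) y * max (y-x) 0)
        - c * ((d:ℝ) * (2*a1) - ((d:ℝ)+1) * (2*a0)) := by
    have e : (fun y => (max (y - x) 0 - c * y) *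
        ((d:ℝ) * gammaPDFReal a1 (1/2) y - ((d:ℝ)+1) * gammaPDFReal a0 (1/2) y))
        = fun y => (d:ℝ) * (gammaPDFReal a1 (1/2) y * max (y-x) 0)
            - ((d:ℝ)+1) * (gammaPDFReal a0 (1/2) y * max (y-x) 0)
            - (c * (d:ℝ)) * (gammaPDFReal a1 (1/2) y * y)
            + (c * ((d:ℝ)+1)) * (gammaPDFReal a0 (1/2) y * y) := by
      funext y; ring
    have t1 : Integrable (fun y => (d:ℝ) * (gammaPDFReal a1 (1/2) y * max (y-x) 0)) :=
      hi1.const_mul _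
    have t2 : Integrable (fun y => ((d:ℝ)+1) * (gammaPDFReal a0 (1/2) y * max (y-x) 0)) :=
      hi0.const_mul _
    have t3 : Integrable (fun y => (c * (d:ℝ)) * (gammaPDFReal a1 (1/2) y * y)) :=
      hj1.const_mul _
    have t4 : Integrable (fun y => (c * ((d:ℝ)+1)) * (gammaPDFReal a0 (1/2) y * y)) :=
      hj0.const_mul _
    have t12 : Integrable (fun y => (d:ℝ) * (gammaPDFReal a1 (1/2) y * max (y-x) 0)
        - ((d:ℝ)+1) * (gammaPDFReal a0 (1/2) y * max (y-x) 0)) := t1.sub t2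
    have t123 : Integrable (fun y => (d:ℝ) * (gammaPDFReal a1 (1/2) y * max (y-x) 0)
        - ((d:ℝ)+1) * (gammaPDFReal a0 (1/2) y * max (y-x) 0)
        - (c * (d:ℝ)) * (gammaPDFReal a1 (1/2) y * y)) := t12.sub t3
    rw [e, integral_add t123 t4, integral_sub t12 t3, integral_sub t1 t2,
      integral_const_mul, integral_const_mul, integral_const_mul, integral_const_mul,
      gamma_half_moment ha1, gamma_half_moment ha0]
    ring
  have hnn := integral_nonneg_of_ae (μ := volume) (.of_forall hψ)
  rw [hkey] at hnn
  have hz : (d:ℝ) * (2*a1) - ((d:ℝ)+1) * (2*a0) = 0 := by rw [ha1def, ha0def]; ring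
  rw [hz, mul_zero, sub_zero] at hnn
  rw [ge_iff_le, hA, hB]
  linarith
end

section
/- Let Z_1, …, Z_{N+1} be nonnegative real numbers, Y = Z_1 + ⋯ + Z_{N+1}, and for each i let Y^{(i)} = Y − Z_i. Then for any real x ≥ 0, Σ_{i=1}^{N+1} (Y^{(i)} − N·x)_+ ≥ N·(Y − (N+1)·x)_+. -/
theorem pointwise_pos_part_sum_ineq' (N : ℕ) (Z : Fin (N + 1) → ℝ)
    (hZ : ∀ i, 0 ≤ Z i) (x : ℝ) (hx : 0 ≤ x) :
    ∑ i, max ((∑ j, Z j) - Z i - (N : ℝ) * x) 0 ≥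
      (N : ℝ) * max ((∑ i, Z i) - ((N : ℝ) + 1) * x) 0 := by
  set S := ∑ i, Z i with hS
  rcases le_or_gt (S - ((N : ℝ) + 1) * x) 0 with h | h
  · rw [max_eq_right h, mul_zero]
    exact Finset.sum_nonneg fun i _ => le_max_right _ _
  · rw [max_eq_left h.le]
    have h1 : ∑ i, max (S - Z i - (N : ℝ) * x) 0 ≥ ∑ i : Fin (N + 1), (S - Z i - (N : ℝ) * x) :=
      Finset.sum_le_sum fun i _ => le_max_left _ _
    refine le_trans (le_of_eq ?_) h1
    rw [Finset.sum_sub_distrib, Finset.sum_sub_distrib, ← hS,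
      Finset.sum_const, Finset.sum_const, Finset.card_univ, Fintype.card_fin]
    push_cast
    ring
end

section
/- Define DKhi(d, N, x) = P(F_{d+2,N} ≥ x/(d+2)) − (x/d)·P(F_{d,N+2} ≥ (N+2)x/(N·d)) for positive integers d, N and x > 0, where F_{a,b} denotes a Fisher random variable with a and b degrees of freedom. Then d·DKhi(d,N,x) = E[(X_d − x·X'_N/N)_+], where X_d and X'_N are independent chi-squared random variables with d and N degrees of freedom. -/
open MeasureTheory ProbabilityTheory Real

noncomputable def chiPDF (k : ℕ) : ℝ → ENNReal := gammaPDF ((k : ℝ) / 2) (1 / 2)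

lemma chiPDF_measurable (k : ℕ) : Measurable (chiPDF k) :=
  (measurable_gammaPDFReal _ _).ennreal_ofReal

lemma chiSqMeasure_eq (k : ℕ) : chiSqMeasure k = volume.withDensity (chiPDF k) := rfl

lemma chiPDF_step (k : ℕ) (hk : 0 < k) {u : ℝ} (hu : 0 < u) :
    (k : ENNReal) * chiPDF (k + 2) u = ENNReal.ofReal u * chiPDF k u := by
  have hk' : (0 : ℝ) < k := by exact_mod_cast hk
  have hcast : ((k + 2 : ℕ) : ℝ) / 2 = (k : ℝ) / 2 + 1 := by push_cast; ring
  unfold chiPDF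
  rw [hcast, gammaPDF_of_nonneg hu.le, gammaPDF_of_nonneg hu.le,
    Real.Gamma_add_one (by positivity : ((k : ℝ) / 2) ≠ 0),
    Real.rpow_add (by norm_num : (0:ℝ) < 1/2), Real.rpow_one,
    show (k : ℝ) / 2 + 1 - 1 = ((k : ℝ) / 2 - 1) + 1 by ring,
    Real.rpow_add hu, Real.rpow_one,
    show ((k : ENNReal)) = ENNReal.ofReal (k : ℝ) by simp,
    ← ENNReal.ofReal_mul (by positivity), ← ENNReal.ofReal_mul hu.le]
  congr 1
  have hΓ : Real.Gamma ((k : ℝ) / 2) ≠ 0 := (Real.Gamma_pos_of_pos (by positivity)).ne'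
  field_simp

lemma DKhi_ratio_ge_iff {a b v : ℝ} (ha : 0 < a) (hb : 0 < b) (hv : 0 < v) (u c : ℝ) :
    (u / a) / (v / b) ≥ c ↔ c * a * v / b ≤ u := by
  rw [ge_iff_le, le_div_iff₀ (div_pos hv hb), le_div_iff₀ ha,
    show c * (v / b) * a = c * a * v / b by ring]

theorem DKhi_eq_expectation (d N : ℕ) (hd : 0 < d) (hN : 0 < N) (x : ℝ) (hx : 0 < x) :
    (d : ℝ) *
      ((((chiSqMeasure (d + 2)).prod (chiSqMeasure N))
          {q : ℝ × ℝ | (q.1 / ((d : ℝ) + 2)) / (q.2 / N) ≥ x / ((d : ℝ) + 2)}).toReal -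
        x / d *
          (((chiSqMeasure d).prod (chiSqMeasure (N + 2)))
            {q : ℝ × ℝ | (q.1 / d) / (q.2 / ((N : ℝ) + 2)) ≥
              ((N : ℝ) + 2) * x / ((N : ℝ) * d)}).toReal) =
    ∫ q : ℝ × ℝ, max (q.1 - x * q.2 / N) 0
      ∂((chiSqMeasure d).prod (chiSqMeasure N)) := by
  have hN' : (0 : ℝ) < N := by exact_mod_cast hN
  have hd' : (0 : ℝ) < d := by exact_mod_cast hd
  have hprob : ∀ k : ℕ, 0 < k → IsProbabilityMeasure (chiSqMeasure k) := by
    intro k hk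
    have : (0:ℝ) < (k:ℝ)/2 := by positivity
    exact isProbabilityMeasure_gammaMeasure this (by norm_num)
  haveI h1 := hprob (d+2) (by omega)
  haveI h2 := hprob N hN
  haveI h3 := hprob d hd
  haveI h4 := hprob (N+2) (by omega)
  -- product measures as withDensity over volume × volume
  have hprod : ∀ a b : ℕ, 0 < a → 0 < b →
      (chiSqMeasure a).prod (chiSqMeasure b) =
        (volume.prod volume : Measure (ℝ × ℝ)).withDensity
          (fun q => chiPDF a q.1 * chiPDF b q.2) := by
    intro a b ha hb
    haveI := hprob a ha
    haveI := hprob b hb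
    refine Measure.prod_eq fun s t hs ht => ?_
    rw [withDensity_apply _ (hs.prod ht), ← Measure.prod_restrict,
      lintegral_prod_mul (chiPDF_measurable a).aemeasurable (chiPDF_measurable b).aemeasurable,
      chiSqMeasure_eq, chiSqMeasure_eq, withDensity_apply _ hs, withDensity_apply _ ht]
  -- the common set
  set T : Set (ℝ × ℝ) := {q | 0 < q.2 ∧ x * q.2 / N ≤ q.1} with hTdef
  have hT : MeasurableSet T :=
    (measurableSet_lt measurable_const measurable_snd).inter
      (measurableSet_le ((measurable_snd.const_mul x).div_const _) measurable_fst)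
  have hS1m : MeasurableSet {q : ℝ × ℝ | (q.1 / ((d : ℝ) + 2)) / (q.2 / N) ≥ x / ((d : ℝ) + 2)} :=
    measurableSet_le measurable_const ((measurable_fst.div_const _).div (measurable_snd.div_const _))
  have hS2m : MeasurableSet {q : ℝ × ℝ | (q.1 / d) / (q.2 / ((N : ℝ) + 2)) ≥
      ((N : ℝ) + 2) * x / ((N : ℝ) * d)} :=
    measurableSet_le measurable_const ((measurable_fst.div_const _).div (measurable_snd.div_const _))
  have hvae : ∀ᵐ q ∂(volume.prod volume : Measure (ℝ × ℝ)), q.2 ≠ 0 := by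
    rw [ae_iff]
    have h : {q : ℝ × ℝ | ¬ q.2 ≠ 0} = (Set.univ : Set ℝ) ×ˢ ({0} : Set ℝ) := by
      ext ⟨a, b⟩
      simp [Set.mem_prod, eq_comm]
    rw [h, Measure.prod_prod]
    simp
  -- set equivalences
  have hmem1 : ∀ q : ℝ × ℝ, 0 < q.2 →
      ((q.1 / ((d : ℝ) + 2)) / (q.2 / N) ≥ x / ((d : ℝ) + 2) ↔ q ∈ T) := by
    intro q hq
    rw [DKhi_ratio_ge_iff (by positivity) hN' hq,
      div_mul_cancel₀ x (by positivity : ((d:ℝ)+2) ≠ 0)]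
    exact ⟨fun h => ⟨hq, h⟩, fun h => h.2⟩
  have hmem2 : ∀ q : ℝ × ℝ, 0 < q.2 →
      ((q.1 / d) / (q.2 / ((N : ℝ) + 2)) ≥ ((N : ℝ) + 2) * x / ((N : ℝ) * d) ↔ q ∈ T) := by
    intro q hq
    rw [DKhi_ratio_ge_iff hd' (by positivity) hq,
      show ((N : ℝ) + 2) * x / ((N : ℝ) * d) * d * q.2 / ((N:ℝ) + 2) = x * q.2 / N by
        field_simp]
    exact ⟨fun h => ⟨hq, h⟩, fun h => h.2⟩
  -- replacing sets by T
  have hmeas1 : (((chiSqMeasure (d + 2)).prod (chiSqMeasure N))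
      {q : ℝ × ℝ | (q.1 / ((d : ℝ) + 2)) / (q.2 / N) ≥ x / ((d : ℝ) + 2)}) =
      ((chiSqMeasure (d + 2)).prod (chiSqMeasure N)) T := by
    rw [hprod (d+2) N (by omega) hN, withDensity_apply _ hS1m, withDensity_apply _ hT,
      ← lintegral_indicator hS1m, ← lintegral_indicator hT]
    refine lintegral_congr_ae ?_
    filter_upwards [hvae] with q hq
    rcases lt_or_gt_of_ne hq with hq2 | hq2
    · have hz : chiPDF N q.2 = 0 := gammaPDF_of_neg hq2
      by_cases hm : (q.1 / ((d : ℝ) + 2)) / (q.2 / N) ≥ x / ((d : ℝ) + 2) <;>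
        by_cases hm' : q ∈ T <;>
        simp [Set.indicator_apply, hm, hm', hz]
    · simp only [Set.indicator_apply]
      rw [if_congr (by simpa using hmem1 q hq2) rfl rfl]
  have hmeas2 : (((chiSqMeasure d).prod (chiSqMeasure (N + 2)))
      {q : ℝ × ℝ | (q.1 / d) / (q.2 / ((N : ℝ) + 2)) ≥ ((N : ℝ) + 2) * x / ((N : ℝ) * d)}) =
      ((chiSqMeasure d).prod (chiSqMeasure (N + 2))) T := by
    rw [hprod d (N+2) hd (by omega), withDensity_apply _ hS2m, withDensity_apply _ hT,
      ← lintegral_indicator hS2m, ← lintegral_indicator hT]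
    refine lintegral_congr_ae ?_
    filter_upwards [hvae] with q hq
    rcases lt_or_gt_of_ne hq with hq2 | hq2
    · have hz : chiPDF (N+2) q.2 = 0 := gammaPDF_of_neg hq2
      by_cases hm : (q.1 / (d:ℝ)) / (q.2 / ((N:ℝ) + 2)) ≥ ((N : ℝ) + 2) * x / ((N : ℝ) * d) <;>
        by_cases hm' : q ∈ T <;>
        simp [Set.indicator_apply, hm, hm', hz]
    · simp only [Set.indicator_apply]
      rw [if_congr (by simpa using hmem2 q hq2) rfl rfl]
  -- pointwise identity
  have key : ∀ q : ℝ × ℝ, q.2 ≠ 0 →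
      (d : ENNReal) * T.indicator (fun q => chiPDF (d+2) q.1 * chiPDF N q.2) q
        = (chiPDF d q.1 * chiPDF N q.2) * ENNReal.ofReal (max (q.1 - x * q.2 / N) 0)
          + ENNReal.ofReal x * T.indicator (fun q => chiPDF d q.1 * chiPDF (N+2) q.2) q := by
    rintro ⟨u, v⟩ hv
    rcases lt_or_gt_of_ne hv with hv2 | hv2
    · have hz : chiPDF N v = 0 := gammaPDF_of_neg hv2
      have hz2 : chiPDF (N+2) v = 0 := gammaPDF_of_neg hv2
      have hm' : (u, v) ∉ T := fun h => absurd h.1 (by simpa using hv2.le)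
      simp [Set.indicator_of_notMem hm', hz, hz2]
    · by_cases hm : (u, v) ∈ T
      · have hxv : 0 ≤ x * v / N := by positivity
        have hu : 0 < u := lt_of_lt_of_le (by positivity) hm.2
        have h1 := chiPDF_step d hd hu
        have h2 := chiPDF_step N hN hv2
        have h3 : ENNReal.ofReal x * chiPDF (N+2) v = ENNReal.ofReal (x * v / N) * chiPDF N v := by
          have hxN : ENNReal.ofReal x = ENNReal.ofReal (x / N) * (N : ENNReal) := by
            rw [show ((N : ENNReal)) = ENNReal.ofReal (N : ℝ) by simp,
              ← ENNReal.ofReal_mul (by positivity)]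
            congr 1
            field_simp
          rw [hxN, mul_assoc, h2, ← mul_assoc, ← ENNReal.ofReal_mul (by positivity)]
          congr 2
          ring
        have hmax : max (u - x * v / N) 0 = u - x * v / N := max_eq_left (by linarith [hm.2])
        have hu' : ENNReal.ofReal u
            = ENNReal.ofReal (u - x * v / N) + ENNReal.ofReal (x * v / N) := by
          rw [← ENNReal.ofReal_add (by linarith [hm.2]) hxv]
          congr 1
          ring
        rw [Set.indicator_of_mem hm, Set.indicator_of_mem hm]
        calc (d : ENNReal) * (chiPDF (d+2) u * chiPDF N v)
            = ((d : ENNReal) * chiPDF (d+2) u) * chiPDF N v := by ring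
          _ = (ENNReal.ofReal u * chiPDF d u) * chiPDF N v := by rw [h1]
          _ = ((ENNReal.ofReal (u - x * v / N) + ENNReal.ofReal (x * v / N)) * chiPDF d u)
                * chiPDF N v := by rw [← hu']
          _ = (chiPDF d u * chiPDF N v) * ENNReal.ofReal (max (u - x * v / N) 0)
                + (ENNReal.ofReal (x * v / N) * chiPDF N v) * chiPDF d u := by
              rw [hmax]; ring
          _ = (chiPDF d u * chiPDF N v) * ENNReal.ofReal (max (u - x * v / N) 0)
                + ENNReal.ofReal x * (chiPDF d u * chiPDF (N+2) v) := by
              rw [← h3]; ring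
      · have hle : u < x * v / N := by
          by_contra hc
          exact hm ⟨hv2, not_lt.mp hc⟩
        have hmax : max (u - x * v / N) 0 = 0 := max_eq_right (by linarith)
        simp [Set.indicator_of_notMem hm, hmax]
  -- measurability of pieces
  have hGm : ∀ a b : ℕ, Measurable (fun q : ℝ × ℝ => chiPDF a q.1 * chiPDF b q.2) :=
    fun a b => ((chiPDF_measurable a).comp measurable_fst).mul
      ((chiPDF_measurable b).comp measurable_snd)
  have hfm : Measurable (fun q : ℝ × ℝ => ENNReal.ofReal (max (q.1 - x * q.2 / N) 0)) :=
    ((measurable_fst.sub ((measurable_snd.const_mul x).div_const _)).max measurable_const).ennreal_ofReal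
  -- the main lintegral identity
  have hmain : (d : ENNReal) * ((chiSqMeasure (d + 2)).prod (chiSqMeasure N)) T
      = (∫⁻ q : ℝ × ℝ, ENNReal.ofReal (max (q.1 - x * q.2 / N) 0)
          ∂((chiSqMeasure d).prod (chiSqMeasure N)))
        + ENNReal.ofReal x * ((chiSqMeasure d).prod (chiSqMeasure (N + 2))) T := by
    rw [hprod (d+2) N (by omega) hN, hprod d N hd hN, hprod d (N+2) hd (by omega),
      withDensity_apply _ hT, withDensity_apply _ hT,
      lintegral_withDensity_eq_lintegral_mul _ (hGm d N) hfm]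
    simp only [Pi.mul_apply]
    rw [← lintegral_indicator hT, ← lintegral_indicator hT,
      ← lintegral_const_mul _ (((hGm (d+2) N)).indicator hT),
      ← lintegral_const_mul _ (((hGm d (N+2))).indicator hT),
      ← lintegral_add_left (f := fun q : ℝ × ℝ => chiPDF d q.1 * chiPDF N q.2 *
        ENNReal.ofReal (max (q.1 - x * q.2 / N) 0)) ((hGm d N).mul hfm)]
    refine lintegral_congr_ae ?_
    filter_upwards [hvae] with q hq
    exact key q hq
  -- finiteness
  have hA : ((chiSqMeasure (d + 2)).prod (chiSqMeasure N)) T ≠ ⊤ := measure_ne_top _ _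
  have hB : ((chiSqMeasure d).prod (chiSqMeasure (N + 2))) T ≠ ⊤ := measure_ne_top _ _
  have hdA : (d : ENNReal) * ((chiSqMeasure (d + 2)).prod (chiSqMeasure N)) T ≠ ⊤ :=
    ENNReal.mul_ne_top (ENNReal.natCast_ne_top d) hA
  have hC : (∫⁻ q : ℝ × ℝ, ENNReal.ofReal (max (q.1 - x * q.2 / N) 0)
      ∂((chiSqMeasure d).prod (chiSqMeasure N))) ≠ ⊤ := by
    intro hCtop
    rw [hCtop, top_add] at hmain
    exact hdA hmain
  have hxB : ENNReal.ofReal x * ((chiSqMeasure d).prod (chiSqMeasure (N + 2))) T ≠ ⊤ :=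
    ENNReal.mul_ne_top ENNReal.ofReal_ne_top hB
  -- convert RHS integral
  have hRHS : ∫ q : ℝ × ℝ, max (q.1 - x * q.2 / N) 0 ∂((chiSqMeasure d).prod (chiSqMeasure N))
      = (∫⁻ q : ℝ × ℝ, ENNReal.ofReal (max (q.1 - x * q.2 / N) 0)
          ∂((chiSqMeasure d).prod (chiSqMeasure N))).toReal := by
    exact integral_eq_lintegral_of_nonneg_ae
      (f := fun q : ℝ × ℝ => max (q.1 - x * q.2 / N) 0)
      (ae_of_all _ fun q => le_max_right (q.1 - x * q.2 / N) 0)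
      ((measurable_fst.sub ((measurable_snd.const_mul x).div_const _)).max
        measurable_const).aestronglyMeasurable
  rw [hmeas1, hmeas2, hRHS]
  have h := congrArg ENNReal.toReal hmain
  rw [ENNReal.toReal_mul, ENNReal.toReal_add hC hxB, ENNReal.toReal_mul,
    ENNReal.toReal_ofReal hx.le, ENNReal.toReal_natCast] at h
  have hdx : (d : ℝ) * (x / d) = x := by field_simp
  rw [mul_sub, ← mul_assoc, hdx]
  linarith [h]
end

section
/- For fixed x > 0 and positive integer N, the function d ↦ DKhi(d, N, x) := (1/d)·E[(X_d − x·X'_N/N)_+] is nondecreasing in the positive integer d, where X_d and X'_N are independent chi-squared variables with d and N degrees of freedom. -/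
open MeasureTheory ProbabilityTheory Real

open scoped ENNReal NNReal

namespace DKhiAux

lemma pdf_of_neg {a r t : ℝ} (ht : t < 0) : gammaPDFReal a r t = 0 := by
  simp [gammaPDFReal, not_le.mpr ht]

lemma integral_pdf {a r : ℝ} (ha : 0 < a) (hr : 0 < r) :
    ∫ t, gammaPDFReal a r t = 1 := by
  rw [integral_eq_lintegral_of_nonneg_ae
      (Filter.Eventually.of_forall (gammaPDFReal_nonneg ha hr))
      (measurable_gammaPDFReal a r).aestronglyMeasurable]
  have h1 : ∫⁻ t, ENNReal.ofReal (gammaPDFReal a r t) = 1 := lintegral_gammaPDF_eq_one ha hr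
  rw [h1]; simp

lemma integrable_pdf {a r : ℝ} (ha : 0 < a) (hr : 0 < r) :
    Integrable (gammaPDFReal a r) := by
  refine ⟨(measurable_gammaPDFReal a r).aestronglyMeasurable, ?_⟩
  rw [hasFiniteIntegral_iff_ofReal
      (Filter.Eventually.of_forall (gammaPDFReal_nonneg ha hr))]
  have h1 : ∫⁻ t, ENNReal.ofReal (gammaPDFReal a r t) = 1 := lintegral_gammaPDF_eq_one ha hr
  rw [h1]; exact ENNReal.one_lt_top

lemma mul_pdf_eq {a r : ℝ} (ha : 0 < a) (hr : 0 < r) (t : ℝ) :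
    t * gammaPDFReal a r t = (a / r) * gammaPDFReal (a + 1) r t := by
  have hΓ : Gamma (a + 1) = a * Gamma a := Gamma_add_one ha.ne'
  have hΓa : Gamma a ≠ 0 := (Gamma_pos_of_pos ha).ne'
  rcases lt_trichotomy t 0 with h | h | h
  · rw [pdf_of_neg h, pdf_of_neg h]; ring
  · subst h
    simp only [gammaPDFReal, le_refl, if_pos]
    rw [show a + 1 - 1 = a by ring, Real.zero_rpow ha.ne']
    ring
  · simp only [gammaPDFReal, if_pos h.le]
    rw [show a + 1 - 1 = a by ring, hΓ,
      Real.rpow_add_one hr.ne' a,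
      show a = a - 1 + 1 by ring, Real.rpow_add_one h.ne' (a - 1)]
    field_simp [ha.ne']
    ring

lemma integrable_mul_pdf {a r : ℝ} (ha : 0 < a) (hr : 0 < r) :
    Integrable (fun t => t * gammaPDFReal a r t) := by
  have : (fun t => t * gammaPDFReal a r t)
      = fun t => (a / r) * gammaPDFReal (a + 1) r t := funext (mul_pdf_eq ha hr)
  rw [this]
  exact (integrable_pdf (by linarith) hr).const_mul _

lemma integral_mul_pdf {a r : ℝ} (ha : 0 < a) (hr : 0 < r) :
    ∫ t, t * gammaPDFReal a r t = a / r := by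
  have : (fun t => t * gammaPDFReal a r t)
      = fun t => (a / r) * gammaPDFReal (a + 1) r t := funext (mul_pdf_eq ha hr)
  rw [this, integral_const_mul, integral_pdf (by linarith) hr, mul_one]

lemma integrable_min_pdf {a r : ℝ} (ha : 0 < a) (hr : 0 < r) {c : ℝ} (hc : 0 ≤ c) :
    Integrable (fun t => min t c * gammaPDFReal a r t) := by
  refine Integrable.mono ((integrable_pdf ha hr).const_mul c)
    (((measurable_id.min measurable_const).mul
      (measurable_gammaPDFReal a r)).aestronglyMeasurable) ?_
  refine Filter.Eventually.of_forall fun t => ?_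
  rcases lt_or_ge t 0 with h | h
  · simp [pdf_of_neg h]
  · have h1 : 0 ≤ min t c := le_min h hc
    have h2 : 0 ≤ gammaPDFReal a r t := gammaPDFReal_nonneg ha hr t
    rw [Real.norm_eq_abs, Real.norm_eq_abs, abs_of_nonneg (by positivity),
      abs_of_nonneg (by positivity)]
    exact mul_le_mul_of_nonneg_right (min_le_right t c) h2

lemma max_sub_eq (t c : ℝ) : max (t - c) 0 = t - min t c := by
  rcases le_total t c with h | h
  · rw [min_eq_left h, max_eq_right (by linarith), sub_self]
  · rw [min_eq_right h, max_eq_left (by linarith)]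

lemma integrable_max_pdf {a r : ℝ} (ha : 0 < a) (hr : 0 < r) {c : ℝ} (hc : 0 ≤ c) :
    Integrable (fun t => max (t - c) 0 * gammaPDFReal a r t) := by
  refine Integrable.mono (integrable_mul_pdf ha hr)
    ((((measurable_id.sub measurable_const).max measurable_const).mul
      (measurable_gammaPDFReal a r)).aestronglyMeasurable) ?_
  refine Filter.Eventually.of_forall fun t => ?_
  rcases lt_or_ge t 0 with h | h
  · simp [pdf_of_neg h]
  · have h2 : 0 ≤ gammaPDFReal a r t := gammaPDFReal_nonneg ha hr t
    have h3 : max (t - c) 0 ≤ t := max_le (by linarith) h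
    rw [Real.norm_eq_abs, Real.norm_eq_abs, abs_of_nonneg (by positivity),
      abs_of_nonneg (by positivity)]
    exact mul_le_mul_of_nonneg_right h3 h2

lemma integral_max_pdf {a r : ℝ} (ha : 0 < a) (hr : 0 < r) {c : ℝ} (hc : 0 ≤ c) :
    ∫ t, max (t - c) 0 * gammaPDFReal a r t
      = a / r - ∫ t, min t c * gammaPDFReal a r t := by
  have : (fun t => max (t - c) 0 * gammaPDFReal a r t)
      = fun t => t * gammaPDFReal a r t - min t c * gammaPDFReal a r t := by
    funext t; rw [max_sub_eq]; ring
  rw [this, integral_sub (integrable_mul_pdf ha hr) (integrable_min_pdf ha hr hc),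
    integral_mul_pdf ha hr]

lemma sign_iff {a₁ a₂ r t : ℝ} (ht : 0 < t) :
    a₂ * gammaPDFReal a₁ r t ≤ a₁ * gammaPDFReal a₂ r t ↔
      a₂ * (r ^ a₁ / Gamma a₁) ≤ a₁ * (r ^ a₂ / Gamma a₂) * t ^ (a₂ - a₁) := by
  rw [gammaPDFReal, gammaPDFReal, if_pos ht.le, if_pos ht.le,
    show a₂ - 1 = (a₁ - 1) + (a₂ - a₁) by ring, Real.rpow_add ht,
    show a₂ * (r ^ a₁ / Gamma a₁ * t ^ (a₁ - 1) * Real.exp (-(r * t)))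
      = (a₂ * (r ^ a₁ / Gamma a₁)) * (t ^ (a₁ - 1) * Real.exp (-(r * t))) by ring,
    show a₁ * (r ^ a₂ / Gamma a₂ * (t ^ (a₁ - 1) * t ^ (a₂ - a₁)) * Real.exp (-(r * t)))
      = (a₁ * (r ^ a₂ / Gamma a₂) * t ^ (a₂ - a₁)) * (t ^ (a₁ - 1) * Real.exp (-(r * t)))
      by ring,
    mul_le_mul_iff_of_pos_right (by positivity)]

lemma sign_iff' {a₁ a₂ r t : ℝ} (ht : 0 < t) :
    a₁ * gammaPDFReal a₂ r t ≤ a₂ * gammaPDFReal a₁ r t ↔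
      a₁ * (r ^ a₂ / Gamma a₂) * t ^ (a₂ - a₁) ≤ a₂ * (r ^ a₁ / Gamma a₁) := by
  rw [gammaPDFReal, gammaPDFReal, if_pos ht.le, if_pos ht.le,
    show a₂ - 1 = (a₁ - 1) + (a₂ - a₁) by ring, Real.rpow_add ht,
    show a₂ * (r ^ a₁ / Gamma a₁ * t ^ (a₁ - 1) * Real.exp (-(r * t)))
      = (a₂ * (r ^ a₁ / Gamma a₁)) * (t ^ (a₁ - 1) * Real.exp (-(r * t))) by ring,
    show a₁ * (r ^ a₂ / Gamma a₂ * (t ^ (a₁ - 1) * t ^ (a₂ - a₁)) * Real.exp (-(r * t)))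
      = (a₁ * (r ^ a₂ / Gamma a₂) * t ^ (a₂ - a₁)) * (t ^ (a₁ - 1) * Real.exp (-(r * t)))
      by ring,
    mul_le_mul_iff_of_pos_right (by positivity)]

section Sign

variable {a₁ a₂ r : ℝ} (h1 : 0 < a₁) (h12 : a₁ < a₂) (hr : 0 < r)

noncomputable def Kc (a₁ a₂ r : ℝ) : ℝ :=
  a₂ * (r ^ a₁ / Gamma a₁) / (a₁ * (r ^ a₂ / Gamma a₂))

noncomputable def tc (a₁ a₂ r : ℝ) : ℝ := Kc a₁ a₂ r ^ (1 / (a₂ - a₁))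

include h1 h12 hr

lemma Kc_pos : 0 < Kc a₁ a₂ r := by
  have h2 : 0 < a₂ := h1.trans h12
  have := Gamma_pos_of_pos h1
  have := Gamma_pos_of_pos h2
  have := rpow_pos_of_pos hr a₁
  have := rpow_pos_of_pos hr a₂
  unfold Kc; positivity

lemma tc_pos : 0 < tc a₁ a₂ r := rpow_pos_of_pos (Kc_pos h1 h12 hr) _

lemma tc_rpow : tc a₁ a₂ r ^ (a₂ - a₁) = Kc a₁ a₂ r := by
  rw [tc, ← Real.rpow_mul (Kc_pos h1 h12 hr).le,
    one_div_mul_cancel (by linarith : a₂ - a₁ ≠ 0), Real.rpow_one]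

lemma Kc_eq : a₁ * (r ^ a₂ / Gamma a₂) * Kc a₁ a₂ r = a₂ * (r ^ a₁ / Gamma a₁) := by
  have h2 : 0 < a₂ := h1.trans h12
  have hΓ2 : 0 < Gamma a₂ := Gamma_pos_of_pos h2
  have hrp : 0 < r ^ a₂ := rpow_pos_of_pos hr a₂
  rw [Kc, mul_div_cancel₀]
  positivity

lemma signGe {t : ℝ} (ht : tc a₁ a₂ r ≤ t) :
    a₂ * gammaPDFReal a₁ r t ≤ a₁ * gammaPDFReal a₂ r t := by
  have htpos : 0 < t := (tc_pos h1 h12 hr).trans_le ht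
  have h2 : 0 < a₂ := h1.trans h12
  have hΓ2 : 0 < Gamma a₂ := Gamma_pos_of_pos h2
  rw [sign_iff htpos]
  calc a₂ * (r ^ a₁ / Gamma a₁) = a₁ * (r ^ a₂ / Gamma a₂) * Kc a₁ a₂ r :=
        (Kc_eq h1 h12 hr).symm
    _ ≤ a₁ * (r ^ a₂ / Gamma a₂) * t ^ (a₂ - a₁) := by
        refine mul_le_mul_of_nonneg_left ?_ (by positivity)
        rw [← tc_rpow h1 h12 hr]
        exact Real.rpow_le_rpow (tc_pos h1 h12 hr).le ht (by linarith)

lemma signLe {t : ℝ} (ht : 0 < t) (ht' : t ≤ tc a₁ a₂ r) :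
    a₁ * gammaPDFReal a₂ r t ≤ a₂ * gammaPDFReal a₁ r t := by
  have h2 : 0 < a₂ := h1.trans h12
  have hΓ2 : 0 < Gamma a₂ := Gamma_pos_of_pos h2
  rw [sign_iff' ht]
  calc a₁ * (r ^ a₂ / Gamma a₂) * t ^ (a₂ - a₁)
      ≤ a₁ * (r ^ a₂ / Gamma a₂) * Kc a₁ a₂ r := by
        refine mul_le_mul_of_nonneg_left ?_ (by positivity)
        rw [← tc_rpow h1 h12 hr]
        exact Real.rpow_le_rpow ht.le ht' (by linarith)
    _ = a₂ * (r ^ a₁ / Gamma a₁) := Kc_eq h1 h12 hr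

end Sign
section Key

variable {a₁ a₂ r : ℝ}

lemma keyGamma (h1 : 0 < a₁) (h12 : a₁ ≤ a₂) (hr : 0 < r) {c : ℝ} (hc : 0 ≤ c) :
    a₂ * ∫ t, max (t - c) 0 * gammaPDFReal a₁ r t ≤
      a₁ * ∫ t, max (t - c) 0 * gammaPDFReal a₂ r t := by
  rcases eq_or_lt_of_le h12 with heq | hlt
  · subst heq; exact le_rfl
  have h2 : 0 < a₂ := h1.trans hlt
  set t₀ := tc a₁ a₂ r with ht₀def
  have ht₀ : 0 < t₀ := tc_pos h1 hlt hr
  -- step for thresholds above the crossing point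
  have stepGe : ∀ c' : ℝ, t₀ ≤ c' →
      a₂ * ∫ t, max (t - c') 0 * gammaPDFReal a₁ r t ≤
        a₁ * ∫ t, max (t - c') 0 * gammaPDFReal a₂ r t := by
    intro c' hc'
    have hc'0 : 0 ≤ c' := (ht₀.trans_le hc').le
    rw [← integral_const_mul, ← integral_const_mul]
    refine integral_mono ((integrable_max_pdf h1 hr hc'0).const_mul a₂)
      ((integrable_max_pdf h2 hr hc'0).const_mul a₁) fun t => ?_
    rcases le_or_gt t c' with h | h
    · simp [max_eq_right (by linarith : t - c' ≤ 0)]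
    · have hs := signGe h1 hlt hr (le_trans hc' h.le)
      have hm : (0:ℝ) ≤ max (t - c') 0 := le_max_right _ _
      nlinarith
  rcases le_total t₀ c with hct | hct
  · exact stepGe c hct
  -- now c ≤ t₀
  have hM' : a₁ * ∫ t, min t t₀ * gammaPDFReal a₂ r t ≤
      a₂ * ∫ t, min t t₀ * gammaPDFReal a₁ r t := by
    have := stepGe t₀ le_rfl
    rw [integral_max_pdf h1 hr ht₀.le, integral_max_pdf h2 hr ht₀.le,
      mul_sub, mul_sub] at this
    have e : a₂ * (a₁ / r) = a₁ * (a₂ / r) := by ring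
    linarith
  set lam := c / t₀ with hlamdef
  have hlam0 : 0 ≤ lam := by positivity
  have hlam1 : lam ≤ 1 := by
    rw [hlamdef, div_le_one ht₀]; exact hct
  have hlamt₀ : lam * t₀ = c := by
    rw [hlamdef]; field_simp
  -- integrated single-crossing inequality
  have Pint : (a₁ * ∫ t, min t c * gammaPDFReal a₂ r t) +
        lam * (a₂ * ∫ t, min t t₀ * gammaPDFReal a₁ r t) ≤
      (a₂ * ∫ t, min t c * gammaPDFReal a₁ r t) +
        lam * (a₁ * ∫ t, min t t₀ * gammaPDFReal a₂ r t) := by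
    have hi1 := integrable_min_pdf h2 hr hc
    have hi2 := integrable_min_pdf h1 hr ht₀.le
    have hi3 := integrable_min_pdf h1 hr hc
    have hi4 := integrable_min_pdf h2 hr ht₀.le
    have lhs_eq : ∫ t, (a₁ * (min t c * gammaPDFReal a₂ r t) +
          lam * (a₂ * (min t t₀ * gammaPDFReal a₁ r t)))
        = (a₁ * ∫ t, min t c * gammaPDFReal a₂ r t) +
          lam * (a₂ * ∫ t, min t t₀ * gammaPDFReal a₁ r t) := by
      rw [integral_add (hi1.const_mul a₁) ((hi2.const_mul a₂).const_mul lam)]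
      simp only [integral_const_mul]
    have rhs_eq : ∫ t, (a₂ * (min t c * gammaPDFReal a₁ r t) +
          lam * (a₁ * (min t t₀ * gammaPDFReal a₂ r t)))
        = (a₂ * ∫ t, min t c * gammaPDFReal a₁ r t) +
          lam * (a₁ * ∫ t, min t t₀ * gammaPDFReal a₂ r t) := by
      rw [integral_add (hi3.const_mul a₂) ((hi4.const_mul a₁).const_mul lam)]
      simp only [integral_const_mul]
    rw [← lhs_eq, ← rhs_eq]
    refine integral_mono ?_ ?_ fun t => ?_
    · exact (hi1.const_mul a₁).add ((hi2.const_mul a₂).const_mul lam)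
    · exact (hi3.const_mul a₂).add ((hi4.const_mul a₁).const_mul lam)
    -- pointwise inequality
    rcases lt_or_ge t 0 with hneg | hpos
    · simp [pdf_of_neg hneg]
    rcases eq_or_lt_of_le hpos with h0 | hpos
    · simp [← h0, min_eq_left hc, min_eq_left ht₀.le]
    rcases le_total t₀ t with hge | hle
    · have hmc : min t c = c := min_eq_right (hct.trans hge)
      have hmt : min t t₀ = t₀ := min_eq_right hge
      rw [hmc, hmt]
      have e1 : lam * (a₂ * (t₀ * gammaPDFReal a₁ r t)) = a₂ * (c * gammaPDFReal a₁ r t) := by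
        rw [← hlamt₀]; ring
      have e2 : lam * (a₁ * (t₀ * gammaPDFReal a₂ r t)) = a₁ * (c * gammaPDFReal a₂ r t) := by
        rw [← hlamt₀]; ring
      rw [e1, e2]; linarith
    · have hs := signLe h1 hlt hr hpos hle
      have hmt : min t t₀ = t := min_eq_left hle
      rw [hmt]
      have hm : lam * t ≤ min t c := by
        rcases le_total t c with h | h
        · rw [min_eq_left h]
          nlinarith
        · rw [min_eq_right h]
          rw [← hlamt₀]
          nlinarith
      nlinarith [mul_nonneg (sub_nonneg.2 hm) (sub_nonneg.2 hs)]
  have hlamM : lam * (a₁ * ∫ t, min t t₀ * gammaPDFReal a₂ r t) ≤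
      lam * (a₂ * ∫ t, min t t₀ * gammaPDFReal a₁ r t) :=
    mul_le_mul_of_nonneg_left hM' hlam0
  have hMgoal : a₁ * ∫ t, min t c * gammaPDFReal a₂ r t ≤
      a₂ * ∫ t, min t c * gammaPDFReal a₁ r t := by linarith
  rw [integral_max_pdf h1 hr hc, integral_max_pdf h2 hr hc, mul_sub, mul_sub]
  have e : a₂ * (a₁ / r) = a₁ * (a₂ / r) := by ring
  linarith

end Key
lemma integral_gammaMeasure {a r : ℝ} (ha : 0 < a) (hr : 0 < r) (f : ℝ → ℝ) :
    ∫ t, f t ∂(gammaMeasure a r) = ∫ t, f t * gammaPDFReal a r t := by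
  rw [gammaMeasure,
    show gammaPDF a r = fun t => ((gammaPDFReal a r t).toNNReal : ℝ≥0∞) from rfl,
    integral_withDensity_eq_integral_smul
      (measurable_gammaPDFReal a r).real_toNNReal]
  refine integral_congr_ae (Filter.Eventually.of_forall fun t => ?_)
  simp [NNReal.smul_def, Real.coe_toNNReal _ (gammaPDFReal_nonneg ha hr t), mul_comm]

lemma integrable_gammaMeasure_iff {a r : ℝ} (ha : 0 < a) (hr : 0 < r) (f : ℝ → ℝ) :
    Integrable f (gammaMeasure a r) ↔
      Integrable (fun t => f t * gammaPDFReal a r t) := by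
  rw [gammaMeasure,
    show gammaPDF a r = fun t => ENNReal.ofReal (gammaPDFReal a r t) from rfl,
    integrable_withDensity_iff
    ((measurable_gammaPDFReal a r).ennreal_ofReal)
    (Filter.Eventually.of_forall fun t => ENNReal.ofReal_lt_top)]
  refine integrable_congr (Filter.Eventually.of_forall fun t => ?_)
  simp only [ENNReal.toReal_ofReal (gammaPDFReal_nonneg ha hr t)]

lemma integrable_abs_gammaMeasure {a r : ℝ} (ha : 0 < a) (hr : 0 < r) :
    Integrable (fun t => |t|) (gammaMeasure a r) := by
  rw [integrable_gammaMeasure_iff ha hr]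
  have : (fun t => |t| * gammaPDFReal a r t) = fun t => t * gammaPDFReal a r t := by
    funext t
    rcases lt_or_ge t 0 with h | h
    · rw [pdf_of_neg h, mul_zero, mul_zero]
    · rw [abs_of_nonneg h]
  rw [this]
  exact integrable_mul_pdf ha hr

lemma ae_nonneg_gammaMeasure {a r : ℝ} : ∀ᵐ s ∂(gammaMeasure a r), 0 ≤ s := by
  rw [ae_iff]
  have : {s : ℝ | ¬ 0 ≤ s} = Set.Iio 0 := by ext s; simp
  rw [this, gammaMeasure, withDensity_apply _ measurableSet_Iio]
  simpa using lintegral_gammaPDF_of_nonpos (le_refl (0:ℝ)) (a := a) (r := r)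

end DKhiAux

theorem DKhi_mono_in_d (N : ℕ) (hN : 0 < N) (x : ℝ) (hx : 0 < x)
    (d₁ d₂ : ℕ) (hd₁ : 0 < d₁) (h : d₁ ≤ d₂) :
    (1 / (d₁ : ℝ)) *
        ∫ q : ℝ × ℝ, max (q.1 - x * q.2 / N) 0
          ∂((chiSqMeasure d₁).prod (chiSqMeasure N)) ≤
      (1 / (d₂ : ℝ)) *
        ∫ q : ℝ × ℝ, max (q.1 - x * q.2 / N) 0
          ∂((chiSqMeasure d₂).prod (chiSqMeasure N)) := by
  have hr : (0:ℝ) < 1/2 := by norm_num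
  have hd₂ : 0 < d₂ := lt_of_lt_of_le hd₁ h
  have hd₁R : (0:ℝ) < d₁ := by exact_mod_cast hd₁
  have hd₂R : (0:ℝ) < d₂ := by exact_mod_cast hd₂
  have hNR : (0:ℝ) < N := by exact_mod_cast hN
  have ha₁ : (0:ℝ) < (d₁:ℝ)/2 := by positivity
  have ha₂ : (0:ℝ) < (d₂:ℝ)/2 := by positivity
  have haN : (0:ℝ) < (N:ℝ)/2 := by positivity
  haveI i1 : IsProbabilityMeasure (chiSqMeasure d₁) := isProbabilityMeasure_gammaMeasure ha₁ hr
  haveI i2 : IsProbabilityMeasure (chiSqMeasure d₂) := isProbabilityMeasure_gammaMeasure ha₂ hr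
  haveI iN : IsProbabilityMeasure (chiSqMeasure N) := isProbabilityMeasure_gammaMeasure haN hr
  have hxN : (0:ℝ) ≤ x / N := by positivity
  -- integrability on the product space
  have hint : ∀ d : ℕ, 0 < d →
      Integrable (fun q : ℝ × ℝ => max (q.1 - x * q.2 / N) 0)
        ((chiSqMeasure d).prod (chiSqMeasure N)) := by
    intro d hd
    have hdR : (0:ℝ) < d := by exact_mod_cast hd
    have haD : (0:ℝ) < (d:ℝ)/2 := by positivity
    haveI : IsProbabilityMeasure (chiSqMeasure d) := isProbabilityMeasure_gammaMeasure haD hr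
    have hA : Integrable (fun t : ℝ => |t|) (chiSqMeasure d) :=
      DKhiAux.integrable_abs_gammaMeasure haD hr
    have hB : Integrable (fun t : ℝ => x / N * |t|) (chiSqMeasure N) :=
      (DKhiAux.integrable_abs_gammaMeasure haN hr).const_mul _
    have h1 := hA.mul_prod (integrable_const (1:ℝ)) (ν := chiSqMeasure N)
    have h2 := (integrable_const (1:ℝ)).mul_prod hB (μ := chiSqMeasure d)
    have hg : Integrable (fun q : ℝ × ℝ => |q.1| * 1 + 1 * (x / N * |q.2|))
        ((chiSqMeasure d).prod (chiSqMeasure N)) := h1.add h2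
    refine Integrable.mono hg ?_ ?_
    · refine Continuous.aestronglyMeasurable ?_
      exact (continuous_fst.sub ((continuous_const.mul continuous_snd).div_const _)).max
        continuous_const
    · refine Filter.Eventually.of_forall fun q => ?_
      have hb1 : q.1 ≤ |q.1| := le_abs_self _
      have hb2 : -(x / N * |q.2|) ≤ x / N * q.2 := by
        nlinarith [neg_abs_le q.2, abs_nonneg q.2]
      have hle : max (q.1 - x * q.2 / N) 0 ≤ |q.1| * 1 + 1 * (x / N * |q.2|) := by
        refine max_le ?_ (by positivity)
        have : x * q.2 / N = x / N * q.2 := by ring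
        nlinarith
      rw [Real.norm_eq_abs, Real.norm_eq_abs,
        abs_of_nonneg (le_max_right _ _), abs_of_nonneg (by positivity)]
      exact hle
  rw [integral_prod_symm _ (hint d₁ hd₁), integral_prod_symm _ (hint d₂ hd₂),
    ← integral_const_mul, ← integral_const_mul]
  have haeN : ∀ᵐ s ∂(chiSqMeasure N), 0 ≤ s := DKhiAux.ae_nonneg_gammaMeasure
  refine integral_mono_ae (((hint d₁ hd₁).integral_prod_right).const_mul _)
    (((hint d₂ hd₂).integral_prod_right).const_mul _) ?_
  filter_upwards [haeN] with s hs
  have hc : (0:ℝ) ≤ x * s / N := by positivity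
  rw [show chiSqMeasure d₁ = gammaMeasure ((d₁:ℝ)/2) (1/2) from rfl,
    show chiSqMeasure d₂ = gammaMeasure ((d₂:ℝ)/2) (1/2) from rfl,
    DKhiAux.integral_gammaMeasure ha₁ hr, DKhiAux.integral_gammaMeasure ha₂ hr]
  have h12 : (d₁:ℝ)/2 ≤ (d₂:ℝ)/2 := by
    have : (d₁:ℝ) ≤ d₂ := by exact_mod_cast h
    linarith
  have key := DKhiAux.keyGamma ha₁ h12 hr hc
  set E₁ := ∫ t, max (t - x * s / N) 0 * gammaPDFReal ((d₁:ℝ)/2) (1/2) t with hE₁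
  set E₂ := ∫ t, max (t - x * s / N) 0 * gammaPDFReal ((d₂:ℝ)/2) (1/2) t with hE₂
  calc 1/(d₁:ℝ) * E₁ = (2/((d₁:ℝ)*(d₂:ℝ))) * (((d₂:ℝ)/2) * E₁) := by
        field_simp
      _ ≤ (2/((d₁:ℝ)*(d₂:ℝ))) * (((d₁:ℝ)/2) * E₂) :=
        mul_le_mul_of_nonneg_left key (by positivity)
      _ = 1/(d₂:ℝ) * E₂ := by field_simp
end

section
/- For fixed x > 0 and positive integer d, the function N ↦ DKhi(d, N, x) := (1/d)·E[(X_d − x·X'_N/N)_+] is nonincreasing in the positive integer N, where X_d and X'_N are independent chi-squared variables with d and N degrees of freedom. -/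
open MeasureTheory ProbabilityTheory Real
open Set
open scoped ENNReal

namespace DKhiAux

/-- 1D lintegral change of variables. -/
theorem lintegral_image_1d {s : Set ℝ} {f f' : ℝ → ℝ} (hs : MeasurableSet s)
    (hf' : ∀ x ∈ s, HasDerivWithinAt f (f' x) s x) (hf : InjOn f s) (g : ℝ → ℝ≥0∞) :
    ∫⁻ x in f '' s, g x = ∫⁻ x in s, ENNReal.ofReal |f' x| * g (f x) := by
  simpa only [ContinuousLinearMap.det_toSpanSingleton] using
    lintegral_image_eq_lintegral_abs_det_fderiv_mul volume hs
      (fun x hx => (hf' x hx).hasFDerivWithinAt) hf g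

theorem integrableOn_rpow_exp {p r : ℝ} (hp : -1 < p) (hr : 0 < r) :
    IntegrableOn (fun t : ℝ => t ^ p * exp (-(r * t))) (Ioi 0) := by
  have := integrableOn_rpow_mul_exp_neg_mul_rpow hp one_pos hr
  simpa [Real.rpow_one, neg_mul] using this

theorem gamma_ae_nonneg (a r : ℝ) : ∀ᵐ t ∂(gammaMeasure a r), 0 ≤ t := by
  rw [gammaMeasure]
  refine (ae_withDensity_iff ((measurable_gammaPDFReal a r).ennreal_ofReal)).2
    (ae_of_all _ fun t ht => ?_)
  by_contra hlt
  exact ht (gammaPDF_of_neg (lt_of_not_ge hlt))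

end DKhiAux

namespace DKhiAux

theorem cf_eq {a c : ℝ} {x : ℝ} (hx : x ∈ Ioo (0:ℝ) 1) :
    (x:ℂ) ^ ((a:ℂ)-1) * (1-(x:ℂ)) ^ ((c:ℂ)-1)
      = ((x ^ (a-1) * (1-x) ^ (c-1) : ℝ) : ℂ) := by
  have h1 : ((a:ℂ)-1) = ((a-1 : ℝ):ℂ) := by push_cast; ring
  have h2 : ((c:ℂ)-1) = ((c-1 : ℝ):ℂ) := by push_cast; ring
  have h3 : (1 - (x:ℂ)) = ((1 - x : ℝ):ℂ) := by push_cast; ring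
  rw [h1, h2, h3, ← Complex.ofReal_cpow hx.1.le,
    ← Complex.ofReal_cpow (by linarith [hx.2] : (0:ℝ) ≤ 1 - x), ← Complex.ofReal_mul]

theorem integrableOn_beta {a c : ℝ} (ha : 0 < a) (hc : 0 < c) :
    IntegrableOn (fun b : ℝ => b ^ (a-1) * (1-b) ^ (c-1)) (Ioo 0 1) := by
  have h := Complex.betaIntegral_convergent (u := a) (v := c) (by simpa using ha) (by simpa using hc)
  have h2 : IntegrableOn (fun x : ℝ => (x:ℂ) ^ ((a:ℂ)-1) * (1-(x:ℂ)) ^ ((c:ℂ)-1)) (Ioc 0 1) := by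
    rw [← intervalIntegrable_iff_integrableOn_Ioc_of_le zero_le_one]
    exact h
  have h3 := (h2.mono_set Ioo_subset_Ioc_self).re
  refine h3.congr ((ae_restrict_iff' measurableSet_Ioo).2 (ae_of_all _ fun x hx => ?_))
  dsimp only
  rw [cf_eq hx]
  exact Complex.ofReal_re _

theorem integral_beta {a c : ℝ} (ha : 0 < a) (hc : 0 < c) :
    ∫ b in Ioo (0:ℝ) 1, b ^ (a-1) * (1-b) ^ (c-1) = Gamma a * Gamma c / Gamma (a+c) := by
  have key := Complex.Gamma_mul_Gamma_eq_betaIntegral (s := a) (t := c)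
    (by simpa using ha) (by simpa using hc)
  have hbeta : Complex.betaIntegral a c = ((∫ b in Ioo (0:ℝ) 1, b ^ (a-1) * (1-b) ^ (c-1) : ℝ) : ℂ) := by
    rw [Complex.betaIntegral, intervalIntegral.integral_of_le zero_le_one,
      MeasureTheory.integral_Ioc_eq_integral_Ioo]
    calc ∫ t in Ioo (0:ℝ) 1, (t:ℂ) ^ ((a:ℂ)-1) * (1-(t:ℂ)) ^ ((c:ℂ)-1)
        = ∫ t in Ioo (0:ℝ) 1, ((t ^ (a-1) * (1-t) ^ (c-1) : ℝ) : ℂ) :=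
          setIntegral_congr_fun measurableSet_Ioo (fun x hx => cf_eq hx)
      _ = _ := integral_ofReal
  rw [hbeta, ← Complex.ofReal_add, Complex.Gamma_ofReal, Complex.Gamma_ofReal,
    Complex.Gamma_ofReal, ← Complex.ofReal_mul, ← Complex.ofReal_mul] at key
  have hmain := Complex.ofReal_inj.1 key
  have hG : Gamma (a+c) ≠ 0 := (Real.Gamma_pos_of_pos (by linarith)).ne'
  rw [eq_div_iff hG]
  linear_combination -hmain

end DKhiAux

namespace DKhiAux

theorem lintegral_beta {a c : ℝ} (ha : 0 < a) (hc : 0 < c) :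
    ∫⁻ b in Ioo (0:ℝ) 1, ENNReal.ofReal (b ^ (a-1) * (1-b) ^ (c-1))
      = ENNReal.ofReal (Gamma a * Gamma c / Gamma (a+c)) := by
  rw [← ofReal_integral_eq_lintegral_ofReal (integrableOn_beta ha hc)
    ((ae_restrict_iff' measurableSet_Ioo).2 (ae_of_all _ fun b hb => by
      have h1 : (0:ℝ) ≤ b := hb.1.le
      have h2 : (0:ℝ) ≤ 1 - b := by linarith [hb.2]
      positivity)), integral_beta ha hc]

theorem lintegral_rpow_exp {p r : ℝ} (hp : 0 < p) (hr : 0 < r) :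
    ∫⁻ t in Ioi (0:ℝ), ENNReal.ofReal (t ^ (p-1) * exp (-(r*t)))
      = ENNReal.ofReal ((1/r) ^ p * Gamma p) := by
  rw [← ofReal_integral_eq_lintegral_ofReal (integrableOn_rpow_exp (by linarith) hr)
    ((ae_restrict_iff' measurableSet_Ioi).2 (ae_of_all _ fun t ht => by
      have h1 : (0:ℝ) < t := ht
      positivity)), integral_rpow_mul_exp_neg_mul_Ioi hp hr]

/-- The Beta measure on (0,1). -/
noncomputable def betaM (a c : ℝ) : Measure ℝ :=
  (volume.restrict (Ioo 0 1)).withDensity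
    (fun b => ENNReal.ofReal (Gamma (a+c) / (Gamma a * Gamma c) * (b ^ (a-1) * (1-b) ^ (c-1))))

theorem measurable_betaDens (a c : ℝ) :
    Measurable (fun b : ℝ =>
      ENNReal.ofReal (Gamma (a+c) / (Gamma a * Gamma c) * (b ^ (a-1) * (1-b) ^ (c-1)))) := by
  apply Measurable.ennreal_ofReal
  exact (((measurable_id.pow_const _).mul
    ((measurable_const.sub measurable_id).pow_const _)).const_mul _)

theorem betaM_lintegral (a c : ℝ) {g : ℝ → ℝ≥0∞} (hg : Measurable g) :
    ∫⁻ b, g b ∂(betaM a c) = ∫⁻ b in Ioo (0:ℝ) 1,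
      ENNReal.ofReal (Gamma (a+c) / (Gamma a * Gamma c) * (b ^ (a-1) * (1-b) ^ (c-1))) * g b := by
  rw [betaM, lintegral_withDensity_eq_lintegral_mul _ (measurable_betaDens a c) hg]
  rfl

theorem betaM_lintegral_ofReal {a c : ℝ} (ha : 0 < a) (hc : 0 < c) {f : ℝ → ℝ}
    (hf : Measurable f) (hf0 : ∀ b ∈ Ioo (0:ℝ) 1, 0 ≤ f b) :
    ∫⁻ b, ENNReal.ofReal (f b) ∂(betaM a c) = ∫⁻ b in Ioo (0:ℝ) 1,
      ENNReal.ofReal (Gamma (a+c) / (Gamma a * Gamma c) * (b ^ (a-1) * (1-b) ^ (c-1)) * f b) := by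
  rw [betaM_lintegral a c hf.ennreal_ofReal]
  refine setLIntegral_congr_fun_ae measurableSet_Ioo (ae_of_all _ fun b hb => ?_)
  rw [← ENNReal.ofReal_mul]
  have h1 : (0:ℝ) ≤ b := hb.1.le
  have h2 : (0:ℝ) ≤ 1 - b := by linarith [hb.2]
  positivity

theorem betaM_prob {a c : ℝ} (ha : 0 < a) (hc : 0 < c) :
    IsProbabilityMeasure (betaM a c) := by
  constructor
  have hGa := Real.Gamma_pos_of_pos ha
  have hGc := Real.Gamma_pos_of_pos hc
  have hGac := Real.Gamma_pos_of_pos (by linarith : 0 < a + c)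
  rw [← MeasureTheory.lintegral_one, betaM_lintegral a c measurable_const]
  simp only [mul_one]
  have : ∀ b ∈ Ioo (0:ℝ) 1, ENNReal.ofReal (Gamma (a+c) / (Gamma a * Gamma c) * (b ^ (a-1) * (1-b) ^ (c-1)))
      = ENNReal.ofReal (Gamma (a+c) / (Gamma a * Gamma c)) * ENNReal.ofReal (b ^ (a-1) * (1-b) ^ (c-1)) :=
    fun b hb => ENNReal.ofReal_mul (by positivity)
  rw [setLIntegral_congr_fun_ae measurableSet_Ioo (ae_of_all _ this), lintegral_const_mul _
    (by apply Measurable.ennreal_ofReal; exact ((measurable_id.pow_const _).mul ((measurable_const.sub measurable_id).pow_const _))),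
    lintegral_beta ha hc, ← ENNReal.ofReal_mul (by positivity), ← ENNReal.ofReal_one]
  congr 1
  field_simp

theorem betaM_lintegral_id {a c : ℝ} (ha : 0 < a) (hc : 0 < c) :
    ∫⁻ b, ENNReal.ofReal b ∂(betaM a c) = ENNReal.ofReal (a / (a+c)) := by
  have hGa := Real.Gamma_pos_of_pos ha
  have hGc := Real.Gamma_pos_of_pos hc
  have hGac := Real.Gamma_pos_of_pos (by linarith : 0 < a + c)
  rw [betaM_lintegral_ofReal ha hc (f := fun b => b) measurable_id (fun b hb => hb.1.le)]
  have heq : ∀ b ∈ Ioo (0:ℝ) 1,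
      ENNReal.ofReal (Gamma (a+c) / (Gamma a * Gamma c) * (b ^ (a-1) * (1-b) ^ (c-1)) * b)
      = ENNReal.ofReal (Gamma (a+c) / (Gamma a * Gamma c)) * ENNReal.ofReal (b ^ ((a+1)-1) * (1-b) ^ (c-1)) := by
    intro b hb
    have h1 : (0:ℝ) < b := hb.1
    have h2 : (0:ℝ) ≤ 1 - b := by linarith [hb.2]
    rw [← ENNReal.ofReal_mul (by positivity)]
    congr 1
    have he : (a+1)-1 = (a-1)+1 := by ring
    rw [he, Real.rpow_add h1, Real.rpow_one]
    ring
  rw [setLIntegral_congr_fun_ae measurableSet_Ioo (ae_of_all _ heq), lintegral_const_mul _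
    (by apply Measurable.ennreal_ofReal; exact ((measurable_id.pow_const _).mul ((measurable_const.sub measurable_id).pow_const _))),
    lintegral_beta (by linarith : (0:ℝ) < a + 1) hc, ← ENNReal.ofReal_mul (by positivity)]
  congr 1
  rw [Real.Gamma_add_one ha.ne', (by ring : a + 1 + c = (a + c) + 1), Real.Gamma_add_one (by linarith : a + c ≠ 0)]
  field_simp

theorem betaM_ae_mem {a c : ℝ} : ∀ᵐ b ∂(betaM a c), b ∈ Ioo (0:ℝ) 1 := by
  refine (withDensity_absolutelyContinuous _ _).ae_le ?_
  exact ae_restrict_mem measurableSet_Ioo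

theorem betaM_integral_id {a c : ℝ} (ha : 0 < a) (hc : 0 < c) :
    ∫ b, b ∂(betaM a c) = a / (a+c) := by
  rw [integral_eq_lintegral_of_nonneg_ae (betaM_ae_mem.mono fun b hb => hb.1.le)
    measurable_id.aestronglyMeasurable, betaM_lintegral_id ha hc,
    ENNReal.toReal_ofReal (by positivity)]

end DKhiAux

namespace DKhiAux

theorem lintegral_gamma_density {a r : ℝ} {F : ℝ → ℝ≥0∞} (hF : Measurable F) :
    ∫⁻ t, F t ∂(gammaMeasure a r) = ∫⁻ t in Ioi (0:ℝ), gammaPDF a r t * F t := by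
  have hpdf : Measurable (gammaPDF a r) := (measurable_gammaPDFReal a r).ennreal_ofReal
  rw [gammaMeasure, lintegral_withDensity_eq_lintegral_mul _ hpdf hF]
  have hsplit := (lintegral_add_compl (μ := volume) (fun t => gammaPDF a r t * F t)
    (measurableSet_Ioi (a := (0:ℝ)))).symm
  simp only [Pi.mul_apply]
  rw [hsplit]
  have hzero : ∫⁻ t in (Ioi (0:ℝ))ᶜ, gammaPDF a r t * F t = 0 := by
    rw [compl_Ioi, ← setLIntegral_congr Iio_ae_eq_Iic]
    rw [setLIntegral_congr_fun_ae (g := fun _ => 0) measurableSet_Iio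
      (ae_of_all _ (fun t (ht : t < 0) => by rw [gammaPDF_of_neg ht, zero_mul]))]
    simp
  rw [hzero, add_zero]

theorem image_mul_Ioi {b : ℝ} (hb : 0 < b) : (fun t => b * t) '' (Ioi (0:ℝ)) = Ioi 0 := by
  ext u
  constructor
  · rintro ⟨t, ht, rfl⟩
    exact mul_pos hb ht
  · intro hu
    exact ⟨u / b, div_pos hu hb, by field_simp⟩

theorem lintegral_scale {b : ℝ} (hb : 0 < b) (Φ : ℝ → ℝ≥0∞) :
    ∫⁻ u in Ioi (0:ℝ), Φ u = ∫⁻ t in Ioi (0:ℝ), ENNReal.ofReal b * Φ (b * t) := by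
  conv_lhs => rw [← image_mul_Ioi hb]
  rw [lintegral_image_1d measurableSet_Ioi
    (fun t _ => (by simpa using ((hasDerivAt_id t).const_mul b) :
      HasDerivAt (fun t : ℝ => b * t) b t).hasDerivWithinAt)
    (fun t1 _ t2 _ he => mul_left_cancel₀ hb.ne' he) Φ]
  simp only [mul_one, abs_of_pos hb]

theorem image_frac_Ioi {u : ℝ} (hu : 0 < u) :
    (fun w => u / (u + w)) '' (Ioi (0:ℝ)) = Ioo 0 1 := by
  ext b
  constructor
  · rintro ⟨w, (hw : 0 < w), rfl⟩
    have h1 : 0 < u + w := by linarith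
    constructor
    · positivity
    · rw [div_lt_one h1]; linarith
  · rintro ⟨hb0, hb1⟩
    refine ⟨u / b - u, ?_, ?_⟩
    · have : u < u / b := by
        rw [lt_div_iff₀ hb0]; nlinarith
      simpa [mem_Ioi] using by linarith
    · have hbne : b ≠ 0 := hb0.ne'
      have h1 : u + (u / b - u) = u / b := by ring
      simp only [h1]
      rw [div_div_eq_mul_div]
      field_simp

theorem hasDeriv_frac {u w : ℝ} (hu : 0 < u) (hw : 0 < w) :
    HasDerivAt (fun w => u / (u + w)) (-(u / (u + w) ^ 2)) w := by
  have h1 : 0 < u + w := by linarith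
  have := (hasDerivAt_const w u).div ((hasDerivAt_id w).const_add u) h1.ne'
  convert this using 1
  all_goals first | rfl | (simp; field_simp) | field_simp

theorem injOn_frac {u : ℝ} (hu : 0 < u) : InjOn (fun w => u / (u + w)) (Ioi (0:ℝ)) := by
  intro w1 (h1 : 0 < w1) w2 (h2 : 0 < w2) he
  have hu1 : 0 < u + w1 := by linarith
  have hu2 : 0 < u + w2 := by linarith
  simp only at he
  rw [div_eq_div_iff hu1.ne' hu2.ne'] at he
  have := mul_left_cancel₀ hu.ne' he
  linarith

end DKhiAux

namespace DKhiAux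

theorem clubs {a c r : ℝ} (ha : 0 < a) (hc : 0 < c) (hr : 0 < r) {u : ℝ} (hu : 0 < u) :
    ∫⁻ b in Ioo (0:ℝ) 1,
      ENNReal.ofReal (Gamma (a+c) / (Gamma a * Gamma c) * (b ^ (a-1) * (1-b) ^ (c-1)) * b⁻¹ *
        (r ^ (a+c) / Gamma (a+c) * (u/b) ^ ((a+c)-1) * exp (-(r * (u/b)))))
      = ENNReal.ofReal (r ^ a / Gamma a * u ^ (a-1) * exp (-(r * u))) := by
  have hGa := Real.Gamma_pos_of_pos ha
  have hGc := Real.Gamma_pos_of_pos hc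
  have hGac := Real.Gamma_pos_of_pos (by linarith : 0 < a + c)
  set k := Gamma (a+c) / (Gamma a * Gamma c) with hk
  set G := r ^ (a+c) / Gamma (a+c) with hG
  have hkpos : 0 < k := by positivity
  have hGpos : 0 < G := by have := Real.rpow_pos_of_pos hr (a+c); positivity
  conv_lhs => rw [← image_frac_Ioi hu]
  rw [lintegral_image_1d measurableSet_Ioi (fun w hw => (hasDeriv_frac hu hw).hasDerivWithinAt)
    (injOn_frac hu)]
  have hptwise : ∀ w ∈ Ioi (0:ℝ),
      ENNReal.ofReal |(-(u / (u + w) ^ 2))| *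
        ENNReal.ofReal (k * ((u/(u+w)) ^ (a-1) * (1-(u/(u+w))) ^ (c-1)) * (u/(u+w))⁻¹ *
          (G * (u/(u/(u+w))) ^ ((a+c)-1) * exp (-(r * (u/(u/(u+w)))))))
      = ENNReal.ofReal ((k * G) * (u ^ (a-1) * exp (-(r*u)))) *
          ENNReal.ofReal (w ^ ((c:ℝ)-1) * exp (-(r*w))) := by
    intro w hw
    have hw0 : (0:ℝ) < w := hw
    have hY : (0:ℝ) < u + w := by linarith
    have h2 : u / (u/(u+w)) = u + w := by
      rw [div_div_eq_mul_div]
      field_simp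
    have h3 : 1 - u/(u+w) = w/(u+w) := by field_simp; ring
    have habs : |(-(u / (u + w) ^ 2))| = u / (u+w)^2 := by
      rw [abs_neg, abs_of_pos (by positivity)]
    rw [h2, h3, habs, ← ENNReal.ofReal_mul (by positivity), ← ENNReal.ofReal_mul (by positivity)]
    congr 1
    rw [div_rpow hu.le hY.le, div_rpow hw0.le hY.le]
    have hexp : exp (-(r*(u+w))) = exp (-(r*u)) * exp (-(r*w)) := by
      rw [← Real.exp_add]; ring_nf
    have hYpow : (u+w) ^ ((a+c)-1) = (u+w)^(a-1) * ((u+w)^(c-1) * (u+w)) := by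
      have he : (a+c)-1 = (a-1)+((c-1)+1) := by ring
      rw [he, Real.rpow_add hY, Real.rpow_add hY, Real.rpow_one]
    rw [hexp, hYpow]
    have n1 : (u+w)^(a-1) ≠ 0 := (Real.rpow_pos_of_pos hY _).ne'
    have n2 : (u+w)^(c-1) ≠ 0 := (Real.rpow_pos_of_pos hY _).ne'
    field_simp
  rw [setLIntegral_congr_fun_ae measurableSet_Ioi (ae_of_all _ hptwise),
    lintegral_const_mul _ (by
      apply Measurable.ennreal_ofReal
      exact (measurable_id.pow_const _).mul ((measurable_id.const_mul r).neg.exp)),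
    lintegral_rpow_exp hc hr, ← ENNReal.ofReal_mul (by positivity)]
  congr 1
  have hra : (0:ℝ) < r ^ a := Real.rpow_pos_of_pos hr a
  have hrc : (0:ℝ) < r ^ c := Real.rpow_pos_of_pos hr c
  have hrac : r ^ (a+c) = r ^ a * r ^ c := Real.rpow_add hr a c
  have hinv : (1/r) ^ c = (r ^ c)⁻¹ := by
    rw [one_div]
    exact Real.inv_rpow hr.le c
  rw [hk, hG, hrac, hinv]
  field_simp

end DKhiAux

namespace DKhiAux

theorem measurable_bdens (a c k : ℝ) :
    Measurable (fun b : ℝ => ENNReal.ofReal (k * (b ^ (a-1) * (1-b) ^ (c-1)))) := by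
  apply Measurable.ennreal_ofReal
  exact ((measurable_id.pow_const _).mul ((measurable_const.sub measurable_id).pow_const _)).const_mul _

theorem key {a c r : ℝ} (ha : 0 < a) (hc : 0 < c) (hr : 0 < r)
    {g : ℝ → ℝ≥0∞} (hg : Measurable g) :
    ∫⁻ t, (∫⁻ b, g (b * t) ∂(betaM a c)) ∂(gammaMeasure (a+c) r)
      = ∫⁻ s, g s ∂(gammaMeasure a r) := by
  have hGa := Real.Gamma_pos_of_pos ha
  have hGc := Real.Gamma_pos_of_pos hc
  have hGac := Real.Gamma_pos_of_pos (by linarith : 0 < a + c)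
  set k := Gamma (a+c) / (Gamma a * Gamma c) with hk
  set G := r ^ (a+c) / Gamma (a+c) with hG
  -- rewrite the inner integral via the beta density
  have hinner : ∀ t : ℝ, ∫⁻ b, g (b * t) ∂(betaM a c)
      = ∫⁻ b in Ioo (0:ℝ) 1, ENNReal.ofReal (k * (b ^ (a-1) * (1-b) ^ (c-1))) * g (b * t) :=
    fun t => betaM_lintegral a c (hg.comp (measurable_id.mul_const t))
  simp_rw [hinner]
  -- outer integral via the gamma density
  have hFmeas : Measurable (fun t : ℝ =>
      ∫⁻ b in Ioo (0:ℝ) 1, ENNReal.ofReal (k * (b ^ (a-1) * (1-b) ^ (c-1))) * g (b * t)) := by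
    apply Measurable.lintegral_prod_right (f := fun t b =>
      ENNReal.ofReal (k * (b ^ (a-1) * (1-b) ^ (c-1))) * g (b * t))
    exact ((measurable_bdens a c k).comp measurable_snd).mul
      (hg.comp (measurable_snd.mul measurable_fst))
  rw [lintegral_gamma_density hFmeas]
  -- move the gamma density inside the b-integral
  have hmove : ∀ t : ℝ, gammaPDF (a+c) r t *
      ∫⁻ b in Ioo (0:ℝ) 1, ENNReal.ofReal (k * (b ^ (a-1) * (1-b) ^ (c-1))) * g (b * t)
      = ∫⁻ b in Ioo (0:ℝ) 1,
          gammaPDF (a+c) r t * (ENNReal.ofReal (k * (b ^ (a-1) * (1-b) ^ (c-1))) * g (b * t)) :=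
    fun t => (lintegral_const_mul _ ((measurable_bdens a c k).mul
      (hg.comp (measurable_id.mul_const t)))).symm
  simp_rw [hmove]
  -- first swap
  rw [lintegral_lintegral_swap (by
    apply Measurable.aemeasurable
    refine (((measurable_gammaPDFReal (a+c) r).ennreal_ofReal).comp measurable_fst).mul ?_
    exact (((measurable_bdens a c k).comp measurable_snd).mul
      (hg.comp (measurable_snd.mul measurable_fst))))]
  -- transform the inner t-integral for each fixed b
  have claim1 : ∀ b ∈ Ioo (0:ℝ) 1,
      ∫⁻ t in Ioi (0:ℝ), gammaPDF (a+c) r t *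
          (ENNReal.ofReal (k * (b ^ (a-1) * (1-b) ^ (c-1))) * g (b * t))
      = ∫⁻ u in Ioi (0:ℝ),
          ENNReal.ofReal (k * (b ^ (a-1) * (1-b) ^ (c-1)) * b⁻¹ *
            (G * (u/b) ^ ((a+c)-1) * exp (-(r * (u/b))))) * g u := by
    intro b hb
    have hb0 : (0:ℝ) < b := hb.1
    rw [lintegral_scale hb0 (fun u => ENNReal.ofReal (k * (b ^ (a-1) * (1-b) ^ (c-1)) * b⁻¹ *
      (G * (u/b) ^ ((a+c)-1) * exp (-(r * (u/b))))) * g u)]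
    refine setLIntegral_congr_fun_ae measurableSet_Ioi (ae_of_all _ fun t ht => ?_)
    have ht0 : (0:ℝ) < t := ht
    have hcan : b * t / b = t := by field_simp
    rw [hcan, gammaPDF_of_nonneg ht0.le, ← mul_assoc, ← ENNReal.ofReal_mul (by positivity),
      ← mul_assoc (ENNReal.ofReal b), ← ENNReal.ofReal_mul hb.1.le]
    congr 2
    rw [hG]
    field_simp
  rw [setLIntegral_congr_fun_ae measurableSet_Ioo (ae_of_all _ claim1)]
  -- second swap
  rw [lintegral_lintegral_swap (by
    apply Measurable.aemeasurable
    refine Measurable.mul ?_ (hg.comp measurable_snd)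
    apply Measurable.ennreal_ofReal
    refine Measurable.mul ?_ ?_
    · exact (((measurable_id.pow_const _).mul
        ((measurable_const.sub measurable_id).pow_const _)).const_mul _).comp measurable_fst |>.mul
        (measurable_fst.inv)
    · refine (Measurable.const_mul ?_ G).mul ?_
      · exact (measurable_snd.div measurable_fst).pow_const _
      · exact ((measurable_snd.div measurable_fst).const_mul r).neg.exp)]
  -- pull `g u` out and evaluate the b-integral via `clubs`
  have claim2 : ∀ u ∈ Ioi (0:ℝ),
      ∫⁻ b in Ioo (0:ℝ) 1, ENNReal.ofReal (k * (b ^ (a-1) * (1-b) ^ (c-1)) * b⁻¹ *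
          (G * (u/b) ^ ((a+c)-1) * exp (-(r * (u/b))))) * g u
      = gammaPDF a r u * g u := by
    intro u hu
    have hu0 : (0:ℝ) < u := hu
    rw [lintegral_mul_const _ (by
      apply Measurable.ennreal_ofReal
      refine Measurable.mul ?_ ?_
      · exact (((measurable_id.pow_const _).mul
          ((measurable_const.sub measurable_id).pow_const _)).const_mul _).mul measurable_inv
      · refine (Measurable.const_mul ?_ G).mul ?_
        · exact (measurable_const.div measurable_id).pow_const _
        · exact ((measurable_const.div measurable_id).const_mul r).neg.exp)]
    rw [clubs ha hc hr hu0, gammaPDF_of_nonneg hu0.le]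
  rw [setLIntegral_congr_fun_ae measurableSet_Ioi (ae_of_all _ claim2),
    ← lintegral_gamma_density hg]

end DKhiAux

namespace DKhiAux

noncomputable def H (μ : Measure ℝ) (s : ℝ) : ℝ≥0∞ :=
  ∫⁻ z, ENNReal.ofReal (max (z - s) 0) ∂μ

noncomputable def hh (μ : Measure ℝ) (s : ℝ) : ℝ := (H μ s).toReal

theorem measurable_maxsub (s : ℝ) :
    Measurable (fun z : ℝ => ENNReal.ofReal (max (z - s) 0)) :=
  ((measurable_id.sub measurable_const).max measurable_const).ennreal_ofReal

section hhfacts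

variable {μ : Measure ℝ} [IsProbabilityMeasure μ]
  (hM : ∫⁻ z, ENNReal.ofReal (max z 0) ∂μ ≠ ⊤)

include hM

theorem H_ne_top (s : ℝ) : H μ s ≠ ⊤ := by
  have hb : ∀ z : ℝ, ENNReal.ofReal (max (z - s) 0)
      ≤ ENNReal.ofReal (max z 0) + ENNReal.ofReal |s| := by
    intro z
    rw [← ENNReal.ofReal_add (le_max_right z 0) (abs_nonneg s)]
    apply ENNReal.ofReal_le_ofReal
    rcases le_total (z - s) 0 with h | h
    · rw [max_eq_right h]; positivity
    · rw [max_eq_left h]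
      have : z ≤ max z 0 := le_max_left z 0
      have : -s ≤ |s| := neg_le_abs s
      linarith [le_max_left z 0]
  refine ne_top_of_le_ne_top ?_ (lintegral_mono hb)
  rw [lintegral_add_right _ measurable_const, lintegral_const, measure_univ, mul_one]
  exact ENNReal.add_ne_top.2 ⟨hM, ENNReal.ofReal_ne_top⟩

theorem hh_antitone {s s' : ℝ} (hss : s ≤ s') : hh μ s' ≤ hh μ s := by
  refine ENNReal.toReal_mono (H_ne_top hM s) (lintegral_mono fun z => ?_)
  exact ENNReal.ofReal_le_ofReal (max_le_max (by linarith) le_rfl)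

theorem hh_nonneg (s : ℝ) : 0 ≤ hh μ s := ENNReal.toReal_nonneg

theorem hh_convex : ConvexOn ℝ univ (hh μ) := by
  refine ⟨convex_univ, fun p _ q _ a b ha hb hab => ?_⟩
  simp only [smul_eq_mul]
  have hpt : ∀ z : ℝ, ENNReal.ofReal (max (z - (a * p + b * q)) 0)
      ≤ ENNReal.ofReal (a * max (z - p) 0) + ENNReal.ofReal (b * max (z - q) 0) := by
    intro z
    rw [← ENNReal.ofReal_add (by positivity) (by positivity)]
    apply ENNReal.ofReal_le_ofReal
    have hz : z - (a * p + b * q) = a * (z - p) + b * (z - q) := by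
      have : a * z + b * z = z := by rw [← add_mul, hab, one_mul]
      ring_nf
      linarith [this]
    rw [hz]
    calc max (a * (z - p) + b * (z - q)) 0 = max (a * (z - p) + b * (z - q)) (0 + 0) := by
          rw [add_zero]
      _ ≤ max (a * (z - p)) 0 + max (b * (z - q)) 0 := max_add_add_le_max_add_max
      _ = a * max (z - p) 0 + b * max (z - q) 0 := by
          rw [mul_max_of_nonneg _ _ ha, mul_max_of_nonneg _ _ hb, mul_zero, mul_zero]
  have hle : H μ (a * p + b * q) ≤ ENNReal.ofReal a * H μ p + ENNReal.ofReal b * H μ q := by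
    calc H μ (a * p + b * q) ≤ ∫⁻ z, (ENNReal.ofReal (a * max (z - p) 0)
          + ENNReal.ofReal (b * max (z - q) 0)) ∂μ := lintegral_mono hpt
      _ = (∫⁻ z, ENNReal.ofReal (a * max (z - p) 0) ∂μ)
          + ∫⁻ z, ENNReal.ofReal (b * max (z - q) 0) ∂μ := by
          exact lintegral_add_left (((measurable_id.sub measurable_const).max
            measurable_const).const_mul a).ennreal_ofReal _
      _ = ENNReal.ofReal a * H μ p + ENNReal.ofReal b * H μ q := by
          unfold H
          rw [← lintegral_const_mul _ (measurable_maxsub p),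
            ← lintegral_const_mul _ (measurable_maxsub q)]
          congr 1 <;> · refine lintegral_congr fun z => ?_
                        rw [ENNReal.ofReal_mul (by assumption)]
  have hfin : ENNReal.ofReal a * H μ p + ENNReal.ofReal b * H μ q ≠ ⊤ := by
    apply ENNReal.add_ne_top.2
    constructor <;> exact ENNReal.mul_ne_top ENNReal.ofReal_ne_top (H_ne_top hM _)
  calc hh μ (a * p + b * q) ≤ (ENNReal.ofReal a * H μ p + ENNReal.ofReal b * H μ q).toReal :=
        ENNReal.toReal_mono hfin hle
    _ = a * hh μ p + b * hh μ q := by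
        rw [ENNReal.toReal_add (ENNReal.mul_ne_top ENNReal.ofReal_ne_top (H_ne_top hM _))
          (ENNReal.mul_ne_top ENNReal.ofReal_ne_top (H_ne_top hM _)), ENNReal.toReal_mul,
          ENNReal.toReal_mul, ENNReal.toReal_ofReal ha, ENNReal.toReal_ofReal hb]
        rfl

theorem hh_continuous : Continuous (hh μ) := by
  rw [← continuousOn_univ]
  have h := (hh_convex hM).continuousOn isOpen_univ
  simpa [interior_univ] using h

theorem ofReal_hh (s : ℝ) : ENNReal.ofReal (hh μ s) = H μ s :=
  ENNReal.ofReal_toReal (H_ne_top hM s)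

end hhfacts

theorem gamma_moment_ne_top {a r : ℝ} (ha : 0 < a) (hr : 0 < r) :
    ∫⁻ z, ENNReal.ofReal (max z 0) ∂(gammaMeasure a r) ≠ ⊤ := by
  rw [lintegral_gamma_density ((measurable_id'.max measurable_const).ennreal_ofReal)]
  have hpt : ∀ z ∈ Ioi (0:ℝ), gammaPDF a r z * ENNReal.ofReal (max z 0)
      = ENNReal.ofReal (r ^ a / Gamma a) * ENNReal.ofReal (z ^ ((a+1)-1) * exp (-(r * z))) := by
    intro z hz
    have hz0 : (0:ℝ) < z := hz
    rw [gammaPDF_of_nonneg hz0.le, max_eq_left hz0.le, ← ENNReal.ofReal_mul (by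
      have := Real.Gamma_pos_of_pos ha
      have := Real.rpow_pos_of_pos hr a
      positivity)]
    rw [← ENNReal.ofReal_mul (by
      have := Real.Gamma_pos_of_pos ha
      have := Real.rpow_pos_of_pos hr a
      positivity)]
    congr 1
    have he : z ^ ((a+1)-1) = z ^ (a-1) * z := by
      have h2 : (a+1)-1 = (a-1)+1 := by ring
      rw [h2, Real.rpow_add hz0, Real.rpow_one]
    rw [he]
    ring
  rw [setLIntegral_congr_fun_ae measurableSet_Ioi (ae_of_all _ hpt),
    lintegral_const_mul _ (by
      exact ((measurable_id.pow_const _).mul ((measurable_id.const_mul r).neg.exp)).ennreal_ofReal),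
    lintegral_rpow_exp (by linarith) hr]
  exact ENNReal.mul_ne_top ENNReal.ofReal_ne_top ENNReal.ofReal_ne_top

end DKhiAux

namespace DKhiAux

variable {μ : Measure ℝ} [IsProbabilityMeasure μ]

theorem step (hM : ∫⁻ z, ENNReal.ofReal (max z 0) ∂μ ≠ ⊤) {x : ℝ} (hx : 0 < x)
    {N : ℕ} (hN : 0 < N) :
    ∫⁻ t, ENNReal.ofReal (hh μ (x * t / (N+1 : ℕ))) ∂(gammaMeasure (((N+1 : ℕ) : ℝ)/2) (1/2))
      ≤ ∫⁻ t, ENNReal.ofReal (hh μ (x * t / N)) ∂(gammaMeasure ((N : ℝ)/2) (1/2)) := by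
  set a : ℝ := (N : ℝ)/2 with hadef
  set c : ℝ := (1:ℝ)/2 with hcdef
  have hNR : (0:ℝ) < N := by exact_mod_cast hN
  have ha : 0 < a := by positivity
  have hc : 0 < c := by norm_num
  haveI : IsProbabilityMeasure (betaM a c) := betaM_prob ha hc
  have hcast : (((N+1 : ℕ) : ℝ))/2 = a + c := by push_cast; rw [hadef, hcdef]; ring
  have hgmeas : Measurable (fun s : ℝ => ENNReal.ofReal (hh μ (x * s / N))) := by
    apply Measurable.ennreal_ofReal
    exact ((hh_continuous hM).comp (by continuity : Continuous fun s : ℝ => x * s / N)).measurable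
  have hkey := key ha hc (by norm_num : (0:ℝ) < 1/2) hgmeas
  rw [hcast, ← hkey]
  refine lintegral_mono_ae ((gamma_ae_nonneg _ _).mono fun t ht => ?_)
  -- Jensen at fixed t ≥ 0
  set C : ℝ := x * t / N with hCdef
  have hC : 0 ≤ C := by positivity
  set φ : ℝ → ℝ := fun b => hh μ (C * b) with hφdef
  have hφcont : Continuous φ := (hh_continuous hM).comp (continuous_const.mul continuous_id)
  have hφconv : ConvexOn ℝ univ φ := by
    refine ⟨convex_univ, fun p _ q _ α β hα hβ hαβ => ?_⟩
    simp only [hφdef, smul_eq_mul]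
    have harg : C * (α * p + β * q) = α * (C * p) + β * (C * q) := by ring
    rw [harg]
    have := (hh_convex hM).2 (mem_univ (C * p)) (mem_univ (C * q)) hα hβ hαβ
    simpa [smul_eq_mul] using this
  have hfi : Integrable (fun b : ℝ => b) (betaM a c) := by
    refine (integrable_const (1:ℝ)).mono' measurable_id.aestronglyMeasurable ?_
    exact betaM_ae_mem.mono fun b hb => by
      rw [Real.norm_eq_abs, abs_of_pos hb.1]; exact hb.2.le
  have hgi : Integrable φ (betaM a c) := by
    refine (integrable_const (hh μ 0)).mono' hφcont.aestronglyMeasurable ?_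
    refine betaM_ae_mem.mono fun b hb => ?_
    rw [Real.norm_eq_abs, abs_of_nonneg (hh_nonneg hM _)]
    exact hh_antitone hM (mul_nonneg hC hb.1.le)
  have hjensen : φ (∫ b, b ∂(betaM a c)) ≤ ∫ b, φ b ∂(betaM a c) := by
    refine hφconv.map_integral_le (hφcont.continuousOn) isClosed_univ
      (ae_of_all _ fun b => mem_univ b) hfi ?_
    exact hgi
  have hmean : ∫ b, b ∂(betaM a c) = (N : ℝ)/(N+1) := by
    rw [betaM_integral_id ha hc, hadef, hcdef]
    field_simp
  have hargeq : x * t / ((N+1 : ℕ) : ℝ) = C * ((N : ℝ)/(N+1)) := by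
    rw [hCdef]
    push_cast
    field_simp
  calc ENNReal.ofReal (hh μ (x * t / ((N+1:ℕ) : ℝ))) = ENNReal.ofReal (φ (∫ b, b ∂(betaM a c))) := by
        rw [hargeq, hmean]
    _ ≤ ENNReal.ofReal (∫ b, φ b ∂(betaM a c)) := ENNReal.ofReal_le_ofReal hjensen
    _ = ∫⁻ b, ENNReal.ofReal (φ b) ∂(betaM a c) :=
        ofReal_integral_eq_lintegral_ofReal hgi (ae_of_all _ fun b => hh_nonneg hM _)
    _ = ∫⁻ b, ENNReal.ofReal (hh μ (x * (b * t) / N)) ∂(betaM a c) := by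
        refine lintegral_congr fun b => ?_
        rw [hφdef, hCdef]
        congr 2
        ring

theorem core (hM : ∫⁻ z, ENNReal.ofReal (max z 0) ∂μ ≠ ⊤) {x : ℝ} (hx : 0 < x)
    {N₁ N₂ : ℕ} (hN₁ : 0 < N₁) (hle : N₁ ≤ N₂) :
    ∫⁻ t, ENNReal.ofReal (hh μ (x * t / N₂)) ∂(gammaMeasure ((N₂ : ℝ)/2) (1/2))
      ≤ ∫⁻ t, ENNReal.ofReal (hh μ (x * t / N₁)) ∂(gammaMeasure ((N₁ : ℝ)/2) (1/2)) := by
  induction N₂, hle using Nat.le_induction with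
  | base => exact le_rfl
  | succ n hn ih => exact le_trans (step hM hx (lt_of_lt_of_le hN₁ hn)) ih

end DKhiAux

theorem DKhi_anti_in_N (d : ℕ) (hd : 0 < d) (x : ℝ) (hx : 0 < x)
    (N₁ N₂ : ℕ) (hN₁ : 0 < N₁) (h : N₁ ≤ N₂) :
    (1 / (d : ℝ)) *
        ∫ q : ℝ × ℝ, max (q.1 - x * q.2 / N₂) 0
          ∂((chiSqMeasure d).prod (chiSqMeasure N₂)) ≤
      (1 / (d : ℝ)) *
        ∫ q : ℝ × ℝ, max (q.1 - x * q.2 / N₁) 0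
          ∂((chiSqMeasure d).prod (chiSqMeasure N₁)) := by
  open DKhiAux in
  have hdR : (0:ℝ) < d := by exact_mod_cast hd
  set μd : Measure ℝ := gammaMeasure ((d:ℝ)/2) (1/2) with hμd
  haveI : IsProbabilityMeasure μd :=
    isProbabilityMeasure_gammaMeasure (by positivity) (by norm_num)
  have hM : ∫⁻ z, ENNReal.ofReal (max z 0) ∂μd ≠ ⊤ :=
    gamma_moment_ne_top (by positivity) (by norm_num)
  have repr : ∀ N : ℕ, 0 < N →
      ∫ q : ℝ × ℝ, max (q.1 - x * q.2 / N) 0 ∂((chiSqMeasure d).prod (chiSqMeasure N))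
        = (∫⁻ t, ENNReal.ofReal (hh μd (x * t / N)) ∂(gammaMeasure ((N:ℝ)/2) (1/2))).toReal := by
    intro N hN
    have hNR : (0:ℝ) < N := by exact_mod_cast hN
    haveI : IsProbabilityMeasure (chiSqMeasure N) :=
      isProbabilityMeasure_gammaMeasure (by positivity) (by norm_num)
    haveI : IsProbabilityMeasure (chiSqMeasure d) :=
      isProbabilityMeasure_gammaMeasure (by positivity) (by norm_num)
    have hmeas : Measurable (fun q : ℝ × ℝ => max (q.1 - x * q.2 / N) 0) :=
      ((measurable_fst.sub ((measurable_snd.const_mul x).div_const _)).max measurable_const)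
    have hconv := integral_eq_lintegral_of_nonneg_ae
      (f := fun q : ℝ × ℝ => max (q.1 - x * q.2 / N) 0)
      (μ := (chiSqMeasure d).prod (chiSqMeasure N))
      (ae_of_all _ fun q => le_max_right _ _) hmeas.aestronglyMeasurable
    rw [hconv]
    congr 1
    rw [lintegral_prod_symm _ hmeas.ennreal_ofReal.aemeasurable]
    refine lintegral_congr fun t => ?_
    exact (ofReal_hh hM (x * t / N)).symm
  rw [repr N₁ hN₁, repr N₂ (lt_of_lt_of_le hN₁ h)]
  have hfin : ∫⁻ t, ENNReal.ofReal (hh μd (x * t / N₁)) ∂(gammaMeasure ((N₁:ℝ)/2) (1/2)) ≠ ⊤ := by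
    have hN₁R : (0:ℝ) < N₁ := by exact_mod_cast hN₁
    haveI : IsProbabilityMeasure (gammaMeasure ((N₁:ℝ)/2) (1/2)) :=
      isProbabilityMeasure_gammaMeasure (by positivity) (by norm_num)
    have hb : ∫⁻ t, ENNReal.ofReal (hh μd (x * t / N₁)) ∂(gammaMeasure ((N₁:ℝ)/2) (1/2))
        ≤ ∫⁻ _t, ENNReal.ofReal (hh μd 0) ∂(gammaMeasure ((N₁:ℝ)/2) (1/2)) := by
      refine lintegral_mono_ae ((gamma_ae_nonneg _ _).mono fun t ht => ?_)
      exact ENNReal.ofReal_le_ofReal (hh_antitone hM (by positivity))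
    refine ne_top_of_le_ne_top ?_ hb
    rw [lintegral_const, measure_univ, mul_one]
    exact ENNReal.ofReal_ne_top
  have hcore := core hM hx hN₁ h (μ := μd)
  exact mul_le_mul_of_nonneg_left (ENNReal.toReal_mono hfin hcore) (by positivity)
end

section
/- For integers d ≥ 2 and N ≥ 1, the function x ↦ E[(X_d − x·X_N/N)_+] / E[(X_2 − x)_+] is nondecreasing on [d, ∞), where X_d, X_N, X_2 are chi-squared random variables with d, N, 2 degrees of freedom respectively, with X_d and X_N independent. -/
open MeasureTheory ProbabilityTheory Real

namespace ChiAux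

open Set Filter Topology
open scoped ENNReal NNReal

noncomputable def pdf (k : ℕ) : ℝ → ℝ := gammaPDFReal ((k : ℝ) / 2) (1 / 2)

lemma half_pos' {k : ℕ} (hk : 1 ≤ k) : 0 < (k : ℝ) / 2 := by
  have : (1 : ℝ) ≤ (k : ℝ) := by exact_mod_cast hk
  linarith

lemma chiSq_eq (k : ℕ) :
    chiSqMeasure k = volume.withDensity fun u => ENNReal.ofReal (pdf k u) := rfl

lemma measurable_pdf (k : ℕ) : Measurable (pdf k) := measurable_gammaPDFReal _ _

lemma pdf_nonneg {k : ℕ} (hk : 1 ≤ k) (u : ℝ) : 0 ≤ pdf k u :=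
  gammaPDFReal_nonneg (half_pos' hk) (by norm_num) u

lemma pdf_of_neg {k : ℕ} {u : ℝ} (hu : u < 0) : pdf k u = 0 := by
  rw [pdf, gammaPDFReal, if_neg (not_le.mpr hu)]

lemma chiSq_prob (k : ℕ) (hk : 1 ≤ k) : IsProbabilityMeasure (chiSqMeasure k) :=
  isProbabilityMeasure_gammaMeasure (half_pos' hk) (by norm_num)

lemma lintegral_pdf (k : ℕ) (hk : 1 ≤ k) :
    ∫⁻ u, ENNReal.ofReal (pdf k u) = 1 :=
  lintegral_gammaPDF_eq_one (half_pos' hk) (by norm_num)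

lemma integrable_pdf {k : ℕ} (hk : 1 ≤ k) : Integrable (pdf k) := by
  refine ⟨(measurable_pdf k).aestronglyMeasurable, ?_⟩
  rw [hasFiniteIntegral_iff_ofReal (ae_of_all _ (pdf_nonneg hk))]
  rw [lintegral_pdf k hk]
  exact ENNReal.one_lt_top

lemma integral_pdf {k : ℕ} (hk : 1 ≤ k) : ∫ u, pdf k u = 1 := by
  rw [integral_eq_lintegral_of_nonneg_ae (ae_of_all _ (pdf_nonneg hk))
    (measurable_pdf k).aestronglyMeasurable, lintegral_pdf k hk, ENNReal.toReal_one]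

lemma integral_chiSq {k : ℕ} (hk : 1 ≤ k) (g : ℝ → ℝ) :
    ∫ u, g u ∂(chiSqMeasure k) = ∫ u, pdf k u * g u := by
  rw [chiSq_eq,
    show (fun u => ENNReal.ofReal (pdf k u)) = fun u => (((pdf k u).toNNReal : ℝ≥0) : ℝ≥0∞)
      from rfl,
    integral_withDensity_eq_integral_smul (measurable_pdf k).real_toNNReal]
  refine integral_congr_ae (ae_of_all _ fun u => ?_)
  simp [NNReal.smul_def, Real.coe_toNNReal _ (pdf_nonneg hk u)]

lemma integrable_chiSq_iff {k : ℕ} (hk : 1 ≤ k) (g : ℝ → ℝ) :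
    Integrable g (chiSqMeasure k) ↔ Integrable (fun u => pdf k u * g u) volume := by
  rw [chiSq_eq,
    show (fun u => ENNReal.ofReal (pdf k u)) = fun u => (((pdf k u).toNNReal : ℝ≥0) : ℝ≥0∞)
      from rfl,
    integrable_withDensity_iff_integrable_smul (measurable_pdf k).real_toNNReal]
  refine integrable_congr (ae_of_all _ fun u => ?_)
  simp [NNReal.smul_def, Real.coe_toNNReal _ (pdf_nonneg hk u)]

noncomputable def tail (k : ℕ) (t : ℝ) : ℝ := ((chiSqMeasure k) (Ioi t)).toReal

lemma chiSq_apply (k : ℕ) {s : Set ℝ} (hs : MeasurableSet s) :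
    chiSqMeasure k s = ∫⁻ u in s, ENNReal.ofReal (pdf k u) := by
  rw [chiSq_eq, withDensity_apply _ hs]

lemma chiSq_apply_eq_ofReal {k : ℕ} (hk : 1 ≤ k) {s : Set ℝ} (hs : MeasurableSet s) :
    chiSqMeasure k s = ENNReal.ofReal (∫ u in s, pdf k u) := by
  rw [chiSq_apply k hs,
    ofReal_integral_eq_lintegral_ofReal (integrable_pdf hk).integrableOn
      (ae_of_all _ (pdf_nonneg hk))]

lemma tail_eq {k : ℕ} (hk : 1 ≤ k) (t : ℝ) : tail k t = ∫ u in Ioi t, pdf k u := by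
  rw [tail, chiSq_apply_eq_ofReal hk measurableSet_Ioi,
    ENNReal.toReal_ofReal (setIntegral_nonneg measurableSet_Ioi fun u _ => pdf_nonneg hk u)]

lemma tail_nonneg (k : ℕ) (t : ℝ) : 0 ≤ tail k t := ENNReal.toReal_nonneg

lemma tail_le_one {k : ℕ} (hk : 1 ≤ k) (t : ℝ) : tail k t ≤ 1 := by
  haveI := chiSq_prob k hk
  have h := prob_le_one (μ := chiSqMeasure k) (s := Ioi t)
  have := ENNReal.toReal_mono ENNReal.one_ne_top h
  simpa [tail] using this

lemma tail_anti {k : ℕ} (hk : 1 ≤ k) : Antitone (tail k) := by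
  haveI := chiSq_prob k hk
  intro s t hst
  exact ENNReal.toReal_mono (measure_ne_top _ _) (measure_mono (Ioi_subset_Ioi hst))

lemma chiSq_Iio_zero (k : ℕ) : chiSqMeasure k (Iio 0) = 0 := by
  rw [chiSq_apply k measurableSet_Iio]
  rw [setLIntegral_congr_fun_ae measurableSet_Iio
    (ae_of_all _ (fun u (hu : u < 0) => by rw [pdf_of_neg hu, ENNReal.ofReal_zero]))]
  simp

lemma chiSq_ae_nonneg (k : ℕ) : ∀ᵐ u ∂(chiSqMeasure k), 0 ≤ u := by
  rw [ae_iff]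
  refine measure_mono_null (fun u hu => ?_) (chiSq_Iio_zero k)
  simpa using not_le.mp hu

lemma chiSq_singleton (k : ℕ) (t : ℝ) : chiSqMeasure k {t} = 0 := by
  rw [chiSq_apply k (measurableSet_singleton t)]
  exact setLIntegral_measure_zero _ _ Real.volume_singleton

lemma pdf_id_eq {k : ℕ} (hk : 1 ≤ k) (u : ℝ) :
    u * pdf k u = (k : ℝ) * pdf (k + 2) u := by
  have ha : 0 < (k : ℝ) / 2 := half_pos' hk
  have ha' : ((k + 2 : ℕ) : ℝ) / 2 = (k : ℝ) / 2 + 1 := by push_cast; ring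
  rcases lt_trichotomy u 0 with hu | hu | hu
  · rw [pdf_of_neg hu, pdf_of_neg hu, mul_zero, mul_zero]
  · subst hu
    rw [pdf, pdf, gammaPDFReal, gammaPDFReal, if_pos le_rfl, if_pos le_rfl, ha']
    rw [show (k : ℝ) / 2 + 1 - 1 = (k : ℝ) / 2 by ring, Real.zero_rpow ha.ne']
    ring
  · rw [pdf, pdf, gammaPDFReal, gammaPDFReal, if_pos hu.le, if_pos hu.le, ha']
    rw [Real.Gamma_add_one ha.ne', Real.rpow_add_one (by norm_num : (1:ℝ)/2 ≠ 0),
      add_sub_cancel_right,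
      ]
    have hu' : u ^ ((k:ℝ)/2) = u ^ ((k:ℝ)/2 - 1) * u := by
      rw [← Real.rpow_add_one hu.ne']; ring_nf
    rw [hu']
    have hΓ : Real.Gamma ((k:ℝ)/2) ≠ 0 := (Real.Gamma_pos_of_pos ha).ne'
    field_simp

lemma integrable_id {k : ℕ} (hk : 1 ≤ k) : Integrable (fun u : ℝ => u) (chiSqMeasure k) := by
  rw [integrable_chiSq_iff hk]
  have : (fun u : ℝ => pdf k u * u) = fun u => (k : ℝ) * pdf (k + 2) u := by
    funext u; rw [mul_comm, pdf_id_eq hk u]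
  rw [this]
  exact (integrable_pdf (by omega)).const_mul _

lemma integral_id {k : ℕ} (hk : 1 ≤ k) : ∫ u, u ∂(chiSqMeasure k) = (k : ℝ) := by
  rw [integral_chiSq hk]
  have : (fun u : ℝ => pdf k u * u) = fun u => (k : ℝ) * pdf (k + 2) u := by
    funext u; rw [mul_comm, pdf_id_eq hk u]
  rw [this, integral_const_mul, integral_pdf (k := k + 2) (by omega), mul_one]

noncomputable def G (k : ℕ) (t : ℝ) : ℝ := ∫ u, max (u - t) 0 ∂(chiSqMeasure k)

lemma integrable_max {k : ℕ} (hk : 1 ≤ k) (t : ℝ) :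
    Integrable (fun u => max (u - t) 0) (chiSqMeasure k) := by
  haveI := chiSq_prob k hk
  refine ((integrable_id hk).abs.add (integrable_const |t|)).mono'
    (((continuous_id.sub continuous_const).max continuous_const).aestronglyMeasurable)
    (ae_of_all _ fun u => ?_)
  rw [Real.norm_eq_abs, abs_of_nonneg (le_max_right _ _)]
  have h1 : u - t ≤ |u| + |t| := by
    have := abs_add_le u (-t)
    have h2 := le_abs_self (u + -t)
    rw [abs_neg] at this
    linarith
  exact max_le h1 (add_nonneg (abs_nonneg u) (abs_nonneg t))

lemma G_nonneg (k : ℕ) (t : ℝ) : 0 ≤ G k t :=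
  integral_nonneg fun u => le_max_right _ _

lemma G_lip {k : ℕ} (hk : 1 ≤ k) : LipschitzWith 1 (G k) := by
  haveI := chiSq_prob k hk
  apply LipschitzWith.of_dist_le_mul
  intro s t
  rw [Real.dist_eq, Real.dist_eq, NNReal.coe_one, one_mul]
  have h1 : G k s - G k t = ∫ u, (max (u - s) 0 - max (u - t) 0) ∂(chiSqMeasure k) := by
    rw [integral_sub (integrable_max hk s) (integrable_max hk t)]; rfl
  calc |G k s - G k t| = ‖∫ u, (max (u - s) 0 - max (u - t) 0) ∂(chiSqMeasure k)‖ := by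
        rw [h1, Real.norm_eq_abs]
    _ ≤ ∫ u, ‖max (u - s) 0 - max (u - t) 0‖ ∂(chiSqMeasure k) :=
        norm_integral_le_integral_norm _
    _ ≤ ∫ _u, |s - t| ∂(chiSqMeasure k) := by
        refine integral_mono_ae ((integrable_max hk s).sub (integrable_max hk t)).norm
          (integrable_const _) (ae_of_all _ fun u => ?_)
        simp only [Real.norm_eq_abs]
        calc |max (u - s) 0 - max (u - t) 0| ≤ |u - s - (u - t)| :=
              abs_max_sub_max_le_abs (u - s) (u - t) 0
          _ = |s - t| := by rw [abs_sub_comm]; ring_nf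
    _ = |s - t| := by simp

lemma G_le {k : ℕ} (hk : 1 ≤ k) (t : ℝ) : G k t ≤ G k 0 + |t| := by
  have h := (G_lip hk).dist_le_mul t 0
  rw [Real.dist_eq, Real.dist_eq, NNReal.coe_one, one_mul, sub_zero] at h
  linarith [le_abs_self (G k t - G k 0), h]

lemma exp_int (c : ℝ) : ∫ s in Ioi c, Real.exp (-s / 2) = 2 * Real.exp (-c / 2) := by
  have hderiv : ∀ x ∈ Ioi c, HasDerivAt (fun s => -2 * Real.exp (-s / 2))
      (Real.exp (-x / 2)) x := by
    intro x _
    have h1 : HasDerivAt (fun s : ℝ => -s / 2) (-1 / 2 : ℝ) x := by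
      simpa using ((hasDerivAt_id x).neg.div_const 2)
    have := (h1.exp).const_mul (-2 : ℝ)
    convert this using 1
    all_goals first | rfl | ring
  have hint : IntegrableOn (fun s : ℝ => Real.exp (-s / 2)) (Ioi c) := by
    refine (exp_neg_integrableOn_Ioi c (by norm_num : (0:ℝ) < 1/2)).congr_fun
      (fun s _ => by dsimp only; rw [show -(1/2 : ℝ) * s = -s / 2 by ring]) measurableSet_Ioi
  have htends : Tendsto (fun s : ℝ => -2 * Real.exp (-s / 2)) atTop (nhds 0) := by
    have h2 : Tendsto (fun s : ℝ => s / 2) atTop atTop :=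
      Tendsto.atTop_div_const (by norm_num) tendsto_id
    have h3 : Tendsto (fun s : ℝ => Real.exp (-s / 2)) atTop (nhds 0) := by
      have h4 := Real.tendsto_exp_neg_atTop_nhds_zero.comp h2
      exact Filter.Tendsto.congr (fun s => by simp only [Function.comp_apply]; rw [neg_div]) h4
    have := h3.const_mul (-2 : ℝ)
    simpa using this
  have := integral_Ioi_of_hasDerivAt_of_tendsto
    (Continuous.continuousWithinAt (by continuity)) hderiv hint htends
  rw [this]
  ring

lemma pdf_shift {k : ℕ} (h2 : 2 ≤ k) {w s : ℝ} (hw : 0 ≤ w) (hs : 0 ≤ s) :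
    Real.exp (-s / 2) * pdf k w ≤ pdf k (w + s) := by
  have ha : (1 : ℝ) ≤ (k : ℝ) / 2 := by
    have : (2 : ℝ) ≤ (k : ℝ) := by exact_mod_cast h2
    linarith
  simp only [pdf, gammaPDFReal]
  rw [if_pos hw, if_pos (show (0:ℝ) ≤ w + s by linarith)]
  have hC : 0 ≤ (1/2 : ℝ) ^ ((k:ℝ)/2) / Real.Gamma ((k:ℝ)/2) := by
    have := Real.Gamma_pos_of_pos (by linarith : (0:ℝ) < (k:ℝ)/2)
    positivity
  have hpow : w ^ ((k:ℝ)/2 - 1) ≤ (w + s) ^ ((k:ℝ)/2 - 1) :=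
    Real.rpow_le_rpow hw (by linarith) (by linarith)
  have hexp : Real.exp (-(1/2 * (w + s))) = Real.exp (-(1/2 * w)) * Real.exp (-s / 2) := by
    rw [← Real.exp_add]; ring_nf
  rw [hexp]
  have key := mul_le_mul_of_nonneg_left hpow
    (mul_nonneg (mul_nonneg hC (Real.exp_pos (-(1/2 * w))).le) (Real.exp_pos (-s/2)).le)
  nlinarith [key]

lemma tail_shift {k : ℕ} (h2 : 2 ≤ k) {t s : ℝ} (ht : 0 ≤ t) (hs : 0 ≤ s) :
    Real.exp (-s / 2) * tail k t ≤ tail k (t + s) := by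
  have hk : 1 ≤ k := by omega
  rw [tail_eq hk, tail_eq hk]
  have key : ∫ u in Ioi (t + s), pdf k u = ∫ u in Ioi t, pdf k (u + s) := by
    rw [← MeasureTheory.integral_indicator measurableSet_Ioi,
      ← MeasureTheory.integral_indicator (measurableSet_Ioi (a := t)),
      ← MeasureTheory.integral_add_right_eq_self
        (fun u => (Ioi (t + s)).indicator (pdf k) u) s]
    refine integral_congr_ae (ae_of_all _ fun u => ?_)
    simp only [Set.indicator_apply, mem_Ioi, add_lt_add_iff_right]
  rw [key]
  have h1 : Real.exp (-s/2) * ∫ u in Ioi t, pdf k u =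
      ∫ u in Ioi t, Real.exp (-s/2) * pdf k u := by
    rw [integral_const_mul]
  rw [h1]
  refine setIntegral_mono_on
    ((integrable_pdf hk).integrableOn.const_mul _)
    (((integrable_pdf hk).comp_add_right s).integrableOn)
    measurableSet_Ioi fun u hu => ?_
  exact pdf_shift h2 (le_trans ht (le_of_lt hu)) hs

lemma G_eq {k : ℕ} (hk : 1 ≤ k) (t : ℝ) :
    G k t = ∫ s in Ioi 0, tail k (t + s) := by
  rw [G, (integrable_max hk t).integral_eq_integral_meas_lt
    (ae_of_all _ fun u => le_max_right _ _)]
  refine setIntegral_congr_fun measurableSet_Ioi fun s hs => ?_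
  have : {a : ℝ | s < max (a - t) 0} = Ioi (t + s) := by
    ext u
    simp only [mem_setOf_eq, mem_Ioi, lt_max_iff]
    constructor
    · rintro (h | h)
      · linarith
      · exact absurd h (not_lt.mpr (le_of_lt hs))
    · intro h; left; linarith
  rw [this]; rfl

lemma keyP {k : ℕ} (h2 : 2 ≤ k) {t : ℝ} (ht : 0 ≤ t) : 2 * tail k t ≤ G k t := by
  have hk : 1 ≤ k := by omega
  haveI := chiSq_prob k hk
  rw [← ENNReal.ofReal_le_ofReal_iff (G_nonneg k t)]
  have hofG : ENNReal.ofReal (G k t) = ∫⁻ s in Ioi 0, chiSqMeasure k (Ioi (t + s)) := by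
    have e1 : ENNReal.ofReal (G k t)
        = ∫⁻ u, ENNReal.ofReal (max (u - t) 0) ∂(chiSqMeasure k) :=
      ofReal_integral_eq_lintegral_ofReal (integrable_max hk t)
        (ae_of_all _ fun u => le_max_right _ _)
    have e2 : ∫⁻ u, ENNReal.ofReal (max (u - t) 0) ∂(chiSqMeasure k)
        = ∫⁻ s in Ioi 0, chiSqMeasure k {a : ℝ | s < max (a - t) 0} :=
      lintegral_eq_lintegral_meas_lt _ (ae_of_all _ fun u => le_max_right _ _)
        ((show Measurable fun u : ℝ => max (u - t) 0
          from (measurable_id'.sub measurable_const).max measurable_const).aemeasurable)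
    rw [e1, e2]
    refine setLIntegral_congr_fun_ae measurableSet_Ioi (ae_of_all _ fun s hs => ?_)
    congr 1
    ext u
    simp only [mem_setOf_eq, mem_Ioi, lt_max_iff]
    constructor
    · rintro (h | h)
      · linarith
      · exact absurd h (not_lt.mpr (le_of_lt hs))
    · intro h; left; linarith
  rw [hofG]
  have hmeas : Measurable fun s : ℝ => chiSqMeasure k (Ioi (t + s)) :=
    Antitone.measurable fun a b hab => measure_mono (Ioi_subset_Ioi (by linarith))
  have hExpInt : IntegrableOn (fun s : ℝ => Real.exp (-s / 2)) (Ioi 0) := by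
    refine (exp_neg_integrableOn_Ioi (0:ℝ) (by norm_num : (0:ℝ) < 1/2)).congr_fun
      (fun s _ => by dsimp only; rw [show -(1/2 : ℝ) * s = -s / 2 by ring]) measurableSet_Ioi
  have hExpVal : ∫ s in Ioi (0:ℝ), Real.exp (-s / 2) = 2 := by
    simpa using exp_int 0
  calc ENNReal.ofReal (2 * tail k t)
      = (∫⁻ s in Ioi 0, ENNReal.ofReal (Real.exp (-s / 2))) * ENNReal.ofReal (tail k t) := by
        rw [← ofReal_integral_eq_lintegral_ofReal hExpInt
          (ae_of_all _ fun s => (Real.exp_pos _).le), hExpVal,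
          ← ENNReal.ofReal_mul (by norm_num : (0:ℝ) ≤ 2)]
    _ = ∫⁻ s in Ioi 0, ENNReal.ofReal (Real.exp (-s / 2)) * ENNReal.ofReal (tail k t) := by
        rw [lintegral_mul_const _ (show Measurable fun s : ℝ => ENNReal.ofReal (Real.exp (-s/2))
          from (Real.measurable_exp.comp ((measurable_id'.neg).div_const 2)).ennreal_ofReal)]
    _ ≤ ∫⁻ s in Ioi 0, chiSqMeasure k (Ioi (t + s)) := by
        refine setLIntegral_mono hmeas fun s hs => ?_
        rw [← ENNReal.ofReal_mul (Real.exp_pos _).le]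
        calc ENNReal.ofReal (Real.exp (-s/2) * tail k t)
            ≤ ENNReal.ofReal (tail k (t + s)) :=
              ENNReal.ofReal_le_ofReal (tail_shift h2 ht (le_of_lt hs))
          _ = chiSqMeasure k (Ioi (t + s)) := ENNReal.ofReal_toReal (measure_ne_top _ _)

lemma G_deriv {k : ℕ} (hk : 1 ≤ k) (t₀ : ℝ) : HasDerivAt (G k) (-(tail k t₀)) t₀ := by
  haveI := chiSq_prob k hk
  have hmeas : ∀ᶠ x in nhds t₀, AEStronglyMeasurable (fun u : ℝ => max (u - x) 0)
      (chiSqMeasure k) :=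
    Filter.Eventually.of_forall fun x =>
      (show Measurable fun u : ℝ => max (u - x) 0
        from (measurable_id'.sub measurable_const).max measurable_const).aestronglyMeasurable
  have hF'meas : AEStronglyMeasurable (fun u : ℝ => (Ioi t₀).indicator (fun _ => (-1 : ℝ)) u)
      (chiSqMeasure k) :=
    (measurable_const.indicator measurableSet_Ioi).aestronglyMeasurable
  have hlip : ∀ᵐ u ∂(chiSqMeasure k), LipschitzOnWith (Real.nnabs 1)
      (fun t => max (u - t) 0) (Metric.ball t₀ 1) := by
    refine ae_of_all _ fun u => ?_
    refine LipschitzWith.lipschitzOnWith (LipschitzWith.of_dist_le_mul fun x y => ?_)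
    rw [Real.dist_eq, Real.dist_eq, Real.coe_nnabs, abs_one, one_mul]
    have h := abs_max_sub_max_le_abs (u - x) (u - y) 0
    have h2 : u - x - (u - y) = y - x := by ring
    rw [h2, abs_sub_comm y x] at h
    exact h
  have hderiv : ∀ᵐ u ∂(chiSqMeasure k), HasDerivAt (fun t => max (u - t) 0)
      ((Ioi t₀).indicator (fun _ => (-1 : ℝ)) u) t₀ := by
    rw [ae_iff]
    refine measure_mono_null (fun u hu => ?_) (chiSq_singleton k t₀)
    simp only [mem_setOf_eq] at hu
    by_contra hne
    apply hu
    have hne' : u ≠ t₀ := by simpa using hne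
    rcases lt_or_gt_of_ne hne' with hlt | hgt
    · have hev : (fun t => max (u - t) 0) =ᶠ[nhds t₀] fun _ => (0 : ℝ) := by
        filter_upwards [isOpen_Ioi.mem_nhds (show u < t₀ from hlt)] with x hx
        exact max_eq_right (by simp only [mem_Ioi] at hx; linarith)
      rw [Set.indicator_of_notMem (by simp only [mem_Ioi]; linarith)]
      exact (hasDerivAt_const t₀ (0 : ℝ)).congr_of_eventuallyEq hev
    · have hev : (fun t => max (u - t) 0) =ᶠ[nhds t₀] fun t => u - t := by
        filter_upwards [isOpen_Iio.mem_nhds (show t₀ < u from hgt)] with x hx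
        exact max_eq_left (by simp only [mem_Iio] at hx; linarith)
      rw [Set.indicator_of_mem (by simpa [mem_Ioi] using hgt)]
      have hd : HasDerivAt (fun t : ℝ => u - t) (-1 : ℝ) t₀ := by
        simpa using (hasDerivAt_id t₀).const_sub u
      exact hd.congr_of_eventuallyEq hev
  have h := hasDerivAt_integral_of_dominated_loc_of_lip (s := Metric.ball t₀ 1)
    (F := fun (t : ℝ) (u : ℝ) => max (u - t) 0)
    (F' := fun u => (Ioi t₀).indicator (fun _ => (-1 : ℝ)) u)
    (bound := fun _ => (1 : ℝ))
    (Metric.ball_mem_nhds t₀ one_pos) hmeas (integrable_max hk t₀) hF'meas hlip (integrable_const 1) hderiv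
  have h2 := h.2
  have h3 : ∫ u, (Ioi t₀).indicator (fun _ => (-1 : ℝ)) u ∂(chiSqMeasure k) = -(tail k t₀) := by
    rw [integral_indicator_const (-1 : ℝ) measurableSet_Ioi, smul_eq_mul, tail, measureReal_def]
    ring
  rw [h3] at h2
  exact h2

noncomputable def Num (d N : ℕ) (x : ℝ) : ℝ := ∫ v, G d (x * v / N) ∂(chiSqMeasure N)

lemma meas_tail_comp {d : ℕ} (hd : 1 ≤ d) (x : ℝ) (N : ℕ) :
    Measurable fun v : ℝ => tail d (x * v / N) :=
  (tail_anti hd).measurable.comp ((measurable_id'.const_mul x).div_const _)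

lemma integrable_G_comp {d N : ℕ} (hd : 1 ≤ d) (hN : 1 ≤ N) (x : ℝ) :
    Integrable (fun v => G d (x * v / N)) (chiSqMeasure N) := by
  haveI := chiSq_prob N hN
  refine Integrable.mono'
    ((integrable_const (G d 0)).add ((integrable_id hN).abs.const_mul (|x| / (N : ℝ))))
    (((G_lip hd).continuous.comp
      ((continuous_const.mul continuous_id).div_const _)).aestronglyMeasurable)
    (ae_of_all _ fun v => ?_)
  rw [Real.norm_eq_abs, abs_of_nonneg (G_nonneg _ _)]
  calc G d (x * v / N) ≤ G d 0 + |x * v / N| := G_le hd _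
    _ = G d 0 + |x| / N * |v| := by rw [abs_div, abs_mul, Nat.abs_cast]; ring

lemma Num_deriv {d N : ℕ} (hd : 1 ≤ d) (hN : 1 ≤ N) (x₀ : ℝ) :
    HasDerivAt (Num d N)
      (∫ v, -(tail d (x₀ * v / N)) * (v / N) ∂(chiSqMeasure N)) x₀ := by
  haveI := chiSq_prob N hN
  have hmeas : ∀ᶠ x in nhds x₀,
      AEStronglyMeasurable (fun v : ℝ => G d (x * v / N)) (chiSqMeasure N) :=
    Filter.Eventually.of_forall fun x =>
      (((G_lip hd).continuous.comp
        ((continuous_const.mul continuous_id).div_const _))).aestronglyMeasurable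
  have hF'meas : AEStronglyMeasurable (fun v : ℝ => -(tail d (x₀ * v / N)) * (v / N))
      (chiSqMeasure N) :=
    ((meas_tail_comp hd x₀ N).neg.mul (measurable_id'.div_const _)).aestronglyMeasurable
  have hlip : ∀ᵐ v ∂(chiSqMeasure N), LipschitzOnWith (Real.nnabs (|v| / N))
      (fun x => G d (x * v / N)) (Metric.ball x₀ 1) := by
    refine ae_of_all _ fun v => ?_
    refine LipschitzWith.lipschitzOnWith (LipschitzWith.of_dist_le_mul fun x y => ?_)
    have h1 := (G_lip hd).dist_le_mul (x * v / N) (y * v / N)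
    rw [NNReal.coe_one, one_mul] at h1
    refine h1.trans ?_
    rw [Real.dist_eq, Real.dist_eq, Real.coe_nnabs,
      show x * v / N - y * v / N = v / N * (x - y) by ring, abs_mul]
    have h2 : |v / (N : ℝ)| = abs (|v| / (N : ℝ)) := by
      rw [abs_div, abs_div, Nat.abs_cast, abs_abs]
    rw [h2]
  have hbound : Integrable (fun v : ℝ => |v| / N) (chiSqMeasure N) :=
    (integrable_id hN).abs.div_const _
  have hderiv : ∀ᵐ v ∂(chiSqMeasure N), HasDerivAt (fun x => G d (x * v / N))
      (-(tail d (x₀ * v / N)) * (v / N)) x₀ := by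
    refine ae_of_all _ fun v => ?_
    have h1 : HasDerivAt (fun x : ℝ => x * v / N) (v / N) x₀ := by
      simpa using ((hasDerivAt_id x₀).mul_const v).div_const (N : ℝ)
    have := (G_deriv hd (x₀ * v / N)).comp x₀ h1
    simpa [Function.comp_def] using this
  exact (hasDerivAt_integral_of_dominated_loc_of_lip (s := Metric.ball x₀ 1) (Metric.ball_mem_nhds x₀ one_pos) hmeas
    (integrable_G_comp hd hN x₀) hF'meas hlip hbound hderiv).2

lemma chebyshev {μ : Measure ℝ} [IsProbabilityMeasure μ] {f h : ℝ → ℝ}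
    (hfa : Antitone f) (hha : Antitone h) (hfi : Integrable f μ) (hhi : Integrable h μ)
    (hfhi : Integrable (fun v => f v * h v) μ) :
    (∫ v, f v ∂μ) * ∫ v, h v ∂μ ≤ ∫ v, f v * h v ∂μ := by
  have key : 0 ≤ ∫ z : ℝ × ℝ, (f z.1 - f z.2) * (h z.1 - h z.2) ∂(μ.prod μ) := by
    refine integral_nonneg fun z => ?_
    show (0 : ℝ) ≤ (f z.1 - f z.2) * (h z.1 - h z.2)
    rcases le_total z.1 z.2 with hz | hz
    · have h1 := hfa hz; have h2 := hha hz
      nlinarith [mul_nonneg (show (0:ℝ) ≤ f z.1 - f z.2 by linarith)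
        (show (0:ℝ) ≤ h z.1 - h z.2 by linarith)]
    · have h1 := hfa hz; have h2 := hha hz
      nlinarith [mul_nonneg (show (0:ℝ) ≤ f z.2 - f z.1 by linarith)
        (show (0:ℝ) ≤ h z.2 - h z.1 by linarith)]
  have h1 : Integrable (fun z : ℝ × ℝ => f z.1 * h z.1) (μ.prod μ) := by
    simpa using hfhi.mul_prod (integrable_const (1 : ℝ))
  have h2 : Integrable (fun z : ℝ × ℝ => f z.2 * h z.2) (μ.prod μ) := by
    simpa using (integrable_const (1 : ℝ)).mul_prod hfhi
  have h3 : Integrable (fun z : ℝ × ℝ => f z.1 * h z.2) (μ.prod μ) := hfi.mul_prod hhi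
  have h4 : Integrable (fun z : ℝ × ℝ => f z.2 * h z.1) (μ.prod μ) :=
    (hhi.mul_prod hfi).congr (ae_of_all _ fun z => mul_comm _ _)
  have expand : (fun z : ℝ × ℝ => (f z.1 - f z.2) * (h z.1 - h z.2))
      = fun z : ℝ × ℝ => (f z.1 * h z.1 + f z.2 * h z.2)
        - (f z.1 * h z.2 + f z.2 * h z.1) := funext fun z => by ring
  have h12 : Integrable (fun z : ℝ × ℝ => f z.1 * h z.1 + f z.2 * h z.2) (μ.prod μ) :=
    h1.add h2
  have h34 : Integrable (fun z : ℝ × ℝ => f z.1 * h z.2 + f z.2 * h z.1) (μ.prod μ) :=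
    h3.add h4
  rw [expand, integral_sub h12 h34, integral_add h1 h2, integral_add h3 h4] at key
  have e1 : ∫ z : ℝ × ℝ, f z.1 * h z.1 ∂(μ.prod μ) = ∫ v, f v * h v ∂μ := by
    have := integral_prod_mul (μ := μ) (ν := μ) (fun v => f v * h v) (fun _ => (1 : ℝ))
    simpa using this
  have e2 : ∫ z : ℝ × ℝ, f z.2 * h z.2 ∂(μ.prod μ) = ∫ v, f v * h v ∂μ := by
    have := integral_prod_mul (μ := μ) (ν := μ) (fun _ => (1 : ℝ)) (fun v => f v * h v)
    simpa using this
  have e3 : ∫ z : ℝ × ℝ, f z.1 * h z.2 ∂(μ.prod μ) = (∫ v, f v ∂μ) * ∫ v, h v ∂μ :=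
    integral_prod_mul f h
  have e4 : ∫ z : ℝ × ℝ, f z.2 * h z.1 ∂(μ.prod μ) = (∫ v, f v ∂μ) * ∫ v, h v ∂μ := by
    rw [show (fun z : ℝ × ℝ => f z.2 * h z.1) = fun z : ℝ × ℝ => h z.1 * f z.2
      from funext fun z => mul_comm _ _, integral_prod_mul h f]
    ring
  rw [e1, e2, e3, e4] at key
  linarith

lemma key_ineq {d N : ℕ} (hd2 : 2 ≤ d) (hN : 1 ≤ N) {x : ℝ} (hx : 0 ≤ x) :
    2 * ∫ v, tail d (x * v / N) * (v / N) ∂(chiSqMeasure N) ≤ Num d N x := by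
  have hd1 : 1 ≤ d := by omega
  haveI := chiSq_prob N hN
  have hNpos : (0 : ℝ) < N := by exact_mod_cast hN
  have htail_int : Integrable (fun v => tail d (x * v / N)) (chiSqMeasure N) := by
    refine Integrable.mono' (integrable_const 1)
      (meas_tail_comp hd1 x N).aestronglyMeasurable (ae_of_all _ fun v => ?_)
    rw [Real.norm_eq_abs, abs_of_nonneg (tail_nonneg _ _)]
    exact tail_le_one hd1 _
  have hvtail_int : Integrable (fun v => tail d (x * v / N) * (v / N)) (chiSqMeasure N) := by
    refine Integrable.mono' ((integrable_id hN).abs.div_const N)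
      ((meas_tail_comp hd1 x N).mul (measurable_id'.div_const _)).aestronglyMeasurable
      (ae_of_all _ fun v => ?_)
    rw [Real.norm_eq_abs, abs_mul]
    calc |tail d (x * v / N)| * |v / (N : ℝ)| ≤ 1 * |v / (N : ℝ)| := by
          refine mul_le_mul_of_nonneg_right ?_ (abs_nonneg _)
          rw [abs_of_nonneg (tail_nonneg _ _)]; exact tail_le_one hd1 _
      _ = |v| / N := by rw [one_mul, abs_div, Nat.abs_cast]
  have step1 : 2 * ∫ v, tail d (x * v / N) ∂(chiSqMeasure N) ≤ Num d N x := by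
    rw [show (2 : ℝ) * ∫ v, tail d (x * v / N) ∂(chiSqMeasure N)
      = ∫ v, 2 * tail d (x * v / N) ∂(chiSqMeasure N) from (integral_const_mul _ _).symm]
    refine integral_mono_ae (htail_int.const_mul 2) (integrable_G_comp hd1 hN x) ?_
    filter_upwards [chiSq_ae_nonneg N] with v hv
    exact keyP hd2 (by positivity)
  have hf_anti : Antitone fun v : ℝ => 1 - v / N := by
    intro a b hab
    simp only
    have : a / N ≤ b / N := by gcongr
    linarith
  have hh_anti : Antitone fun v : ℝ => tail d (x * v / N) := by
    intro a b hab
    exact tail_anti hd1 (by gcongr)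
  have hf_int : Integrable (fun v : ℝ => 1 - v / N) (chiSqMeasure N) :=
    (integrable_const 1).sub ((integrable_id hN).div_const _)
  have hfh_int : Integrable (fun v : ℝ => (1 - v / N) * tail d (x * v / N)) (chiSqMeasure N) := by
    refine Integrable.mono' hf_int.abs
      (((measurable_const.sub (measurable_id'.div_const _)).mul
        (meas_tail_comp hd1 x N)).aestronglyMeasurable)
      (ae_of_all _ fun v => ?_)
    rw [Real.norm_eq_abs, abs_mul]
    calc |1 - v / (N : ℝ)| * |tail d (x * v / N)| ≤ |1 - v / (N : ℝ)| * 1 := by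
          refine mul_le_mul_of_nonneg_left ?_ (abs_nonneg _)
          rw [abs_of_nonneg (tail_nonneg _ _)]; exact tail_le_one hd1 _
      _ = |1 - v / (N : ℝ)| := mul_one _
  have hmean : ∫ v, (1 - v / N : ℝ) ∂(chiSqMeasure N) = 0 := by
    rw [integral_sub (integrable_const 1) ((integrable_id hN).div_const _),
      integral_div, integral_id hN]
    simp [div_self hNpos.ne']
  have cheb := chebyshev hf_anti hh_anti hf_int htail_int hfh_int
  rw [hmean, zero_mul] at cheb
  have expand : ∫ v, (1 - v / N) * tail d (x * v / N) ∂(chiSqMeasure N)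
      = (∫ v, tail d (x * v / N) ∂(chiSqMeasure N))
        - ∫ v, tail d (x * v / N) * (v / N) ∂(chiSqMeasure N) := by
    rw [← integral_sub htail_int hvtail_int]
    congr 1; funext v; ring
  rw [expand] at cheb
  linarith

noncomputable def Rfun (d N : ℕ) (x : ℝ) : ℝ := Num d N x * (Real.exp (x / 2) / 2)

lemma R_hasDeriv {d N : ℕ} (hd : 1 ≤ d) (hN : 1 ≤ N) (x : ℝ) :
    HasDerivAt (Rfun d N)
      ((∫ v, -(tail d (x * v / N)) * (v / N) ∂(chiSqMeasure N)) * (Real.exp (x / 2) / 2)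
        + Num d N x * (Real.exp (x / 2) / 4)) x := by
  have h0 : HasDerivAt (fun x : ℝ => x / 2) (1 / 2 : ℝ) x := by
    simpa using (hasDerivAt_id x).div_const 2
  have h1 : HasDerivAt (fun x : ℝ => Real.exp (x / 2) / 2) (Real.exp (x / 2) / 4) x := by
    have := (h0.exp).div_const 2
    convert this using 1
    all_goals first | rfl | ring
  exact (Num_deriv hd hN x).mul h1

lemma R_mono {d N : ℕ} (hd2 : 2 ≤ d) (hN : 1 ≤ N) :
    MonotoneOn (Rfun d N) (Set.Ici (d : ℝ)) := by
  have hd1 : 1 ≤ d := by omega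
  refine monotoneOn_of_deriv_nonneg (convex_Ici _) ?_ ?_ ?_
  · have : Differentiable ℝ (Rfun d N) := fun x => (R_hasDeriv hd1 hN x).differentiableAt
    exact this.continuous.continuousOn
  · intro x _
    exact (R_hasDeriv hd1 hN x).differentiableAt.differentiableWithinAt
  · intro x hx
    rw [interior_Ici] at hx
    have hx0 : (0 : ℝ) ≤ x := le_trans (Nat.cast_nonneg d) (le_of_lt (mem_Ioi.mp hx))
    rw [(R_hasDeriv hd1 hN x).deriv]
    have hneg : ∫ v, -(tail d (x * v / N)) * (v / N) ∂(chiSqMeasure N)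
        = -∫ v, tail d (x * v / N) * (v / N) ∂(chiSqMeasure N) := by
      rw [← integral_neg]; congr 1; funext v; ring
    rw [hneg]
    have hk := key_ineq hd2 hN hx0
    have he : (0 : ℝ) < Real.exp (x / 2) := Real.exp_pos _
    nlinarith [mul_nonneg (sub_nonneg.mpr hk) he.le]

lemma tail_two {t : ℝ} (ht : 0 ≤ t) : tail 2 t = Real.exp (-t / 2) := by
  rw [tail_eq (by norm_num) t]
  have hpdf : ∀ u : ℝ, 0 ≤ u → pdf 2 u = Real.exp (-u / 2) / 2 := by
    intro u hu
    have h2 : ((2 : ℕ) : ℝ) / 2 = 1 := by norm_num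
    simp only [pdf, h2, gammaPDFReal, if_pos hu, Real.Gamma_one, Real.rpow_one,
      sub_self, Real.rpow_zero]
    rw [show -(1 / 2 * u) = -u / 2 by ring]
    ring
  rw [setIntegral_congr_fun measurableSet_Ioi
    (fun u hu => hpdf u (le_trans ht (le_of_lt hu)))]
  rw [integral_div, exp_int t]
  ring

lemma den_eq {x : ℝ} (hx : 0 ≤ x) :
    ∫ y, max (y - x) 0 ∂(chiSqMeasure 2) = 2 * Real.exp (-x / 2) := by
  have h := G_eq (k := 2) (by norm_num) x
  have h2 : ∫ s in Ioi (0 : ℝ), tail 2 (x + s)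
      = ∫ s in Ioi (0 : ℝ), Real.exp (-x / 2) * Real.exp (-s / 2) := by
    refine setIntegral_congr_fun measurableSet_Ioi fun s hs => ?_
    rw [tail_two (by have := mem_Ioi.mp hs; linarith), ← Real.exp_add]
    congr 1
    ring
  calc ∫ y, max (y - x) 0 ∂(chiSqMeasure 2) = G 2 x := rfl
    _ = ∫ s in Ioi (0 : ℝ), Real.exp (-x / 2) * Real.exp (-s / 2) := by rw [h, h2]
    _ = Real.exp (-x / 2) * ∫ s in Ioi (0 : ℝ), Real.exp (-s / 2) := integral_const_mul _ _
    _ = 2 * Real.exp (-x / 2) := by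
        rw [exp_int 0]
        norm_num [Real.exp_zero]
        ring

lemma prod_eq {d N : ℕ} (hd : 1 ≤ d) (hN : 1 ≤ N) {x : ℝ} (hx : 0 ≤ x) :
    ∫ q : ℝ × ℝ, max (q.1 - x * q.2 / N) 0 ∂((chiSqMeasure d).prod (chiSqMeasure N))
      = Num d N x := by
  haveI := chiSq_prob d hd
  haveI := chiSq_prob N hN
  have hint : Integrable (fun q : ℝ × ℝ => max (q.1 - x * q.2 / N) 0)
      ((chiSqMeasure d).prod (chiSqMeasure N)) := by
    have hb : Integrable (fun q : ℝ × ℝ => |q.1|) ((chiSqMeasure d).prod (chiSqMeasure N)) := by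
      simpa using (integrable_id hd).abs.mul_prod (integrable_const (1 : ℝ))
    refine Integrable.mono' hb
      (((continuous_fst.sub
        ((continuous_const.mul continuous_snd).div_const _)).max
          continuous_const).aestronglyMeasurable) ?_
    have hae : ∀ᵐ q : ℝ × ℝ ∂((chiSqMeasure d).prod (chiSqMeasure N)), 0 ≤ q.2 := by
      rw [ae_iff]
      refine measure_mono_null (t := (Set.univ : Set ℝ) ×ˢ Iio (0:ℝ)) (fun q hq => ?_) ?_
      · exact (Set.mem_prod).mpr ⟨Set.mem_univ q.1, by simpa using not_le.mp hq⟩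
      · rw [MeasureTheory.Measure.prod_prod, chiSq_Iio_zero N, mul_zero]
    filter_upwards [hae] with q hq
    rw [Real.norm_eq_abs, abs_of_nonneg (le_max_right _ _)]
    refine max_le ?_ (abs_nonneg _)
    have hnn : 0 ≤ x * q.2 / N := by positivity
    calc q.1 - x * q.2 / N ≤ q.1 := by linarith
      _ ≤ |q.1| := le_abs_self _
  rw [MeasureTheory.integral_prod_symm _ hint]
  rfl

end ChiAux

theorem ratio_monotone (d N : ℕ) (hd : 2 ≤ d) (hN : 0 < N) :
    MonotoneOn
      (fun x : ℝ =>
        (∫ q : ℝ × ℝ, max (q.1 - x * q.2 / N) 0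
            ∂((chiSqMeasure d).prod (chiSqMeasure N))) /
          ∫ y, max (y - x) 0 ∂(chiSqMeasure 2))
      (Set.Ici (d : ℝ)) := by
  have hd1 : 1 ≤ d := by omega
  have hN1 : 1 ≤ N := hN
  refine (ChiAux.R_mono hd hN1).congr fun x hx => ?_
  have hx0 : (0 : ℝ) ≤ x := le_trans (Nat.cast_nonneg d) (Set.mem_Ici.mp hx)
  show ChiAux.Rfun d N x = _
  rw [ChiAux.prod_eq hd1 hN1 hx0, ChiAux.den_eq hx0]
  rw [ChiAux.Rfun, show -x / 2 = -(x / 2) by ring, Real.exp_neg]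
  have he : Real.exp (x / 2) ≠ 0 := Real.exp_ne_zero _
  field_simp
end

section
/- Let d, N be positive integers with d ≥ 2 and define EDKhi(d, N, ·) as the inverse of the strictly decreasing function x ↦ DKhi(d,N,x) = (1/d)E[(X_d − x·X'_N/N)_+] (with X_d, X'_N independent chi-squared with d and N degrees of freedom). Then for any L ≥ 0, EDKhi(d, N, e^{−L}) ≥ 2L − 2·log(d). -/
open MeasureTheory ProbabilityTheory Real

/-- Laplace transform of the gamma measure. -/
lemma gamma_laplace {a r s : ℝ} (ha : 0 < a) (hr : 0 < r) (hs : 0 ≤ s) :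
    ∫⁻ b, ENNReal.ofReal (Real.exp (-(s * b))) ∂(gammaMeasure a r)
      = ENNReal.ofReal ((r / (r + s)) ^ a) := by
  have hrs : 0 < r + s := by linarith
  rw [gammaMeasure, lintegral_withDensity_eq_lintegral_mul _
    (show Measurable (gammaPDF a r) from (measurable_gammaPDFReal a r).ennreal_ofReal)
    (by fun_prop)]
  have hpt : ∀ b : ℝ, (gammaPDF a r * fun b => ENNReal.ofReal (Real.exp (-(s * b)))) b
      = ENNReal.ofReal ((r / (r + s)) ^ a) * gammaPDF a (r + s) b := by
    intro b
    simp only [Pi.mul_apply, gammaPDF]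
    rw [← ENNReal.ofReal_mul (gammaPDFReal_nonneg ha hr b),
      ← ENNReal.ofReal_mul (by positivity)]
    congr 1
    unfold gammaPDFReal
    split_ifs with h
    · rw [div_rpow hr.le hrs.le]
      have h1 : Real.exp (-(r * b)) * Real.exp (-(s * b)) = Real.exp (-((r + s) * b)) := by
        rw [← Real.exp_add]; ring_nf
      have h2 : (0:ℝ) < (r + s) ^ a := rpow_pos_of_pos hrs a
      field_simp
      rw [show b * (r + s) = (r + s) * b by ring, show b * s = s * b by ring, ← h1]; ring
    · simp
  calc ∫⁻ b, (gammaPDF a r * fun b => ENNReal.ofReal (Real.exp (-(s * b)))) b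
      = ∫⁻ b, ENNReal.ofReal ((r / (r + s)) ^ a) * gammaPDF a (r + s) b := by
        exact lintegral_congr hpt
    _ = ENNReal.ofReal ((r / (r + s)) ^ a) * ∫⁻ b, gammaPDF a (r + s) b := by
        rw [lintegral_const_mul _ (show Measurable (gammaPDF a (r+s)) from (measurable_gammaPDFReal a (r+s)).ennreal_ofReal)]
    _ = ENNReal.ofReal ((r / (r + s)) ^ a) := by
        rw [lintegral_gammaPDF_eq_one ha hrs, mul_one]

/-- Key pointwise bound. -/
lemma gamma_pointwise {a c : ℝ} (ha : 1 ≤ a) (hc : 0 ≤ c) (y : ℝ) :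
    2 * a * Real.exp (-(c/2)) * gammaPDFReal (a + 1) (1/2) (y - c)
      ≤ max (y - c) 0 * gammaPDFReal a (1/2) y := by
  have ha0 : 0 < a := by linarith
  rcases le_or_gt (y - c) 0 with h | h
  · rcases eq_or_lt_of_le h with h' | h'
    · -- y - c = 0 : pdf at 0 is 0 since a + 1 - 1 = a > 0
      rw [h']
      have : gammaPDFReal (a + 1) (1/2) 0 = 0 := by
        unfold gammaPDFReal
        rw [if_pos le_rfl]
        have : (0:ℝ) ^ (a + 1 - 1) = 0 := by
          rw [Real.zero_rpow (by linarith)]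
        rw [this]; ring
      rw [this, mul_zero]
      exact mul_nonneg (le_max_right _ _) (gammaPDFReal_nonneg ha0 (by norm_num) y)
    · rw [gammaPDFReal, if_neg (not_le.mpr h'), mul_zero]
      exact mul_nonneg (le_max_right _ _) (gammaPDFReal_nonneg ha0 (by norm_num) y)
  · set u := y - c with hu
    have hy : 0 ≤ y := by linarith
    have hmax : max u 0 = u := max_eq_left h.le
    rw [hmax]
    unfold gammaPDFReal
    rw [if_pos h.le, if_pos hy]
    have hG : Real.Gamma (a + 1) = a * Real.Gamma a := Real.Gamma_add_one ha0.ne'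
    have hGpos : 0 < Real.Gamma a := Real.Gamma_pos_of_pos ha0
    have hpow : ((1:ℝ)/2) ^ (a + 1) = (1/2) ^ a * (1/2) := by
      rw [Real.rpow_add_one (by norm_num : (1:ℝ)/2 ≠ 0)]
    have hua : u ^ (a + 1 - 1) = u * u ^ (a - 1) := by
      have : a + 1 - 1 = (a - 1) + 1 := by ring
      rw [this, Real.rpow_add_one h.ne']
      ring
    have hexp : Real.exp (-(c/2)) * Real.exp (-(1/2 * u)) = Real.exp (-(1/2 * y)) := by
      rw [← Real.exp_add]; congr 1; rw [hu]; ring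
    have hkey : u ^ (a - 1) ≤ y ^ (a - 1) :=
      Real.rpow_le_rpow h.le (by linarith) (by linarith)
    calc 2 * a * Real.exp (-(c/2)) * ((1/2) ^ (a+1) / Real.Gamma (a+1) * (u) ^ (a+1-1)
            * Real.exp (-(1/2 * u)))
        = ((1/2) ^ a / Real.Gamma a * (u * u ^ (a - 1)))
            * (Real.exp (-(c/2)) * Real.exp (-(1/2 * u))) := by
          rw [hG, hpow, hua]
          field_simp
      _ = u * ((1/2) ^ a / Real.Gamma a * u ^ (a-1) * Real.exp (-(1/2 * y))) := by
          rw [hexp]; ring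
      _ ≤ u * ((1/2) ^ a / Real.Gamma a * y ^ (a-1) * Real.exp (-(1/2 * y))) := by
          apply mul_le_mul_of_nonneg_left _ h.le
          apply mul_le_mul_of_nonneg_right _ (Real.exp_nonneg _)
          apply mul_le_mul_of_nonneg_left hkey (by positivity)

/-- Key one-dimensional lower bound: `E[(X_a - c)_+] ≥ 2 a e^{-c/2}`. -/
lemma gamma_max_lower {a c : ℝ} (ha : 1 ≤ a) (hc : 0 ≤ c) :
    ENNReal.ofReal (2 * a * Real.exp (-(c/2)))
      ≤ ∫⁻ y, ENNReal.ofReal (max (y - c) 0) ∂(gammaMeasure a (1/2)) := by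
  have ha0 : 0 < a := by linarith
  rw [gammaMeasure, lintegral_withDensity_eq_lintegral_mul _
    (show Measurable (gammaPDF a (1/2)) from (measurable_gammaPDFReal a (1/2)).ennreal_ofReal)
    (by fun_prop)]
  have step1 : ∫⁻ y, ENNReal.ofReal (2 * a * Real.exp (-(c/2))
        * gammaPDFReal (a + 1) (1/2) (y - c))
      ≤ ∫⁻ y, (gammaPDF a (1/2) * fun y => ENNReal.ofReal (max (y - c) 0)) y := by
    apply lintegral_mono
    intro y
    simp only [Pi.mul_apply, gammaPDF]
    rw [← ENNReal.ofReal_mul (gammaPDFReal_nonneg ha0 (by norm_num) y)]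
    exact ENNReal.ofReal_le_ofReal (by
      calc 2 * a * Real.exp (-(c/2)) * gammaPDFReal (a + 1) (1/2) (y - c)
          ≤ max (y - c) 0 * gammaPDFReal a (1/2) y := gamma_pointwise ha hc y
        _ = gammaPDFReal a (1/2) y * max (y - c) 0 := by ring)
  refine le_trans (le_of_eq ?_) step1
  have : ∫⁻ y, ENNReal.ofReal (2 * a * Real.exp (-(c/2))
        * gammaPDFReal (a + 1) (1/2) (y - c))
      = ∫⁻ y, ENNReal.ofReal (2 * a * Real.exp (-(c/2))) * gammaPDF (a+1) (1/2) (y - c) := by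
    apply lintegral_congr; intro y
    rw [gammaPDF, ← ENNReal.ofReal_mul (by positivity)]
  rw [this, lintegral_sub_right_eq_self
    (fun y => ENNReal.ofReal (2 * a * Real.exp (-(c/2))) * gammaPDF (a+1) (1/2) y) c,
    lintegral_const_mul _ (show Measurable (gammaPDF (a+1) (1/2)) from (measurable_gammaPDFReal (a+1) (1/2)).ennreal_ofReal),
    lintegral_gammaPDF_eq_one (by linarith) (by norm_num), mul_one]

theorem EDKhi_lower_bound (d N : ℕ) (hd : 2 ≤ d) (hN : 0 < N) (L : ℝ) (hL : 0 ≤ L)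
    (x : ℝ) (hx : 0 < x)
    (hinv : (1 / (d : ℝ)) *
        (∫ q : ℝ × ℝ, max (q.1 - x * q.2 / N) 0
          ∂((chiSqMeasure d).prod (chiSqMeasure N))) = Real.exp (-L)) :
    x ≥ 2 * L - 2 * Real.log d := by
  have hdR : (2:ℝ) ≤ d := by exact_mod_cast hd
  have hNR : (0:ℝ) < N := by exact_mod_cast hN
  have hdpos : (0:ℝ) < d := by linarith
  have had : (1:ℝ) ≤ (d:ℝ)/2 := by linarith
  have haN : (0:ℝ) < (N:ℝ)/2 := by linarith
  have instd : IsProbabilityMeasure (chiSqMeasure d) :=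
    isProbabilityMeasure_gammaMeasure (by linarith : (0:ℝ) < (d:ℝ)/2) (by norm_num)
  have instN : IsProbabilityMeasure (chiSqMeasure N) :=
    isProbabilityMeasure_gammaMeasure haN (by norm_num)
  set μ := (chiSqMeasure d).prod (chiSqMeasure N) with hμ
  set f : ℝ × ℝ → ℝ := fun q => max (q.1 - x * q.2 / N) 0 with hf
  have hfm : Measurable f := by
    apply Measurable.max _ measurable_const
    fun_prop
  have hfnn : ∀ q, 0 ≤ f q := fun q => le_max_right _ _
  -- express the Bochner integral as a Lebesgue integral
  have hIL : ∫ q, f q ∂μ = (∫⁻ q, ENNReal.ofReal (f q) ∂μ).toReal := by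
    exact integral_eq_lintegral_of_nonneg_ae (Filter.Eventually.of_forall hfnn)
      hfm.aestronglyMeasurable
  set I := ∫⁻ q, ENNReal.ofReal (f q) ∂μ with hI
  -- lower bound on I
  have key : ENNReal.ofReal ((d:ℝ) * Real.exp (-(x/2))) ≤ I := by
    rw [hI, hμ, lintegral_prod_symm _ (hfm.ennreal_ofReal.aemeasurable)]
    -- a.e. b is nonnegative
    have haeb : ∀ᵐ b ∂(chiSqMeasure N), 0 ≤ b := by
      rw [ae_iff]
      have : {b : ℝ | ¬ 0 ≤ b} = Set.Iio 0 := by ext b; simp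
      rw [this]
      rw [chiSqMeasure, gammaMeasure, withDensity_apply _ measurableSet_Iio]
      exact lintegral_gammaPDF_of_nonpos le_rfl
    have inner_bound : ∀ b : ℝ, 0 ≤ b →
        ENNReal.ofReal ((d:ℝ) * Real.exp (-((x/(2*N)) * b)))
          ≤ ∫⁻ a, ENNReal.ofReal (f (a, b)) ∂(chiSqMeasure d) := by
      intro b hb
      have hc : 0 ≤ x * b / N := by positivity
      have := gamma_max_lower (a := (d:ℝ)/2) (c := x * b / N) had hc
      have hrw : 2 * ((d:ℝ)/2) * Real.exp (-((x * b / N)/2))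
          = (d:ℝ) * Real.exp (-((x/(2*N)) * b)) := by
        have harg : x * b / (N:ℝ) / 2 = x/(2*(N:ℝ)) * b := by
          rw [div_div, div_mul_eq_mul_div, mul_comm (N:ℝ) 2]
        rw [harg]; ring
      rw [hrw] at this
      exact this
    calc ENNReal.ofReal ((d:ℝ) * Real.exp (-(x/2)))
        ≤ ∫⁻ b, ENNReal.ofReal ((d:ℝ) * Real.exp (-((x/(2*N)) * b))) ∂(chiSqMeasure N) := by
          have heq : ∫⁻ b, ENNReal.ofReal ((d:ℝ) * Real.exp (-((x/(2*N)) * b)))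
                ∂(chiSqMeasure N)
              = ENNReal.ofReal (d:ℝ)
                * ENNReal.ofReal ((((1:ℝ)/2) / (1/2 + x/(2*N))) ^ ((N:ℝ)/2)) := by
            have : ∀ b : ℝ, ENNReal.ofReal ((d:ℝ) * Real.exp (-((x/(2*N)) * b)))
                = ENNReal.ofReal (d:ℝ) * ENNReal.ofReal (Real.exp (-((x/(2*N)) * b))) := by
              intro b; rw [← ENNReal.ofReal_mul hdpos.le]
            simp_rw [this]
            rw [lintegral_const_mul _ (by fun_prop), chiSqMeasure,
              gamma_laplace haN (by norm_num) (by positivity)]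
          rw [heq, ← ENNReal.ofReal_mul hdpos.le]
          apply ENNReal.ofReal_le_ofReal
          apply mul_le_mul_of_nonneg_left _ hdpos.le
          -- (1/2 / (1/2 + x/(2N)))^(N/2) ≥ exp(-(x/2))
          have h1 : (0:ℝ) < 1/2 + x/(2*N) := by positivity
          have h2 : ((1:ℝ)/2) / (1/2 + x/(2*N)) = (1 + x/N)⁻¹ := by
            rw [inv_eq_one_div]
            rw [div_eq_div_iff (by positivity) (by positivity)]
            field_simp
          rw [h2, Real.inv_rpow (by positivity), Real.exp_neg]
          apply inv_anti₀ (by positivity)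
          calc (1 + x/N) ^ ((N:ℝ)/2)
              ≤ (Real.exp (x/N)) ^ ((N:ℝ)/2) := by
                apply Real.rpow_le_rpow (by positivity) _ (by positivity)
                have := Real.add_one_le_exp (x/N)
                linarith
            _ = Real.exp (x/2) := by
                rw [← Real.exp_mul]
                congr 1
                field_simp
      _ ≤ ∫⁻ b, (∫⁻ a, ENNReal.ofReal (f (a, b)) ∂(chiSqMeasure d)) ∂(chiSqMeasure N) := by
          apply lintegral_mono_ae
          filter_upwards [haeb] with b hb
          exact inner_bound b hb
  -- from hinv : toReal I / d = exp(-L)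
  have hInt : I.toReal = (d:ℝ) * Real.exp (-L) := by
    rw [← hIL]
    field_simp at hinv
    linarith [hinv]
  have hIne : I ≠ ⊤ := by
    intro htop
    rw [htop, ENNReal.toReal_top] at hInt
    have := mul_pos hdpos (Real.exp_pos (-L))
    linarith
  have hle : (d:ℝ) * Real.exp (-(x/2)) ≤ (d:ℝ) * Real.exp (-L) := by
    rw [← hInt]
    calc (d:ℝ) * Real.exp (-(x/2))
        = (ENNReal.ofReal ((d:ℝ) * Real.exp (-(x/2)))).toReal := by
          rw [ENNReal.toReal_ofReal (by positivity)]
      _ ≤ I.toReal := ENNReal.toReal_mono hIne key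
  have hexp : Real.exp (-(x/2)) ≤ Real.exp (-L) :=
    le_of_mul_le_mul_left (by linarith) hdpos
  have hxL : -(x/2) ≤ -L := by
    exact (Real.exp_le_exp).mp hexp
  have hlog : 0 ≤ Real.log d := Real.log_nonneg (by linarith)
  linarith
end

section
/- Let d be a positive integer with d ≤ e^{−3/2}(p−1) for some integer p ≥ 2, and let n > d + 1. Then EDKhi(d+1, n−d−1, [binom(p−1,d)·(d+1)^2]^{−1}) ≥ d + 1, where EDKhi(a,b,·) is the inverse in x of DKhi(a,b,x) = (1/a)·E[(X_a − x·X'_b/b)_+] for independent chi-squared variables X_a, X'_b. -/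
open MeasureTheory ProbabilityTheory Real

open Set Filter Topology
open scoped ENNReal NNReal

lemma myGamma_le_one {s : ℝ} (h1 : 1 ≤ s) (h2 : s ≤ 2) : Real.Gamma s ≤ 1 := by
  have hc := convexOn_Gamma.2 (mem_Ioi.mpr one_pos) (mem_Ioi.mpr two_pos)
    (show (0:ℝ) ≤ 2 - s by linarith) (show (0:ℝ) ≤ s - 1 by linarith)
    (show (2 - s) + (s - 1) = 1 by ring)
  have he : (2 - s) • (1:ℝ) + (s - 1) • (2:ℝ) = s := by simp only [smul_eq_mul]; ring
  rw [he] at hc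
  calc Real.Gamma s ≤ (2 - s) • Real.Gamma 1 + (s - 1) • Real.Gamma 2 := hc
    _ = 1 := by simp only [Real.Gamma_one, Real.Gamma_two, smul_eq_mul]; ring

lemma myGamma_le_rpow_aux (n : ℕ) : ∀ s : ℝ, 1 ≤ s → s ≤ n + 2 → Real.Gamma s ≤ s ^ (s - 1) := by
  induction n with
  | zero =>
    intro s h1 h2
    norm_num at h2
    have h1' : (1:ℝ) ≤ s ^ (s-1) := Real.one_le_rpow h1 (by linarith)
    linarith [myGamma_le_one h1 h2]
  | succ n ih =>
    intro s h1 h2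
    by_cases hs : s ≤ n + 2
    · exact ih s h1 hs
    push_neg at hs
    have hn2 : (0:ℝ) ≤ n := Nat.cast_nonneg n
    have h2' : s ≤ n + 3 := by push_cast at h2; linarith
    have hs1 : 1 ≤ s - 1 := by linarith
    have hG : Real.Gamma s = (s - 1) * Real.Gamma (s - 1) := by
      have h := Real.Gamma_add_one (show s - 1 ≠ 0 by linarith)
      rw [sub_add_cancel] at h
      exact h
    have hIH : Real.Gamma (s - 1) ≤ (s - 1) ^ (s - 1 - 1) := ih (s - 1) hs1 (by linarith)
    have hne : s - 1 ≠ 0 := by linarith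
    calc Real.Gamma s = (s - 1) * Real.Gamma (s - 1) := hG
      _ ≤ (s - 1) * (s - 1) ^ (s - 1 - 1) := by
          apply mul_le_mul_of_nonneg_left hIH (by linarith)
      _ = (s - 1) ^ (s - 1) := by
          rw [mul_comm, ← Real.rpow_add_one hne]
          congr 1
          ring
      _ ≤ s ^ (s - 1) := Real.rpow_le_rpow (by linarith) (by linarith) (by linarith)

lemma myGamma_le_rpow {s : ℝ} (h1 : 1 ≤ s) : Real.Gamma s ≤ s ^ (s - 1) := by
  obtain ⟨n, hn⟩ := exists_nat_ge s
  exact myGamma_le_rpow_aux n s h1 (by push_cast; linarith)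


lemma integral_gammaMeasure_eq {a r : ℝ} (ha : 0 < a) (hr : 0 < r) (g : ℝ → ℝ) :
    ∫ t, g t ∂(gammaMeasure a r) = ∫ t, gammaPDFReal a r t * g t := by
  have hm : Measurable fun t => Real.toNNReal (gammaPDFReal a r t) :=
    (measurable_gammaPDFReal a r).real_toNNReal
  have hpdf : gammaPDF a r = fun t => ((Real.toNNReal (gammaPDFReal a r t) : ℝ≥0) : ℝ≥0∞) := rfl
  rw [gammaMeasure, hpdf, integral_withDensity_eq_integral_smul hm]
  congr 1
  funext t
  rw [NNReal.smul_def, smul_eq_mul, Real.coe_toNNReal _ (gammaPDFReal_nonneg ha hr t)]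

lemma integral_id_gammaMeasure {a r : ℝ} (ha : 0 < a) (hr : 0 < r) :
    ∫ t, t ∂(gammaMeasure a r) = a / r := by
  rw [integral_gammaMeasure_eq ha hr _]
  rw [← setIntegral_eq_integral_of_forall_compl_eq_zero (s := Ioi 0) (by
    intro t ht
    simp only [mem_Ioi, not_lt] at ht
    rcases lt_or_eq_of_le ht with h | h
    · rw [gammaPDFReal, if_neg (not_le.mpr h), zero_mul]
    · simp [h])]
  rw [setIntegral_congr_fun measurableSet_Ioi
    (show EqOn (fun t => gammaPDFReal a r t * t)
      (fun t => r ^ a / Real.Gamma a * (t ^ ((a + 1) - 1) * Real.exp (-(r * t)))) (Ioi 0) by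
      intro t ht
      have ht' : (0:ℝ) < t := ht
      simp only [gammaPDFReal, if_pos ht'.le]
      rw [show (a + 1) - 1 = (a - 1) + 1 by ring, Real.rpow_add_one ht'.ne']
      ring)]
  rw [integral_const_mul, integral_rpow_mul_exp_neg_mul_Ioi (by linarith) hr]
  have hΓ : Real.Gamma (a + 1) = a * Real.Gamma a := Real.Gamma_add_one ha.ne'
  have h1 : (1/r) ^ (a + 1) = (1/r) ^ a * (1/r) := Real.rpow_add_one (by positivity) a
  have h2 : r ^ a * (1/r) ^ a = 1 := by
    rw [← Real.mul_rpow hr.le (by positivity), mul_one_div_cancel hr.ne', Real.one_rpow]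
  have hΓpos : 0 < Real.Gamma a := Real.Gamma_pos_of_pos ha
  rw [hΓ, h1]
  calc r ^ a / Real.Gamma a * ((1/r) ^ a * (1/r) * (a * Real.Gamma a))
      = (r ^ a * (1/r) ^ a) * (a * (1/r)) * (Real.Gamma a / Real.Gamma a) := by ring
    _ = a / r := by rw [h2, div_self hΓpos.ne']; ring

lemma integrable_id_gammaMeasure {a r : ℝ} (ha : 0 < a) (hr : 0 < r) :
    Integrable (fun t => t) (gammaMeasure a r) := by
  have hm : Measurable fun t => Real.toNNReal (gammaPDFReal a r t) :=
    (measurable_gammaPDFReal a r).real_toNNReal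
  have hpdf : gammaPDF a r = fun t => ((Real.toNNReal (gammaPDFReal a r t) : ℝ≥0) : ℝ≥0∞) := rfl
  rw [gammaMeasure, hpdf]
  apply (integrable_withDensity_iff_integrable_smul hm).mpr
  have h1 : IntegrableOn (fun t : ℝ => t ^ a * Real.exp (-(r * t))) (Ioi 0) := by
    have h0 := integrableOn_rpow_mul_exp_neg_mul_rpow (p := 1) (s := a) (b := r)
      (by linarith) zero_lt_one hr
    apply h0.congr_fun ?_ measurableSet_Ioi
    intro t ht
    simp only [Real.rpow_one]
    ring_nf
  have h2 : IntegrableOn (fun t : ℝ => Real.toNNReal (gammaPDFReal a r t) • t) (Ioi 0) := by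
    have h1' : IntegrableOn (fun t : ℝ => r ^ a / Real.Gamma a * (t ^ a * Real.exp (-(r * t))))
        (Ioi 0) := h1.const_mul (r ^ a / Real.Gamma a)
    apply h1'.congr_fun ?_ measurableSet_Ioi
    intro t ht
    have ht' : (0:ℝ) < t := ht
    show r ^ a / Real.Gamma a * (t ^ a * Real.exp (-(r * t)))
        = Real.toNNReal (gammaPDFReal a r t) • t
    rw [NNReal.smul_def, smul_eq_mul, Real.coe_toNNReal _ (gammaPDFReal_nonneg ha hr t)]
    simp only [gammaPDFReal, if_pos ht'.le]
    rw [show (t:ℝ) ^ a = t ^ (a - 1) * t by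
      rw [← Real.rpow_add_one ht'.ne']; congr 1; ring]
    ring
  have h3 : (fun t : ℝ => Real.toNNReal (gammaPDFReal a r t) • t)
      = (Ioi (0:ℝ)).indicator (fun t : ℝ => Real.toNNReal (gammaPDFReal a r t) • t) := by
    funext t
    by_cases ht : t ∈ Ioi (0:ℝ)
    · rw [indicator_of_mem ht]
    · rw [indicator_of_notMem ht]
      simp only [mem_Ioi, not_lt] at ht
      rcases lt_or_eq_of_le ht with h | h
      · rw [NNReal.smul_def, smul_eq_mul, Real.coe_toNNReal _ (gammaPDFReal_nonneg ha hr t),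
          gammaPDFReal, if_neg (not_le.mpr h), zero_mul]
      · simp [h]
  rw [h3]
  exact h2.integrable_indicator measurableSet_Ioi

lemma myexp_integral_Ici (c : ℝ) :
    ∫ t in Ici c, Real.exp (-(t/2)) = 2 * Real.exp (-(c/2)) := by
  rw [integral_Ici_eq_integral_Ioi]
  have hderiv : ∀ t ∈ Ioi c, HasDerivAt (fun t : ℝ => -2 * Real.exp (-(t/2)))
      (Real.exp (-(t/2))) t := by
    intro t _
    have h1 : HasDerivAt (fun t : ℝ => -(t/2)) (-(1/2)) t := ((hasDerivAt_id t).div_const 2).neg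
    have h2 := (h1.exp).const_mul (-2 : ℝ)
    convert h2 using 1
    all_goals first | rfl | ring
  have hint : IntegrableOn (fun t : ℝ => Real.exp (-(t/2))) (Ioi c) := by
    have h0 := exp_neg_integrableOn_Ioi c (show (0:ℝ) < 1/2 by norm_num)
    apply h0.congr_fun ?_ measurableSet_Ioi
    intro t _
    norm_num
    ring_nf
  have htend : Tendsto (fun t : ℝ => -2 * Real.exp (-(t/2))) atTop (𝓝 0) := by
    have h0 : Tendsto (fun t : ℝ => -(t/2)) atTop atBot := by
      apply Filter.tendsto_neg_atTop_atBot.comp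
      exact tendsto_id.atTop_div_const (by norm_num)
    have h1 : Tendsto (fun t : ℝ => Real.exp (-(t/2))) atTop (𝓝 0) :=
      Real.tendsto_exp_atBot.comp h0
    have h2 := h1.const_mul (-2 : ℝ)
    simpa using h2
  have hcont : ContinuousWithinAt (fun t : ℝ => -2 * Real.exp (-(t/2))) (Ici c) c := by
    apply Continuous.continuousWithinAt
    continuity
  rw [integral_Ioi_of_hasDerivAt_of_tendsto hcont hderiv hint htend]
  ring

lemma gamma_tail_lb {A : ℝ} (hA : 2 ≤ A) :
    2 ^ (A/2) * Real.exp (-A) / 2 ≤ ((gammaMeasure (A/2) (1/2)) (Ici (2*A))).toReal := by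
  have hApos : 0 < A := by linarith
  have hΓpos : 0 < Real.Gamma (A/2) := Real.Gamma_pos_of_pos (by linarith)
  set c0 : ℝ := (1/2:ℝ) ^ (A/2) / Real.Gamma (A/2) * (2*A) ^ (A/2 - 1) with hc0
  have hc0pos : 0 < c0 := by positivity
  haveI : IsProbabilityMeasure (gammaMeasure (A/2) (1/2)) :=
    isProbabilityMeasure_gammaMeasure (by linarith) (by norm_num)
  -- lower bound the measure by an explicit lintegral
  have hIexp : ∫ t in Ici (2*A), c0 * Real.exp (-(t/2)) = c0 * (2 * Real.exp (-A)) := by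
    rw [integral_const_mul, myexp_integral_Ici]
    have h : -(2*A/2) = -A := by ring
    rw [h]
  have hIntOn : IntegrableOn (fun t : ℝ => c0 * Real.exp (-(t/2))) (Ici (2*A)) := by
    have hbase : IntegrableOn (fun t : ℝ => Real.exp (-(t/2))) (Ici (2*A)) := by
      rw [integrableOn_Ici_iff_integrableOn_Ioi]
      have h0 := exp_neg_integrableOn_Ioi (2*A) (show (0:ℝ) < 1/2 by norm_num)
      apply h0.congr_fun ?_ measurableSet_Ioi
      intro t _
      norm_num
      ring_nf
    exact hbase.const_mul c0
  have hlb : ENNReal.ofReal (c0 * (2 * Real.exp (-A)))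
      ≤ (gammaMeasure (A/2) (1/2)) (Ici (2*A)) := by
    rw [gammaMeasure, withDensity_apply _ measurableSet_Ici]
    rw [← hIexp, ofReal_integral_eq_lintegral_ofReal hIntOn
      (ae_of_all _ (fun t => by positivity))]
    apply lintegral_mono_ae
    rw [ae_restrict_iff' measurableSet_Ici]
    filter_upwards with t ht
    have ht2A : 2*A ≤ t := ht
    have htpos : (0:ℝ) ≤ t := by linarith
    rw [gammaPDF_of_nonneg htpos]
    apply ENNReal.ofReal_le_ofReal
    have hrt : (2*A) ^ (A/2 - 1) ≤ t ^ (A/2 - 1) :=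
      Real.rpow_le_rpow (by positivity) ht2A (by linarith)
    have hexp : Real.exp (-(t/2)) = Real.exp (-(1/2 * t)) := by ring_nf
    rw [hc0, hexp]
    exact mul_le_mul_of_nonneg_right
      (mul_le_mul_of_nonneg_left hrt (by positivity)) (Real.exp_nonneg _)
  have htoReal : c0 * (2 * Real.exp (-A)) ≤ ((gammaMeasure (A/2) (1/2)) (Ici (2*A))).toReal := by
    have h := ENNReal.toReal_mono (measure_ne_top _ _) hlb
    rwa [ENNReal.toReal_ofReal (by positivity)] at h
  -- now bound c0 from below
  have hc0lb : 2 ^ (A/2) / 4 ≤ c0 := by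
    have hΓle : Real.Gamma (A/2) ≤ (A/2) ^ (A/2 - 1) := by
      exact myGamma_le_rpow (show (1:ℝ) ≤ A/2 by linarith)
    have hstep : (1/2:ℝ) ^ (A/2) * ((2*A) ^ (A/2 - 1) / (A/2) ^ (A/2 - 1)) ≤ c0 := by
      rw [hc0, div_mul_eq_mul_div, mul_div_assoc]
      apply mul_le_mul_of_nonneg_left _ (by positivity)
      apply div_le_div_of_nonneg_left (by positivity) hΓpos hΓle
    have hid : (1/2:ℝ) ^ (A/2) * ((2*A) ^ (A/2 - 1) / (A/2) ^ (A/2 - 1)) = 2 ^ (A/2) / 4 := by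
      rw [← Real.div_rpow (by positivity) (by positivity)]
      rw [show (2*A) / (A/2) = (4:ℝ) by field_simp; ring]
      rw [Real.rpow_sub (by norm_num : (0:ℝ) < 4), Real.rpow_one]
      rw [← mul_div_assoc, ← Real.mul_rpow (by norm_num) (by norm_num)]
      norm_num
    rwa [hid] at hstep
  calc 2 ^ (A/2) * Real.exp (-A) / 2 = (2 ^ (A/2) / 4) * (2 * Real.exp (-A)) := by ring
    _ ≤ c0 * (2 * Real.exp (-A)) := by
        apply mul_le_mul_of_nonneg_right hc0lb (by positivity)
    _ ≤ _ := htoReal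
lemma myexp_three_half : (4.4:ℝ) ≤ Real.exp (3/2) := by
  have h1 : Real.exp (3/2) * Real.exp (3/2) = Real.exp 1 ^ 3 := by
    rw [← Real.exp_add, ← Real.exp_nat_mul]
    norm_num
  have h2 : (2.7182818283:ℝ) < Real.exp 1 := Real.exp_one_gt_d9
  have h3 : (0:ℝ) < Real.exp (3/2) := Real.exp_pos _
  have h2a : (2.7182818283:ℝ) * 2.7182818283 < Real.exp 1 * Real.exp 1 := by nlinarith
  have h4 : (2.7182818283:ℝ) * 2.7182818283 * 2.7182818283 < Real.exp 1 ^ 3 := by nlinarith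
  nlinarith

lemma mysqrt_two : (1.4:ℝ) ≤ Real.sqrt 2 := by
  have h1 : Real.sqrt 2 * Real.sqrt 2 = 2 := Real.mul_self_sqrt (by norm_num)
  nlinarith [Real.sqrt_nonneg 2]

lemma numeric_key : ∀ d : ℕ, 1 ≤ d →
    Real.exp 1 ^ (d + 1) ≤ 2 * 3.4 ^ d * Real.sqrt 2 ^ (d + 1) := by
  intro d
  induction d with
  | zero => omega
  | succ k ih =>
    intro _
    by_cases hk : k = 0
    · subst hk
      have h1 : Real.sqrt 2 * Real.sqrt 2 = 2 := Real.mul_self_sqrt (by norm_num)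
      have h2 : (2.7182818283:ℝ) < Real.exp 1 := Real.exp_one_gt_d9
      have h3 : Real.exp 1 < 2.7182818286 := Real.exp_one_lt_d9
      have h4 : Real.exp 1 ^ 2 = Real.exp 2 := by
        rw [← Real.exp_nat_mul]; norm_num
      norm_num
      nlinarith
    · have ih' := ih (by omega)
      have hs := mysqrt_two
      have he : Real.exp 1 ≤ 2.72 := le_of_lt (lt_trans Real.exp_one_lt_d9 (by norm_num))
      have hpos : (0:ℝ) ≤ 2 * 3.4 ^ k * Real.sqrt 2 ^ (k + 1) := by positivity
      calc Real.exp 1 ^ (k + 1 + 1) = Real.exp 1 * Real.exp 1 ^ (k + 1) := by ring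
        _ ≤ (3.4 * Real.sqrt 2) * (2 * 3.4 ^ k * Real.sqrt 2 ^ (k + 1)) := by
            apply mul_le_mul (by nlinarith) ih' (by positivity) (by nlinarith)
        _ = 2 * 3.4 ^ (k + 1) * Real.sqrt 2 ^ (k + 1 + 1) := by ring
lemma choose_lb (p d : ℕ) (hp : 2 ≤ p) (hd : 1 ≤ d)
    (hdp : (d : ℝ) ≤ Real.exp (-(3/2)) * ((p:ℝ) - 1)) :
    (3.4:ℝ) ^ d ≤ (Nat.choose (p - 1) d : ℝ) := by
  have hd1 : (1:ℝ) ≤ (d:ℝ) := by exact_mod_cast hd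
  have hP1 : Real.exp (3/2) * (d:ℝ) ≤ (p:ℝ) - 1 := by
    have h := mul_le_mul_of_nonneg_left hdp (Real.exp_pos (3/2)).le
    rw [← mul_assoc, ← Real.exp_add] at h
    norm_num at h
    linarith
  have hd44 : 4.4 * (d:ℝ) ≤ Real.exp (3/2) * (d:ℝ) :=
    mul_le_mul_of_nonneg_right myexp_three_half (by linarith)
  have hdn : (d:ℝ) ≤ (p:ℝ) - 1 := by nlinarith
  have hdp_nat : d ≤ p - 1 := by
    have hcast : ((p - 1:ℕ):ℝ) = (p:ℝ) - 1 := by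
      rw [Nat.cast_sub (by omega)]; norm_num
    have h2 : (d:ℝ) ≤ ((p - 1:ℕ):ℝ) := by rw [hcast]; exact hdn
    exact_mod_cast h2
  have hdp' : d ≤ p := le_trans hdp_nat (by omega)
  have hcast2 : ((p - d:ℕ):ℝ) = (p:ℝ) - d := by rw [Nat.cast_sub hdp']
  have hpd : 3.4 * (d:ℝ) ≤ ((p - d:ℕ):ℝ) := by
    rw [hcast2]; nlinarith
  have hchoose := Nat.pow_le_choose (α := ℝ) d (p - 1)
  rw [show p - 1 + 1 - d = p - d from by omega] at hchoose
  have hfacpos : (0:ℝ) < (Nat.factorial d : ℝ) := by exact_mod_cast Nat.factorial_pos d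
  have hfac : (Nat.factorial d : ℝ) ≤ (d:ℝ) ^ d := by exact_mod_cast Nat.factorial_le_pow d
  have h1 : (3.4:ℝ) ^ d ≤ ((p - d:ℕ):ℝ) ^ d / (Nat.factorial d : ℝ) := by
    rw [le_div_iff₀ hfacpos]
    calc (3.4:ℝ)^d * (Nat.factorial d : ℝ) ≤ 3.4^d * (d:ℝ)^d := by
          apply mul_le_mul_of_nonneg_left hfac (by positivity)
      _ = (3.4 * (d:ℝ))^d := by rw [mul_pow]
      _ ≤ ((p - d:ℕ):ℝ)^d := pow_le_pow_left₀ (by positivity) hpd d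
  exact le_trans h1 hchoose
set_option maxHeartbeats 2000000 in
theorem EDKhi_geq (p d n : ℕ) (hp : 2 ≤ p) (hd : 0 < d)
    (hdp : (d : ℝ) ≤ Real.exp (-(3 / 2)) * ((p : ℝ) - 1)) (hn : d + 1 < n)
    (x : ℝ) (hx : 0 < x)
    (hinv : (1 / ((d : ℝ) + 1)) *
        (∫ q : ℝ × ℝ, max (q.1 - x * q.2 / ((n : ℝ) - (d : ℝ) - 1)) 0
          ∂((chiSqMeasure (d + 1)).prod (chiSqMeasure (n - d - 1)))) =
      ((Nat.choose (p - 1) d : ℝ) * ((d : ℝ) + 1) ^ 2)⁻¹) :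
    x ≥ (d : ℝ) + 1 := by
  by_contra hcon
  push_neg at hcon
  have hd1 : (1:ℝ) ≤ (d:ℝ) := by exact_mod_cast hd
  set A : ℝ := (d:ℝ) + 1 with hA
  have hA2 : 2 ≤ A := by rw [hA]; linarith
  have hApos : 0 < A := by linarith
  set B : ℝ := (n:ℝ) - (d:ℝ) - 1 with hB
  have hBcast : ((n - d - 1 : ℕ):ℝ) = B := by
    rw [hB, show n - d - 1 = n - (d+1) from by omega, Nat.cast_sub (by omega)]
    push_cast
    ring
  have hBpos : 0 < B := by
    rw [hB]
    have : ((d:ℝ) + 2) ≤ (n:ℝ) := by exact_mod_cast (show d + 2 ≤ n by omega)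
    linarith
  set μ := chiSqMeasure (d + 1) with hμdef
  set ν := chiSqMeasure (n - d - 1) with hνdef
  have hμeq : μ = gammaMeasure (A/2) (1/2) := by
    rw [hμdef, chiSqMeasure]
    congr 1
    push_cast
    ring
  have hνeq : ν = gammaMeasure (B/2) (1/2) := by
    rw [hνdef, chiSqMeasure, hBcast]
  haveI hμprob : IsProbabilityMeasure μ := by
    rw [hμeq]; exact isProbabilityMeasure_gammaMeasure (by linarith) (by norm_num)
  haveI hνprob : IsProbabilityMeasure ν := by
    rw [hνeq]; exact isProbabilityMeasure_gammaMeasure (by linarith) (by norm_num)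
  -- basic integrability facts
  have hintidμ : Integrable (fun t : ℝ => t) μ := by
    rw [hμeq]; exact integrable_id_gammaMeasure (by linarith) (by norm_num)
  have hintidν : Integrable (fun t : ℝ => t) ν := by
    rw [hνeq]; exact integrable_id_gammaMeasure (by linarith) (by norm_num)
  have hmeanν : ∫ s, s ∂ν = B := by
    rw [hνeq, integral_id_gammaMeasure (by linarith) (by norm_num)]
    ring
  have hq1 : Integrable (fun q : ℝ × ℝ => q.1) (μ.prod ν) := by
    have h := hintidμ.mul_prod (integrable_const (1:ℝ) (μ := ν))
    simpa using h
  have hq2 : Integrable (fun q : ℝ × ℝ => q.2) (μ.prod ν) := by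
    have h := (integrable_const (1:ℝ) (μ := μ)).mul_prod hintidν
    simpa using h
  -- the comparison functions
  set F : ℝ → ℝ := (Ici (2*A)).indicator 1 with hF
  set G : ℝ → ℝ := fun s => 2*A - x * s / B with hG
  set P : ℝ := (μ (Ici (2*A))).toReal with hP
  have hintf : Integrable (fun q : ℝ × ℝ => max (q.1 - x * q.2 / B) 0) (μ.prod ν) := by
    have hcontf : Continuous (fun q : ℝ × ℝ => max (q.1 - x * q.2 / B) 0) := by
      apply Continuous.max _ continuous_const
      exact continuous_fst.sub ((continuous_const.mul continuous_snd).div_const B)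
    apply Integrable.mono ((hq1.abs).add ((hq2.abs).const_mul (x / B)))
      hcontf.aestronglyMeasurable
    filter_upwards with q
    rw [Real.norm_eq_abs, Real.norm_eq_abs]
    have e2 : |max (q.1 - x * q.2 / B) 0| = max (q.1 - x * q.2 / B) 0 :=
      abs_of_nonneg (le_max_right _ _)
    have e1 : max (q.1 - x * q.2 / B) 0 ≤ |q.1 - x * q.2 / B| :=
      max_le (le_abs_self _) (abs_nonneg _)
    have e3 : |q.1 - x * q.2 / B| ≤ |q.1| + |x * q.2 / B| := by
      simpa [sub_eq_add_neg] using abs_add_le q.1 (-(x * q.2 / B))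
    have e4 : |x * q.2 / B| = x / B * |q.2| := by
      rw [abs_div, abs_mul, abs_of_nonneg hx.le, abs_of_nonneg hBpos.le]
      ring
    have e5 : |(|q.1| + x / B * |q.2|)| = |q.1| + x / B * |q.2| :=
      abs_of_nonneg (by positivity)
    simp only [Pi.add_apply]
    rw [e2, e5]
    linarith
  have hintG : Integrable G ν := by
    rw [hG]
    exact Integrable.sub (integrable_const (2*A)) ((hintidν.const_mul x).div_const B)
  have hintF : Integrable F μ := by
    rw [hF]
    exact (integrable_const (1:ℝ)).indicator measurableSet_Ici
  have hintg : Integrable (fun q : ℝ × ℝ => F q.1 * G q.2) (μ.prod ν) :=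
    hintF.mul_prod hintG
  have hfg : (fun q : ℝ × ℝ => F q.1 * G q.2)
      ≤ fun q : ℝ × ℝ => max (q.1 - x * q.2 / B) 0 := by
    intro q
    dsimp only
    by_cases hq : q.1 ∈ Ici (2*A)
    · have h1 : 2*A ≤ q.1 := hq
      have hFq : F q.1 = 1 := by rw [hF, indicator_of_mem hq]; rfl
      have hGq : G q.2 = 2*A - x * q.2 / B := by rw [hG]
      rw [hFq, one_mul, hGq]
      exact le_trans (by linarith : 2*A - x*q.2/B ≤ q.1 - x*q.2/B) (le_max_left _ _)
    · have hFq : F q.1 = 0 := by rw [hF, indicator_of_notMem hq]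
      rw [hFq, zero_mul]
      exact le_max_right _ _
  -- compute the lower-bound integral
  have hPval : ∫ t, F t ∂μ = P := by
    rw [hF, hP]
    exact integral_indicator_one measurableSet_Ici
  have hGval : ∫ s, G s ∂ν = 2*A - x := by
    have hconst : ∫ _ : ℝ, 2*A ∂ν = 2*A := by
      rw [integral_const]
      simp [measure_univ]
    have hlin : ∫ s : ℝ, x * s / B ∂ν = x := by
      rw [integral_div, integral_const_mul, hmeanν]
      field_simp
    rw [hG]
    rw [integral_sub (integrable_const (2*A)) ((hintidν.const_mul x).div_const B)]
    rw [hconst, hlin]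
  have hgval : ∫ q, F q.1 * G q.2 ∂(μ.prod ν) = P * (2*A - x) := by
    rw [integral_prod_mul, hPval, hGval]
  have h2 : ∫ q, F q.1 * G q.2 ∂(μ.prod ν)
      ≤ ∫ q : ℝ × ℝ, max (q.1 - x * q.2 / B) 0 ∂(μ.prod ν) :=
    integral_mono hintg hintf hfg
  -- identify the integral from hinv
  set C : ℝ := (Nat.choose (p - 1) d : ℝ) with hC
  set ε : ℝ := (C * A ^ 2)⁻¹ with hε
  have hIf : ∫ q : ℝ × ℝ, max (q.1 - x * q.2 / B) 0 ∂(μ.prod ν) = A * ε := by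
    rw [← hinv, ← mul_assoc, mul_one_div_cancel hApos.ne', one_mul]
  -- bounds
  have hC34 : (3.4:ℝ)^d ≤ C := choose_lb p d hp hd hdp
  have hCpos : (0:ℝ) < C := lt_of_lt_of_le (by positivity) hC34
  have hPlb : 2 ^ (A/2) * Real.exp (-A) / 2 ≤ P := by
    have h := gamma_tail_lb hA2
    rwa [← hμeq] at h
  have hεub : ε ≤ 2 ^ (A/2) * Real.exp (-A) / 2 := by
    have hkey : 2 * Real.exp A ≤ C * A^2 * 2 ^ (A/2) := by
      have h2A : (2:ℝ) ^ (A/2) = Real.sqrt 2 ^ (d+1) := by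
        rw [show A/2 = (1/2) * ((d+1:ℕ):ℝ) by push_cast; ring]
        rw [Real.rpow_mul (by norm_num : (0:ℝ) ≤ 2)]
        rw [Real.rpow_natCast, ← Real.sqrt_eq_rpow]
      have hexpA : Real.exp A = Real.exp 1 ^ (d+1) := by
        rw [← Real.exp_nat_mul]
        congr 1
        push_cast
        ring
      have hnk := numeric_key d hd
      have hA2' : (4:ℝ) ≤ A^2 := by nlinarith
      have hs2pos : (0:ℝ) ≤ Real.sqrt 2 ^ (d+1) := by positivity
      calc 2 * Real.exp A = 2 * Real.exp 1 ^ (d+1) := by rw [hexpA]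
        _ ≤ 2 * (2 * 3.4^d * Real.sqrt 2 ^ (d+1)) :=
            mul_le_mul_of_nonneg_left hnk (by norm_num)
        _ = (4 * 3.4^d) * Real.sqrt 2 ^ (d+1) := by ring
        _ ≤ (C * A^2) * Real.sqrt 2 ^ (d+1) := by
            apply mul_le_mul_of_nonneg_right _ hs2pos
            exact (mul_le_mul hA2' hC34 (by positivity) (by positivity)).trans_eq
              (mul_comm _ _)
        _ = C * A^2 * 2 ^ (A/2) := by rw [h2A]
    have hCA2 : (0:ℝ) < C * A^2 := mul_pos hCpos (by positivity)
    rw [hε, Real.exp_neg]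
    have hE : (Real.exp A)⁻¹ * Real.exp A = 1 := inv_mul_cancel₀ (Real.exp_pos A).ne'
    rw [show (2:ℝ) ^ (A/2) * (Real.exp A)⁻¹ / 2 = 2 ^ (A/2) / (2 * Real.exp A) by
      rw [eq_div_iff (by positivity : ((2:ℝ) * Real.exp A) ≠ 0)]
      linear_combination (2:ℝ) ^ (A/2) * hE]
    rw [inv_eq_one_div, div_le_div_iff₀ hCA2 (by positivity)]
    calc 1 * (2 * Real.exp A) = 2 * Real.exp A := one_mul _
      _ ≤ C * A^2 * 2 ^ (A/2) := hkey
      _ = 2 ^ (A/2) * (C * A^2) := by ring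
  -- final contradiction
  have hLpos : (0:ℝ) < 2 ^ (A/2) * Real.exp (-A) / 2 := by positivity
  have hPpos : 0 < P := lt_of_lt_of_le hLpos hPlb
  have hchain : P * (2*A - x) ≤ A * ε := by
    rw [← hIf, ← hgval]
    exact h2
  have hεP : ε ≤ P := le_trans hεub hPlb
  have k1 : A * ε ≤ A * P := mul_le_mul_of_nonneg_left hεP hApos.le
  have k2 : P * x < P * A := mul_lt_mul_of_pos_left hcon hPpos
  nlinarith [hchain, k1, k2]
end
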